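/- arXiv:2603.08042 — 9 statements merged into one kernel-verified Lean document; each statement's English description precedes it below -/
import Mathlib

section
/- For every n ≥ 1, the expectation of ξ_{n+1} satisfies 𝔼(ξ_{n+1}) = ℙ(ξ_{n+1} = 1) = a_0 · (1 + b_1 + b_2 + ⋯ + b_n), where the sequence (b_n) is defined recursively by b_1 = a_1 and b_n = a_n + Σ_{i=1}^{n−1} b_{n−i} a_i for n ≥ 2. -/
open MeasureTheory Filter Topology Set

private lemma dthp_reflect (f : ℕ → ℝ) (m : ℕ) :
    ∑ i ∈ Finset.Icc 1 m, f (m + 1 - i) = ∑ i ∈ Finset.Icc 1 m, f i := by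
  apply Finset.sum_nbij' (fun i => m + 1 - i) (fun i => m + 1 - i) <;>
    intro i hi <;> simp only [Finset.mem_Icc] at * <;> first | omega | (congr 1; omega)

private lemma dthp_key (a b : ℕ → ℝ) (hb1 : b 1 = a 1)
    (hbrec : ∀ n, 2 ≤ n → b n = a n + ∑ i ∈ Finset.Icc 1 (n - 1), b (n - i) * a i) :
    ∀ m, ∑ k ∈ Finset.Icc 1 m, b k
      = ∑ i ∈ Finset.Icc 1 m, a i * (1 + ∑ k ∈ Finset.Icc 1 (m - i), b k) := by
  intro m
  induction m with
  | zero => simp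
  | succ m ih =>
    rw [Finset.sum_Icc_succ_top (by omega : 1 ≤ m + 1),
        Finset.sum_Icc_succ_top (by omega : 1 ≤ m + 1), ih]
    have hb : b (m + 1) = a (m + 1) + ∑ i ∈ Finset.Icc 1 m, b (m + 1 - i) * a i := by
      rcases Nat.eq_zero_or_pos m with hm | hm
      · subst hm; simpa using hb1
      · simpa using hbrec (m + 1) (by omega)
    have hS : ∀ i ∈ Finset.Icc 1 m,
        a i * (1 + ∑ k ∈ Finset.Icc 1 (m + 1 - i), b k)
        = a i * (1 + ∑ k ∈ Finset.Icc 1 (m - i), b k) + b (m + 1 - i) * a i := by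
      intro i hi
      simp only [Finset.mem_Icc] at hi
      have h4 : ∑ k ∈ Finset.Icc 1 (m + 1 - i), b k
          = ∑ k ∈ Finset.Icc 1 (m - i), b k + b (m + 1 - i) := by
        have h5 : m + 1 - i = (m - i) + 1 := by omega
        rw [h5, Finset.sum_Icc_succ_top (by omega : 1 ≤ m - i + 1)]
      rw [h4]; ring
    rw [Finset.sum_congr rfl hS, Finset.sum_add_distrib, hb]
    simp
    ring

theorem dthp_expectation_formula
    {Ω : Type*} [MeasurableSpace Ω] (μ : Measure Ω) [IsProbabilityMeasure μ]
    (a : ℕ → ℝ) (ξ : ℕ → Ω → ℝ)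
    (ha_pos : ∀ i, 0 < a i)
    (ha_sum : Summable a)
    (ha_lt_one : ∑' i, a i < 1)
    (ha_moment : Summable (fun i : ℕ => (i : ℝ) * a i))
    (hmeas : ∀ n, Measurable (ξ n))
    (hval : ∀ n, 1 ≤ n → ∀ ω, ξ n ω = 0 ∨ ξ n ω = 1)
    (hinit : μ {ω | ξ 1 ω = 1} = ENNReal.ofReal (a 0))
    (hcond : ∀ n, 2 ≤ n →
      μ[ξ n | ⨆ i ∈ Finset.Icc 1 (n - 1), MeasurableSpace.comap (ξ i) Real.measurableSpace]
        =ᵐ[μ] fun ω => a 0 + ∑ i ∈ Finset.Icc 1 (n - 1), a (n - i) * ξ i ω)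
    (b : ℕ → ℝ)
    (hb1 : b 1 = a 1)
    (hbrec : ∀ n, 2 ≤ n → b n = a n + ∑ i ∈ Finset.Icc 1 (n - 1), b (n - i) * a i)
    :
    ∀ n, 1 ≤ n →
      (∫ ω, ξ (n + 1) ω ∂μ) = a 0 * (1 + ∑ i ∈ Finset.Icc 1 n, b i) ∧
      μ {ω | ξ (n + 1) ω = 1} = ENNReal.ofReal (a 0 * (1 + ∑ i ∈ Finset.Icc 1 n, b i)) := by
  have hmeasset : ∀ n, MeasurableSet {ω | ξ n ω = 1} :=
    fun n => (hmeas n) (measurableSet_singleton 1)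
  have hind : ∀ n, 1 ≤ n → ξ n = ({ω | ξ n ω = 1}).indicator (fun _ => (1 : ℝ)) := by
    intro n hn; funext ω
    rcases hval n hn ω with h | h
    · rw [h, Set.indicator_of_notMem]
      simp only [Set.mem_setOf_eq, h]
      norm_num
    · rw [h, Set.indicator_of_mem]
      exact h
  have hint : ∀ n, 1 ≤ n → Integrable (ξ n) μ := by
    intro n hn
    rw [hind n hn]
    exact (integrable_const (1 : ℝ)).indicator (hmeasset n)
  have hIeq : ∀ n, 1 ≤ n → ∫ ω, ξ n ω ∂μ = (μ {ω | ξ n ω = 1}).toReal := by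
    intro n hn
    calc ∫ ω, ξ n ω ∂μ = ∫ ω, ({ω | ξ n ω = 1}).indicator (fun _ => (1:ℝ)) ω ∂μ := by
          rw [← hind n hn]
      _ = (μ {ω | ξ n ω = 1}).toReal := by
          rw [integral_indicator_const (1:ℝ) (hmeasset n), smul_eq_mul, mul_one]; rfl
  -- main expectation claim, by strong induction
  have key : ∀ n, 1 ≤ n →
      ∫ ω, ξ n ω ∂μ = a 0 * (1 + ∑ i ∈ Finset.Icc 1 (n - 1), b i) := by
    intro n
    induction n using Nat.strong_induction_on with
    | _ n ih =>
      intro hn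
      rcases eq_or_lt_of_le hn with h1 | h2
      · -- n = 1
        subst h1
        rw [hIeq 1 le_rfl, hinit, ENNReal.toReal_ofReal (ha_pos 0).le]
        simp
      · -- n ≥ 2
        have hn2 : 2 ≤ n := h2
        set m := n - 1 with hm
        have hmn : m + 1 = n := by omega
        have hle : (⨆ i ∈ Finset.Icc 1 (n - 1), MeasurableSpace.comap (ξ i)
            Real.measurableSpace) ≤ ‹MeasurableSpace Ω› := by
          apply iSup₂_le
          intro i _
          exact (hmeas i).comap_le
        haveI : SigmaFinite (μ.trim hle) := by
          have := isFiniteMeasure_trim hle (μ := μ)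
          infer_instance
        have h3 : ∫ ω, ξ n ω ∂μ
            = ∫ ω, (a 0 + ∑ i ∈ Finset.Icc 1 (n - 1), a (n - i) * ξ i ω) ∂μ := by
          rw [← integral_condExp hle (μ := μ) (f := ξ n)]
          exact integral_congr_ae (hcond n hn2)
        have h4 : ∫ ω, (a 0 + ∑ i ∈ Finset.Icc 1 (n - 1), a (n - i) * ξ i ω) ∂μ
            = a 0 + ∑ i ∈ Finset.Icc 1 (n - 1), a (n - i) * ∫ ω, ξ i ω ∂μ := by
          have hint' : ∀ i ∈ Finset.Icc 1 (n - 1), Integrable (fun ω => a (n - i) * ξ i ω) μ := by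
            intro i hi
            simp only [Finset.mem_Icc] at hi
            exact (hint i hi.1).const_mul _
          rw [integral_add (integrable_const _) (integrable_finset_sum _ hint'),
            integral_const, integral_finset_sum _ hint']
          simp only [probReal_univ, measure_univ, ENNReal.toReal_one, smul_eq_mul, one_mul]
          congr 1
          refine Finset.sum_congr rfl fun i hi => ?_
          exact integral_const_mul _ _
        rw [h3, h4]
        have h5 : ∀ i ∈ Finset.Icc 1 (n - 1),
            a (n - i) * ∫ ω, ξ i ω ∂μ
            = a (n - i) * (a 0 * (1 + ∑ k ∈ Finset.Icc 1 (i - 1), b k)) := by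
          intro i hi
          simp only [Finset.mem_Icc] at hi
          rw [ih i (by omega) hi.1]
        rw [Finset.sum_congr rfl h5]
        have h6 : ∑ i ∈ Finset.Icc 1 m, a (n - i) * (a 0 * (1 + ∑ k ∈ Finset.Icc 1 (i - 1), b k))
            = a 0 * ∑ i ∈ Finset.Icc 1 m, a (m + 1 - i) * (1 + ∑ k ∈ Finset.Icc 1 (i - 1), b k) := by
          rw [Finset.mul_sum]
          refine Finset.sum_congr rfl fun i hi => ?_
          simp only [Finset.mem_Icc] at hi
          have : n - i = m + 1 - i := by omega
          rw [this]; ring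
        have h7 : ∑ i ∈ Finset.Icc 1 m, a (m + 1 - i) * (1 + ∑ k ∈ Finset.Icc 1 (i - 1), b k)
            = ∑ i ∈ Finset.Icc 1 m, a i * (1 + ∑ k ∈ Finset.Icc 1 (m - i), b k) := by
          have := dthp_reflect (fun i => a i * (1 + ∑ k ∈ Finset.Icc 1 (m - (m + 1 - i)), b k)) m
          calc ∑ i ∈ Finset.Icc 1 m, a (m + 1 - i) * (1 + ∑ k ∈ Finset.Icc 1 (i - 1), b k)
              = ∑ i ∈ Finset.Icc 1 m, a (m + 1 - i) * (1 + ∑ k ∈ Finset.Icc 1 (m - (m + 1 - i)), b k) := by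
                refine Finset.sum_congr rfl fun i hi => ?_
                simp only [Finset.mem_Icc] at hi
                have : m - (m + 1 - i) = i - 1 := by omega
                rw [this]
            _ = ∑ i ∈ Finset.Icc 1 m, a i * (1 + ∑ k ∈ Finset.Icc 1 (m - i), b k) := by
                exact dthp_reflect (fun i => a i * (1 + ∑ k ∈ Finset.Icc 1 (m - i), b k)) m
        rw [h6, h7, ← dthp_key a b hb1 hbrec m]
        ring
  intro n hn
  have hE := key (n + 1) (by omega)
  simp only [Nat.add_sub_cancel] at hE
  refine ⟨hE, ?_⟩
  have := hIeq (n + 1) (by omega)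
  rw [hE] at this
  rw [← ENNReal.ofReal_toReal (measure_ne_top μ _), ← this]
end

section
/- The sequence of expectations of the arrival process is strictly increasing: for every n ≥ 1, 𝔼(ξ_{n+1}) > 𝔼(ξ_n). -/
open MeasureTheory Filter Topology Set

theorem dthp_expectation_strict_mono
    {Ω : Type*} [MeasurableSpace Ω] (μ : Measure Ω) [IsProbabilityMeasure μ]
    (a : ℕ → ℝ) (ξ : ℕ → Ω → ℝ)
    (ha_pos : ∀ i, 0 < a i)
    (ha_sum : Summable a)
    (ha_lt_one : ∑' i, a i < 1)
    (ha_moment : Summable (fun i : ℕ => (i : ℝ) * a i))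
    (hmeas : ∀ n, Measurable (ξ n))
    (hval : ∀ n, 1 ≤ n → ∀ ω, ξ n ω = 0 ∨ ξ n ω = 1)
    (hinit : μ {ω | ξ 1 ω = 1} = ENNReal.ofReal (a 0))
    (hcond : ∀ n, 2 ≤ n →
      μ[ξ n | ⨆ i ∈ Finset.Icc 1 (n - 1), MeasurableSpace.comap (ξ i) Real.measurableSpace]
        =ᵐ[μ] fun ω => a 0 + ∑ i ∈ Finset.Icc 1 (n - 1), a (n - i) * ξ i ω)
    :
    ∀ n, 1 ≤ n → (∫ ω, ξ n ω ∂μ) < ∫ ω, ξ (n + 1) ω ∂μ := by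
  set m : ℕ → ℝ := fun n => ∫ ω, ξ n ω ∂μ with hm_def
  -- integrability
  have hInt : ∀ i, 1 ≤ i → Integrable (ξ i) μ := by
    intro i hi
    refine Integrable.mono' (integrable_const (1 : ℝ)) ((hmeas i).aestronglyMeasurable) ?_
    filter_upwards with ω
    rcases hval i hi ω with h | h <;> simp [h]
  -- m 1 = a 0
  have hm1 : m 1 = a 0 := by
    have hs : MeasurableSet {ω | ξ 1 ω = 1} := (hmeas 1) (measurableSet_singleton 1)
    have hfun : ξ 1 = Set.indicator {ω | ξ 1 ω = 1} (fun _ => (1 : ℝ)) := by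
      funext ω
      rcases hval 1 le_rfl ω with h | h
      · rw [h, Set.indicator_of_notMem]; simp [h]
      · rw [h, Set.indicator_of_mem]; exact h
    show (∫ ω, ξ 1 ω ∂μ) = a 0
    rw [hfun, integral_indicator_const _ hs, measureReal_def, hinit, smul_eq_mul, mul_one,
      ENNReal.toReal_ofReal (ha_pos 0).le]
  -- nonnegativity
  have hnonneg : ∀ i, 1 ≤ i → 0 ≤ m i := by
    intro i hi
    refine integral_nonneg fun ω => ?_
    rcases hval i hi ω with h | h <;> simp [h]
  -- recursion
  have hrec : ∀ n, 1 ≤ n → m n = a 0 + ∑ i ∈ Finset.Icc 1 (n - 1), a (n - i) * m i := by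
    intro n hn
    rcases eq_or_lt_of_le hn with h1 | h2
    · simp [← h1, hm1]
    · have hn2 : 2 ≤ n := h2
      have hle : (⨆ i ∈ Finset.Icc 1 (n - 1), MeasurableSpace.comap (ξ i)
          Real.measurableSpace) ≤ (by infer_instance : MeasurableSpace Ω) := by
        refine iSup₂_le fun i _ => ?_
        exact (hmeas i).comap_le
      have h1 : ∫ ω, (μ[ξ n | ⨆ i ∈ Finset.Icc 1 (n - 1),
          MeasurableSpace.comap (ξ i) Real.measurableSpace]) ω ∂μ = m n :=
        integral_condExp hle
      have h2' : ∫ ω, (μ[ξ n | ⨆ i ∈ Finset.Icc 1 (n - 1),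
          MeasurableSpace.comap (ξ i) Real.measurableSpace]) ω ∂μ
          = ∫ ω, (a 0 + ∑ i ∈ Finset.Icc 1 (n - 1), a (n - i) * ξ i ω) ∂μ :=
        integral_congr_ae (hcond n hn2)
      rw [h1] at h2'
      rw [h2']
      have hIntSum : Integrable (fun ω => ∑ i ∈ Finset.Icc 1 (n - 1), a (n - i) * ξ i ω) μ := by
        apply integrable_finset_sum
        intro i hi
        exact (hInt i (Finset.mem_Icc.mp hi).1).const_mul _
      rw [integral_add (integrable_const _) hIntSum, integral_const]
      simp only [measureReal_def, measure_univ, ENNReal.toReal_one, smul_eq_mul, one_mul]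
      congr 1
      rw [integral_finset_sum]
      · exact Finset.sum_congr rfl fun i _ => integral_const_mul _ _
      · intro i hi
        exact (hInt i (Finset.mem_Icc.mp hi).1).const_mul _
  -- key step: reindexed recursion for m (n+2)
  have hsplit : ∀ n : ℕ, m (n + 2) =
      a 0 + a (n + 1) * m 1 + ∑ j ∈ Finset.Icc 1 n, a (n + 1 - j) * m (j + 1) := by
    intro n
    rw [hrec (n + 2) (by omega), show n + 2 - 1 = n + 1 from by omega]
    have h2 : Finset.Icc 1 (n + 1) = insert 1 (Finset.Icc 2 (n + 1)) := by
      ext x; simp only [Finset.mem_Icc, Finset.mem_insert]; omega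
    rw [h2, Finset.sum_insert (by simp)]
    have h3 : ∑ i ∈ Finset.Icc 2 (n + 1), a (n + 2 - i) * m i
        = ∑ j ∈ Finset.Icc 1 n, a (n + 1 - j) * m (j + 1) := by
      have hmap : Finset.Icc 2 (n + 1) = (Finset.Icc 1 n).map (addRightEmbedding 1) := by
        rw [Finset.map_add_right_Icc]
      rw [hmap, Finset.sum_map]
      refine Finset.sum_congr rfl fun j hj => ?_
      simp only [addRightEmbedding_apply]
      congr 2
      simp only [Finset.mem_Icc] at hj
      omega
    rw [h3, show n + 2 - 1 = n + 1 from by omega]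
    ring
  -- strict monotonicity by strong induction
  have key : ∀ N, ∀ k, 1 ≤ k → k ≤ N → m k < m (k + 1) := by
    intro N
    induction N with
    | zero => intro k hk hk'; omega
    | succ n ih =>
      intro k hk hk'
      rcases Nat.lt_or_ge k (n + 1) with h | h
      · exact ih k hk (by omega)
      · have hkn : k = n + 1 := by omega
        subst hkn
        rw [show n + 1 + 1 = n + 2 from by omega, hsplit n]
        have hmn : m (n + 1) = a 0 + ∑ i ∈ Finset.Icc 1 n, a (n + 1 - i) * m i := by
          have := hrec (n + 1) (by omega)
          simpa using this
        rw [hmn]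
        have hsum_le : ∑ i ∈ Finset.Icc 1 n, a (n + 1 - i) * m i
            ≤ ∑ j ∈ Finset.Icc 1 n, a (n + 1 - j) * m (j + 1) := by
          refine Finset.sum_le_sum fun j hj => ?_
          simp only [Finset.mem_Icc] at hj
          have := ih j hj.1 (by omega)
          exact mul_le_mul_of_nonneg_left this.le (ha_pos _).le
        have hpos : 0 < a (n + 1) * m 1 := by
          rw [hm1]; exact mul_pos (ha_pos _) (ha_pos 0)
        linarith
  exact fun n hn => key n n hn le_rfl
end

section
/- As n → ∞, ℙ(ξ_n = 1) converges to a_0 / (1 − Σ_{i=1}^∞ a_i), and consequently ℙ(ξ_n = 0) converges to 1 − a_0 / (1 − Σ_{i=1}^∞ a_i). -/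
open MeasureTheory Filter Topology Set

private lemma dthp_sum_Icc_reflect (g : ℕ → ℝ) (n : ℕ) :
    ∑ i ∈ Finset.Icc 1 (n-1), g (n - i) = ∑ j ∈ Finset.Icc 1 (n-1), g j := by
  refine Finset.sum_nbij' (fun i => n - i) (fun j => n - j) ?_ ?_ ?_ ?_ (fun x hx => rfl) <;>
    (intro x hx; simp only [Finset.mem_Icc] at *; omega)

private lemma dthp_analysis (a : ℕ → ℝ) (p : ℕ → ℝ)
    (ha0 : ∀ i, 0 ≤ a i) (ha_sum : Summable a) (hS1 : ∑' i, a i < 1)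
    (hbdd : ∀ n, 1 ≤ n → |p n| ≤ 1)
    (hrec : ∀ n, 2 ≤ n → p n = a 0 + ∑ i ∈ Finset.Icc 1 (n-1), a (n-i) * p i) :
    Tendsto p atTop (𝓝 (a 0 / (1 - ∑' i, a (i+1)))) := by
  set S := ∑' i, a (i+1) with hSdef
  have hshift : Summable fun i => a (i+1) := (summable_nat_add_iff 1).mpr ha_sum
  have hS0 : 0 ≤ S := tsum_nonneg fun i => ha0 _
  have hSlt : S < 1 := by
    have h := Summable.sum_add_tsum_nat_add (f := a) 1 ha_sum
    simp only [Finset.sum_range_one] at h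
    have := ha0 0
    linarith
  have h1S : 0 < 1 - S := by linarith
  set c := a 0 / (1 - S) with hcdef
  have hc0 : 0 ≤ c := div_nonneg (ha0 0) h1S.le
  have hcS : c * (1 - S) = a 0 := div_mul_cancel₀ _ h1S.ne'
  set t : ℕ → ℝ := fun n => ∑' i, a (i + n) with htdef
  have ht0 : ∀ n, 0 ≤ t n := fun n => tsum_nonneg fun i => ha0 _
  have htS : ∀ n, 1 ≤ n → (∑ j ∈ Finset.Icc 1 (n-1), a j) + t n = S := by
    intro n hn
    have h := Summable.sum_add_tsum_nat_add (f := fun i => a (i+1)) (n-1) hshift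
    have e1 : ∑' (i : ℕ), a (i + (n-1) + 1) = t n := by
      refine tsum_congr fun i => ?_
      congr 1; omega
    have e2 : ∑ i ∈ Finset.range (n-1), a (i+1) = ∑ j ∈ Finset.Icc 1 (n-1), a j := by
      refine Finset.sum_nbij' (fun i => i + 1) (fun j => j - 1) ?_ ?_ ?_ ?_ (fun x hx => rfl) <;>
        (intro x hx; simp only [Finset.mem_Icc, Finset.mem_range] at *; omega)
    rw [e1, e2] at h
    exact h
  have htail : Tendsto t atTop (𝓝 0) := tendsto_sum_nat_add a
  have ha_to0 : Tendsto a atTop (𝓝 0) := ha_sum.tendsto_atTop_zero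
  set q : ℕ → ℝ := fun n => |p n - c| with hqdef
  set M : ℝ := 1 + c with hMdef
  have hM0 : 0 < M := by positivity
  have hqM : ∀ n, 1 ≤ n → q n ≤ M := by
    intro n hn
    calc |p n - c| ≤ |p n| + |c| := abs_sub _ _
      _ ≤ 1 + c := by rw [abs_of_nonneg hc0]; linarith [hbdd n hn]
  have hpartial_le : ∀ n, 1 ≤ n → ∑ j ∈ Finset.Icc 1 (n-1), a j ≤ S := by
    intro n hn; have := htS n hn; have := ht0 n; linarith
  have hkey : ∀ n, 2 ≤ n →
      q n ≤ (∑ i ∈ Finset.Icc 1 (n-1), a (n-i) * q i) + c * t n := by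
    intro n hn
    have e2 : ∑ i ∈ Finset.Icc 1 (n-1), a (n-i) * (p i - c)
        = (∑ i ∈ Finset.Icc 1 (n-1), a (n-i) * p i)
          - c * ∑ i ∈ Finset.Icc 1 (n-1), a (n-i) := by
      rw [Finset.mul_sum, ← Finset.sum_sub_distrib]
      exact Finset.sum_congr rfl fun i _ => by ring
    have e3 : ∑ i ∈ Finset.Icc 1 (n-1), a (n-i) = ∑ j ∈ Finset.Icc 1 (n-1), a j :=
      dthp_sum_Icc_reflect a n
    have e4 := htS n (by omega)
    have e1 : p n - c = (∑ i ∈ Finset.Icc 1 (n-1), a (n-i) * (p i - c)) - c * t n := by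
      rw [hrec n hn, e2, e3]
      linear_combination c * e4 - hcS
    calc q n = |p n - c| := rfl
      _ = |(∑ i ∈ Finset.Icc 1 (n-1), a (n-i) * (p i - c)) - c * t n| := by rw [e1]
      _ ≤ |∑ i ∈ Finset.Icc 1 (n-1), a (n-i) * (p i - c)| + |c * t n| := abs_sub _ _
      _ ≤ (∑ i ∈ Finset.Icc 1 (n-1), a (n-i) * q i) + c * t n := by
          gcongr
          · calc |∑ i ∈ Finset.Icc 1 (n-1), a (n-i) * (p i - c)|
                ≤ ∑ i ∈ Finset.Icc 1 (n-1), |a (n-i) * (p i - c)| :=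
                  Finset.abs_sum_le_sum_abs _ _
              _ = ∑ i ∈ Finset.Icc 1 (n-1), a (n-i) * q i := by
                  refine Finset.sum_congr rfl fun i _ => ?_
                  rw [abs_mul, abs_of_nonneg (ha0 _)]
          · rw [abs_mul, abs_of_nonneg hc0, abs_of_nonneg (ht0 n)]
  have step : ∀ B : ℝ, 0 ≤ B → ∀ ε : ℝ, 0 < ε → (∃ N, ∀ n ≥ N, q n ≤ B) →
      ∃ N, ∀ n ≥ N, q n ≤ S * B + ε := by
    rintro B hB ε hε ⟨N₀, hN₀⟩
    set N₁ := max N₀ 1 with hN₁def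
    have hN₁ : ∀ n ≥ N₁, q n ≤ B := fun n hn => hN₀ n (le_trans (le_max_left _ _) hn)
    have hN₁1 : 1 ≤ N₁ := le_max_right _ _
    set ε' : ℝ := ε/(3*((N₁:ℝ)*M+1)) with hε'def
    have hNM1 : (0:ℝ) < (N₁:ℝ)*M + 1 := by positivity
    have hε' : 0 < ε' := by positivity
    obtain ⟨K₁, hK₁⟩ : ∃ K, ∀ k ≥ K, a k < ε' :=
      eventually_atTop.mp (ha_to0.eventually_lt_const hε')
    obtain ⟨K₂, hK₂⟩ : ∃ K, ∀ n ≥ K, c * t n < ε/3 := by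
      have h : Tendsto (fun n => c * t n) atTop (𝓝 (c * 0)) := htail.const_mul c
      rw [mul_zero] at h
      exact eventually_atTop.mp (h.eventually_lt_const (by positivity))
    refine ⟨max (max (N₁ + K₁) K₂) (N₁ + 2), fun n hn => ?_⟩
    have hn1 : N₁ + K₁ ≤ n := le_trans (le_trans (le_max_left _ _) (le_max_left _ _)) hn
    have hn2 : K₂ ≤ n := le_trans (le_trans (le_max_right _ _) (le_max_left _ _)) hn
    have hn3 : N₁ + 2 ≤ n := le_trans (le_max_right _ _) hn
    have hsum_bound : ∑ i ∈ Finset.Icc 1 (n-1), a (n-i) * q i ≤ S * B + ε/3 := by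
      have h1 : ∀ i ∈ Finset.Icc 1 (n-1),
          a (n-i) * q i ≤ a (n-i) * B + (if i ≤ N₁ then a (n-i) * M else 0) := by
        intro i hi
        simp only [Finset.mem_Icc] at hi
        by_cases h : i ≤ N₁
        · simp only [h, if_true]
          have hq1 : q i ≤ M := hqM i hi.1
          have hq2 : 0 ≤ q i := abs_nonneg _
          nlinarith [ha0 (n-i)]
        · simp only [h, if_false]
          have hq1 : q i ≤ B := hN₁ i (by omega)
          nlinarith [ha0 (n-i)]
      have h2 : ∑ i ∈ Finset.Icc 1 (n-1), (if i ≤ N₁ then a (n-i) * M else 0) ≤ ε/3 := by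
        have hfil : Finset.filter (fun i => i ≤ N₁) (Finset.Icc 1 (n-1)) = Finset.Icc 1 N₁ := by
          ext x
          simp only [Finset.mem_filter, Finset.mem_Icc]
          omega
        rw [← Finset.sum_filter, hfil]
        have h3 : ∑ i ∈ Finset.Icc 1 N₁, a (n-i) * M ≤ ∑ _i ∈ Finset.Icc 1 N₁, ε' * M := by
          refine Finset.sum_le_sum fun i hi => ?_
          simp only [Finset.mem_Icc] at hi
          have : a (n-i) < ε' := hK₁ (n-i) (by omega)
          nlinarith
        rw [Finset.sum_const, Nat.card_Icc, nsmul_eq_mul] at h3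
        have h4 : ((N₁ + 1 - 1 : ℕ) : ℝ) = (N₁ : ℝ) := by norm_num
        rw [h4] at h3
        have h5 : (N₁:ℝ) * (ε' * M) ≤ ε/3 := by
          have hne : (3 * ((N₁:ℝ) * M + 1)) ≠ 0 := by positivity
          rw [hε'def, div_mul_eq_mul_div, mul_div_assoc', div_le_div_iff₀ (by positivity) (by norm_num : (0:ℝ) < 3)]
          nlinarith [hε.le, hM0.le, Nat.cast_nonneg (α := ℝ) N₁]
        exact h3.trans h5
      calc ∑ i ∈ Finset.Icc 1 (n-1), a (n-i) * q i
          ≤ ∑ i ∈ Finset.Icc 1 (n-1), (a (n-i) * B + (if i ≤ N₁ then a (n-i) * M else 0)) :=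
            Finset.sum_le_sum h1
        _ = (∑ i ∈ Finset.Icc 1 (n-1), a (n-i)) * B
            + ∑ i ∈ Finset.Icc 1 (n-1), (if i ≤ N₁ then a (n-i) * M else 0) := by
            rw [Finset.sum_add_distrib, Finset.sum_mul]
        _ ≤ S * B + ε/3 := by
            have := hpartial_le n (by omega)
            rw [dthp_sum_Icc_reflect a n]
            nlinarith
    have := hkey n (by omega)
    have := hK₂ n hn2
    linarith
  have ind : ∀ ε : ℝ, 0 < ε → ∀ k : ℕ, ∃ N, ∀ n ≥ N, q n ≤ S^k * M + ε/(1-S) := by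
    intro ε hε k
    induction k with
    | zero =>
        refine ⟨1, fun n hn => ?_⟩
        have h1 := hqM n hn
        have h2 : 0 < ε/(1-S) := div_pos hε h1S
        simp only [pow_zero, one_mul]
        linarith
    | succ k ih =>
        obtain ⟨N, hN⟩ := ih
        have hB0 : 0 ≤ S^k * M + ε/(1-S) :=
          add_nonneg (mul_nonneg (pow_nonneg hS0 _) hM0.le) (div_pos hε h1S).le
        obtain ⟨N', hN'⟩ := step _ hB0 ε hε ⟨N, hN⟩
        refine ⟨N', fun n hn => ?_⟩
        have h1 := hN' n hn
        have h2 : S * (S^k*M + ε/(1-S)) + ε = S^(k+1)*M + ε/(1-S) := by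
          field_simp
          ring
        linarith
  rw [Metric.tendsto_atTop]
  intro δ hδ
  have hε : 0 < δ*(1-S)/4 := by positivity
  obtain ⟨k, hk⟩ : ∃ k, S^k * M < δ/2 := by
    have h1 : Tendsto (fun k => S^k * M) atTop (𝓝 0) := by
      simpa using (tendsto_pow_atTop_nhds_zero_of_lt_one hS0 hSlt).mul_const M
    exact (h1.eventually_lt_const (by positivity)).exists
  obtain ⟨N, hN⟩ := ind (δ*(1-S)/4) hε k
  refine ⟨N, fun n hn => ?_⟩
  have h1 := hN n hn
  have h2 : δ*(1-S)/4/(1-S) = δ/4 := by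
    field_simp
  rw [Real.dist_eq]
  rw [h2] at h1
  calc |p n - c| ≤ S^k * M + δ/4 := h1
    _ < δ := by linarith

theorem dthp_arrival_prob_tendsto
    {Ω : Type*} [MeasurableSpace Ω] (μ : Measure Ω) [IsProbabilityMeasure μ]
    (a : ℕ → ℝ) (ξ : ℕ → Ω → ℝ)
    (ha_pos : ∀ i, 0 < a i)
    (ha_sum : Summable a)
    (ha_lt_one : ∑' i, a i < 1)
    (ha_moment : Summable (fun i : ℕ => (i : ℝ) * a i))
    (hmeas : ∀ n, Measurable (ξ n))
    (hval : ∀ n, 1 ≤ n → ∀ ω, ξ n ω = 0 ∨ ξ n ω = 1)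
    (hinit : μ {ω | ξ 1 ω = 1} = ENNReal.ofReal (a 0))
    (hcond : ∀ n, 2 ≤ n →
      μ[ξ n | ⨆ i ∈ Finset.Icc 1 (n - 1), MeasurableSpace.comap (ξ i) Real.measurableSpace]
        =ᵐ[μ] fun ω => a 0 + ∑ i ∈ Finset.Icc 1 (n - 1), a (n - i) * ξ i ω)
    :
    Tendsto (fun n => (μ {ω | ξ n ω = 1}).toReal) atTop
      (𝓝 (a 0 / (1 - ∑' i, a (i + 1)))) ∧
    Tendsto (fun n => (μ {ω | ξ n ω = 0}).toReal) atTop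
      (𝓝 (1 - a 0 / (1 - ∑' i, a (i + 1)))) := by
  set p : ℕ → ℝ := fun n => (μ {ω | ξ n ω = 1}).toReal with hpdef
  have hA : ∀ n, MeasurableSet {ω | ξ n ω = 1} := fun n =>
    (hmeas n) (measurableSet_singleton (1:ℝ))
  have hind : ∀ n, 1 ≤ n → ξ n = ({ω | ξ n ω = 1}).indicator (fun _ => (1:ℝ)) := by
    intro n hn
    funext ω
    rcases hval n hn ω with h | h
    · rw [h, Set.indicator_of_notMem]
      simp only [mem_setOf_eq, h]
      norm_num
    · rw [h, Set.indicator_of_mem]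
      exact h
  have hint : ∀ n, 1 ≤ n → Integrable (ξ n) μ := by
    intro n hn
    rw [hind n hn]
    exact (integrable_const (1:ℝ)).indicator (hA n)
  have hEp : ∀ n, 1 ≤ n → ∫ ω, ξ n ω ∂μ = p n := by
    intro n hn
    conv_lhs => rw [hind n hn]
    rw [integral_indicator_const (1:ℝ) (hA n)]
    simp [hpdef]
    rfl
  have hp_nonneg : ∀ n, 0 ≤ p n := fun n => ENNReal.toReal_nonneg
  have hp_le_one : ∀ n, p n ≤ 1 := by
    intro n
    have h1 : μ {ω | ξ n ω = 1} ≤ 1 := prob_le_one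
    calc p n ≤ (1 : ENNReal).toReal := ENNReal.toReal_mono ENNReal.one_ne_top h1
      _ = 1 := ENNReal.toReal_one
  have hbdd : ∀ n, 1 ≤ n → |p n| ≤ 1 := fun n _ => by
    rw [abs_of_nonneg (hp_nonneg n)]; exact hp_le_one n
  have hp1 : p 1 = a 0 := by
    rw [hpdef]
    simp only [hinit]
    exact ENNReal.toReal_ofReal (ha_pos 0).le
  have hrec : ∀ n, 2 ≤ n → p n = a 0 + ∑ i ∈ Finset.Icc 1 (n-1), a (n-i) * p i := by
    intro n hn
    have hm : (⨆ i ∈ Finset.Icc 1 (n - 1), MeasurableSpace.comap (ξ i) Real.measurableSpace)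
        ≤ (by infer_instance : MeasurableSpace Ω) := by
      refine iSup_le fun i => iSup_le fun _ => ?_
      exact (hmeas i).comap_le
    have h1 : ∫ ω, ξ n ω ∂μ
        = ∫ ω, (a 0 + ∑ i ∈ Finset.Icc 1 (n - 1), a (n - i) * ξ i ω) ∂μ := by
      rw [← integral_condExp (μ := μ) (f := ξ n) hm]
      exact integral_congr_ae (hcond n hn)
    have hint2 : Integrable (fun ω => ∑ i ∈ Finset.Icc 1 (n-1), a (n-i) * ξ i ω) μ := by
      refine integrable_finset_sum _ fun i hi => ?_
      simp only [Finset.mem_Icc] at hi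
      exact (hint i hi.1).const_mul _
    rw [← hEp n (by omega), h1, integral_add (integrable_const _) hint2,
      integral_const, integral_finset_sum]
    · simp only [measure_univ, ENNReal.toReal_one, probReal_univ, smul_eq_mul, one_mul]
      congr 1
      refine Finset.sum_congr rfl fun i hi => ?_
      simp only [Finset.mem_Icc] at hi
      rw [integral_const_mul, hEp i hi.1]
    · intro i hi
      simp only [Finset.mem_Icc] at hi
      exact (hint i hi.1).const_mul _
  have hten1 : Tendsto p atTop (𝓝 (a 0 / (1 - ∑' i, a (i+1)))) :=
    dthp_analysis a p (fun i => (ha_pos i).le) ha_sum ha_lt_one hbdd hrec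
  refine ⟨hten1, ?_⟩
  have h0 : ∀ n, 1 ≤ n → (μ {ω | ξ n ω = 0}).toReal = 1 - p n := by
    intro n hn
    have hc : {ω | ξ n ω = 0} = {ω | ξ n ω = 1}ᶜ := by
      ext ω
      simp only [mem_setOf_eq, mem_compl_iff]
      constructor
      · intro h h1
        rw [h] at h1
        norm_num at h1
      · intro h
        rcases hval n hn ω with h' | h'
        · exact h'
        · exact absurd h' h
    rw [hc, prob_compl_eq_one_sub (hA n),
      ENNReal.toReal_sub_of_le prob_le_one ENNReal.one_ne_top, ENNReal.toReal_one]
  have hten2 : Tendsto (fun n => 1 - p n) atTop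
      (𝓝 (1 - a 0 / (1 - ∑' i, a (i+1)))) := tendsto_const_nhds.sub hten1
  refine hten2.congr' ?_
  filter_upwards [eventually_ge_atTop 1] with n hn
  exact (h0 n hn).symm
end

section
/- The arrival process converges in distribution: as n → ∞, the law of ξ_n converges weakly to the Bernoulli distribution of a random variable ξ with ℙ(ξ = 1) = a_0 / (1 − Σ_{i=1}^∞ a_i) and ℙ(ξ = 0) = 1 − a_0 / (1 − Σ_{i=1}^∞ a_i). -/
open MeasureTheory Filter Topology Set


theorem renewal_tendsto (a q : ℕ → ℝ) (hapos : ∀ i, 0 < a i)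
    (hsum : Summable a) (hlt : ∑' i, a i < 1)
    (hrec : ∀ k, q k = a 0 + ∑ m ∈ Finset.Icc 1 k, a m * q (k - m)) :
    Tendsto q atTop (𝓝 (a 0 / (1 - ∑' i, a (i + 1)))) := by
  have hS : Summable (fun i => a (i + 1)) := (summable_nat_add_iff 1).mpr hsum
  set S : ℝ := ∑' i, a (i + 1) with hSdef
  have hsplit : ∑' i, a i = a 0 + S := Summable.tsum_eq_zero_add hsum
  have hSnn : 0 ≤ S := tsum_nonneg fun i => (hapos _).le
  have hS1 : S < 1 := by
    have := hapos 0; linarith [hsplit ▸ hlt]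
  have h1S : (0:ℝ) < 1 - S := by linarith
  set L : ℝ := a 0 / (1 - S) with hLdef
  have hLpos : 0 < L := div_pos (hapos 0) h1S
  have hLfix : a 0 + S * L = L := by
    have hL' : L * (1 - S) = a 0 := by rw [hLdef]; exact div_mul_cancel₀ _ h1S.ne'
    linear_combination -hL'
  -- partial sums
  have hc_eq : ∀ K, ∑ m ∈ Finset.Icc 1 K, a m = ∑ j ∈ Finset.range K, a (j + 1) := by
    intro K
    rw [← Finset.Ico_add_one_right_eq_Icc, Finset.sum_Ico_eq_sum_range]
    simp [add_comm]
  have hcle : ∀ K, ∑ m ∈ Finset.Icc 1 K, a m ≤ S := by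
    intro K
    rw [hc_eq]
    exact hS.sum_le_tsum _ (fun i _ => (hapos _).le)
  -- nonnegativity
  have hq0 : ∀ k, 0 ≤ q k := by
    intro k
    induction k using Nat.strong_induction_on with
    | _ k ih =>
      rw [hrec k]
      have : 0 ≤ ∑ m ∈ Finset.Icc 1 k, a m * q (k - m) := by
        apply Finset.sum_nonneg
        intro m hm
        simp only [Finset.mem_Icc] at hm
        exact mul_nonneg (hapos m).le (ih (k - m) (by omega))
      linarith [hapos 0]
  -- upper bound
  have hqL : ∀ k, q k ≤ L := by
    intro k
    induction k using Nat.strong_induction_on with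
    | _ k ih =>
      rw [hrec k]
      have h1 : ∑ m ∈ Finset.Icc 1 k, a m * q (k - m) ≤ ∑ m ∈ Finset.Icc 1 k, a m * L := by
        apply Finset.sum_le_sum
        intro m hm
        simp only [Finset.mem_Icc] at hm
        exact mul_le_mul_of_nonneg_left (ih (k - m) (by omega)) (hapos m).le
      have h2 : ∑ m ∈ Finset.Icc 1 k, a m * L ≤ S * L := by
        rw [← Finset.sum_mul]
        exact mul_le_mul_of_nonneg_right (hcle k) hLpos.le
      linarith
  -- monotone
  have hmono1 : ∀ k, q k ≤ q (k + 1) := by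
    intro k
    induction k using Nat.strong_induction_on with
    | _ k ih =>
      rw [hrec k, hrec (k + 1)]
      rw [Finset.sum_Icc_succ_top (by omega : 1 ≤ k + 1)]
      have h1 : ∑ m ∈ Finset.Icc 1 k, a m * q (k - m)
          ≤ ∑ m ∈ Finset.Icc 1 k, a m * q (k + 1 - m) := by
        apply Finset.sum_le_sum
        intro m hm
        simp only [Finset.mem_Icc] at hm
        have hle : q (k - m) ≤ q (k - m + 1) := ih (k - m) (by omega)
        have : k - m + 1 = k + 1 - m := by omega
        rw [this] at hle
        exact mul_le_mul_of_nonneg_left hle (hapos m).le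
      have h2 : 0 ≤ a (k + 1) * q (k + 1 - (k + 1)) :=
        mul_nonneg (hapos _).le (hq0 _)
      linarith
  have hmono : Monotone q := monotone_nat_of_le_succ hmono1
  have hbdd : BddAbove (Set.range q) := ⟨L, by rintro x ⟨k, rfl⟩; exact hqL k⟩
  set ℓ : ℝ := ⨆ k, q k with hldef
  have htend : Tendsto q atTop (𝓝 ℓ) := tendsto_atTop_ciSup hmono hbdd
  have hlleL : ℓ ≤ L := ciSup_le hqL
  -- lower bound: for each K, a 0 + (∑_{m=1}^K a m) * ℓ ≤ ℓ
  have hlow : ∀ K : ℕ, a 0 + (∑ m ∈ Finset.Icc 1 K, a m) * ℓ ≤ ℓ := by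
    intro K
    have hstep : ∀ k, a 0 + (∑ m ∈ Finset.Icc 1 K, a m) * q k ≤ q (k + K) := by
      intro k
      rw [hrec (k + K)]
      have h1 : ∑ m ∈ Finset.Icc 1 K, a m * q k
          ≤ ∑ m ∈ Finset.Icc 1 K, a m * q (k + K - m) := by
        apply Finset.sum_le_sum
        intro m hm
        simp only [Finset.mem_Icc] at hm
        exact mul_le_mul_of_nonneg_left (hmono (by omega : k ≤ k + K - m)) (hapos m).le
      have h2 : ∑ m ∈ Finset.Icc 1 K, a m * q (k + K - m)
          ≤ ∑ m ∈ Finset.Icc 1 (k + K), a m * q (k + K - m) := by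
        apply Finset.sum_le_sum_of_subset_of_nonneg
        · apply Finset.Icc_subset_Icc_right; omega
        · intro m _ _; exact mul_nonneg (hapos m).le (hq0 _)
      rw [Finset.sum_mul]
      linarith
    have hL1 : Tendsto (fun k => a 0 + (∑ m ∈ Finset.Icc 1 K, a m) * q k) atTop
        (𝓝 (a 0 + (∑ m ∈ Finset.Icc 1 K, a m) * ℓ)) :=
      (tendsto_const_nhds.add (htend.const_mul _))
    have hL2 : Tendsto (fun k => q (k + K)) atTop (𝓝 ℓ) :=
      htend.comp (tendsto_add_atTop_nat K)
    exact le_of_tendsto_of_tendsto' hL1 hL2 hstep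
  have hkey : a 0 + S * ℓ ≤ ℓ := by
    have hc_tend : Tendsto (fun K => ∑ m ∈ Finset.Icc 1 K, a m) atTop (𝓝 S) := by
      have := hS.hasSum.tendsto_sum_nat
      apply this.congr
      intro K; exact (hc_eq K).symm
    have : Tendsto (fun K => a 0 + (∑ m ∈ Finset.Icc 1 K, a m) * ℓ) atTop
        (𝓝 (a 0 + S * ℓ)) := tendsto_const_nhds.add (hc_tend.mul_const ℓ)
    exact le_of_tendsto this (Eventually.of_forall hlow)
  have hLlel : L ≤ ℓ := by
    rw [hLdef, div_le_iff₀ h1S]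
    nlinarith
  have : ℓ = L := le_antisymm hlleL hLlel
  rw [← this]
  exact htend

theorem dthp_arrival_converges_in_distribution
    {Ω : Type*} [MeasurableSpace Ω] (μ : Measure Ω) [IsProbabilityMeasure μ]
    (a : ℕ → ℝ) (ξ : ℕ → Ω → ℝ)
    (ha_pos : ∀ i, 0 < a i)
    (ha_sum : Summable a)
    (ha_lt_one : ∑' i, a i < 1)
    (ha_moment : Summable (fun i : ℕ => (i : ℝ) * a i))
    (hmeas : ∀ n, Measurable (ξ n))
    (hval : ∀ n, 1 ≤ n → ∀ ω, ξ n ω = 0 ∨ ξ n ω = 1)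
    (hinit : μ {ω | ξ 1 ω = 1} = ENNReal.ofReal (a 0))
    (hcond : ∀ n, 2 ≤ n →
      μ[ξ n | ⨆ i ∈ Finset.Icc 1 (n - 1), MeasurableSpace.comap (ξ i) Real.measurableSpace]
        =ᵐ[μ] fun ω => a 0 + ∑ i ∈ Finset.Icc 1 (n - 1), a (n - i) * ξ i ω)
    :
    ∀ f : ℝ → ℝ, Continuous f → (∃ C, ∀ x, |f x| ≤ C) →
      Tendsto (fun n => ∫ ω, f (ξ n ω) ∂μ) atTop
        (𝓝 (∫ x, f x ∂(ENNReal.ofReal (a 0 / (1 - ∑' i, a (i + 1))) • Measure.dirac (1 : ℝ) +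
              ENNReal.ofReal (1 - a 0 / (1 - ∑' i, a (i + 1))) • Measure.dirac (0 : ℝ)))) := by
  have hS : Summable (fun i => a (i + 1)) := (summable_nat_add_iff 1).mpr ha_sum
  set S : ℝ := ∑' i, a (i + 1) with hSdef
  have hsplit : ∑' i, a i = a 0 + S := Summable.tsum_eq_zero_add ha_sum
  have hSnn : 0 ≤ S := tsum_nonneg fun i => (ha_pos _).le
  have hS1 : S < 1 := by have := ha_pos 0; linarith [hsplit ▸ ha_lt_one]
  have h1S : (0:ℝ) < 1 - S := by linarith
  set L : ℝ := a 0 / (1 - S) with hLdef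
  have hLnn : 0 ≤ L := div_nonneg (ha_pos 0).le h1S.le
  have hLle1 : L ≤ 1 := by
    rw [hLdef, div_le_one h1S]
    linarith [hsplit ▸ ha_lt_one]
  -- indicator representation, integrability
  have hA : ∀ n, MeasurableSet {ω | ξ n ω = 1} := fun n => (hmeas n) (measurableSet_singleton 1)
  have hind : ∀ n, 1 ≤ n → ∀ ω, ξ n ω = Set.indicator {ω | ξ n ω = 1} 1 ω := by
    intro n hn ω
    rcases hval n hn ω with h | h
    · rw [h]; symm; apply Set.indicator_of_notMem; simp [h]
    · rw [h]; symm
      have hω : ω ∈ {ω | ξ n ω = 1} := h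
      simp [Set.indicator_of_mem hω]
  have hint : ∀ n, 1 ≤ n → Integrable (ξ n) μ := by
    intro n hn
    have h1 : Integrable (Set.indicator {ω | ξ n ω = 1} (fun _ => (1:ℝ))) μ :=
      (integrable_const (1:ℝ)).indicator (hA n)
    exact h1.congr (Eventually.of_forall fun ω => (hind n hn ω).symm)
  set p : ℕ → ℝ := fun n => ∫ ω, ξ n ω ∂μ with hpdef
  have hp1 : p 1 = a 0 := by
    have h1 : p 1 = ∫ ω, Set.indicator {ω | ξ 1 ω = 1} 1 ω ∂μ :=
      integral_congr_ae (Eventually.of_forall (hind 1 le_rfl))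
    rw [h1, integral_indicator_one (hA 1), measureReal_def, hinit, ENNReal.toReal_ofReal (ha_pos 0).le]
  have hprec : ∀ n, 2 ≤ n → p n = a 0 + ∑ i ∈ Finset.Icc 1 (n - 1), a (n - i) * p i := by
    intro n hn
    have hm : (⨆ i ∈ Finset.Icc 1 (n - 1), MeasurableSpace.comap (ξ i) Real.measurableSpace)
        ≤ ‹MeasurableSpace Ω› := by
      apply iSup₂_le
      intro i _
      exact (hmeas i).comap_le
    have hik : ∀ i ∈ Finset.Icc 1 (n - 1), Integrable (fun ω => a (n - i) * ξ i ω) μ := by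
      intro i hi
      simp only [Finset.mem_Icc] at hi
      exact (hint i hi.1).const_mul _
    have h1 : p n = ∫ ω, (μ[ξ n | ⨆ i ∈ Finset.Icc 1 (n - 1),
        MeasurableSpace.comap (ξ i) Real.measurableSpace]) ω ∂μ :=
      (integral_condExp (f := ξ n) (μ := μ) hm).symm
    rw [h1, integral_congr_ae (hcond n hn),
        integral_add (integrable_const _) (integrable_finset_sum _ hik),
        integral_finset_sum _ hik]
    simp only [integral_const, probReal_univ, one_smul, integral_const_mul]
    rfl
  have hqrec : ∀ k, (fun k => p (k + 1)) k
      = a 0 + ∑ m ∈ Finset.Icc 1 k, a m * (fun k => p (k + 1)) (k - m) := by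
    intro k
    rcases Nat.eq_zero_or_pos k with rfl | hk
    · simp [hp1]
    · have := hprec (k + 1) (by omega)
      simp only [Nat.add_sub_cancel] at this
      simp only []
      rw [this]
      congr 1
      apply Finset.sum_nbij' (fun i => k + 1 - i) (fun m => k + 1 - m)
      · intro i hi; simp only [Finset.mem_Icc] at *; omega
      · intro m hm; simp only [Finset.mem_Icc] at *; omega
      · intro i hi; simp only [Finset.mem_Icc] at hi; omega
      · intro m hm; simp only [Finset.mem_Icc] at hm; omega
      · intro i hi
        simp only [Finset.mem_Icc] at hi
        have h2 : k + 1 - (k + 1 - i) = i := by omega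
        have h3 : k - (k + 1 - i) + 1 = i := by omega
        rw [h3]
  have hq := renewal_tendsto a (fun k => p (k + 1)) ha_pos ha_sum ha_lt_one hqrec
  have hptend : Tendsto p atTop (𝓝 L) := (tendsto_add_atTop_iff_nat 1).mp hq
  intro f hfc hfb
  obtain ⟨C, hC⟩ := hfb
  have hval2 : ∀ n, 1 ≤ n → ∫ ω, f (ξ n ω) ∂μ = f 0 + (f 1 - f 0) * p n := by
    intro n hn
    have heq : ∀ ω, f (ξ n ω) = f 0 + (f 1 - f 0) * ξ n ω := by
      intro ω; rcases hval n hn ω with h | h <;> rw [h] <;> ring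
    rw [integral_congr_ae (Eventually.of_forall heq),
        integral_add (integrable_const _) ((hint n hn).const_mul _),
        integral_const_mul]
    simp only [integral_const, probReal_univ, one_smul]
    rfl
  have hfi : ∀ ν : Measure ℝ, IsProbabilityMeasure ν → Integrable f ν := by
    intro ν hν
    exact (integrable_const C).mono' hfc.measurable.aestronglyMeasurable (ae_of_all _ hC)
  have hRHS : (∫ x, f x ∂(ENNReal.ofReal L • Measure.dirac (1 : ℝ) +
      ENNReal.ofReal (1 - L) • Measure.dirac (0 : ℝ))) = f 0 + (f 1 - f 0) * L := by
    rw [integral_add_measure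
        ((hfi _ inferInstance).smul_measure ENNReal.ofReal_ne_top)
        ((hfi _ inferInstance).smul_measure ENNReal.ofReal_ne_top),
      integral_smul_measure, integral_smul_measure, integral_dirac, integral_dirac,
      ENNReal.toReal_ofReal hLnn, ENNReal.toReal_ofReal (by linarith)]
    simp only [smul_eq_mul]
    ring
  rw [hRHS]
  have htf : Tendsto (fun n => f 0 + (f 1 - f 0) * p n) atTop
      (𝓝 (f 0 + (f 1 - f 0) * L)) := tendsto_const_nhds.add (hptend.const_mul _)
  apply htf.congr'
  filter_upwards [eventually_ge_atTop 1] with n hn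
  exact (hval2 n hn).symm
end

section
/- The Cesàro averages of the expectations of the arrival process converge: (1/n) Σ_{i=1}^n 𝔼(ξ_i) = 𝔼(H_n)/n → a_0 / (1 − Σ_{i=1}^∞ a_i) as n → ∞. -/
open MeasureTheory Filter Topology Set

theorem dthp_cesaro_expectation_tendsto
    {Ω : Type*} [MeasurableSpace Ω] (μ : Measure Ω) [IsProbabilityMeasure μ]
    (a : ℕ → ℝ) (ξ : ℕ → Ω → ℝ)
    (ha_pos : ∀ i, 0 < a i)
    (ha_sum : Summable a)
    (ha_lt_one : ∑' i, a i < 1)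
    (ha_moment : Summable (fun i : ℕ => (i : ℝ) * a i))
    (hmeas : ∀ n, Measurable (ξ n))
    (hval : ∀ n, 1 ≤ n → ∀ ω, ξ n ω = 0 ∨ ξ n ω = 1)
    (hinit : μ {ω | ξ 1 ω = 1} = ENNReal.ofReal (a 0))
    (hcond : ∀ n, 2 ≤ n →
      μ[ξ n | ⨆ i ∈ Finset.Icc 1 (n - 1), MeasurableSpace.comap (ξ i) Real.measurableSpace]
        =ᵐ[μ] fun ω => a 0 + ∑ i ∈ Finset.Icc 1 (n - 1), a (n - i) * ξ i ω)
    :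
    Tendsto (fun n => (∑ i ∈ Finset.Icc 1 n, ∫ ω, ξ i ω ∂μ) / n) atTop
      (𝓝 (a 0 / (1 - ∑' i, a (i + 1)))) := by
  have ha0 : 0 < a 0 := ha_pos 0
  have ha1_sum : Summable (fun i => a (i + 1)) := (summable_nat_add_iff 1).mpr ha_sum
  set s : ℝ := ∑' i, a (i + 1) with hs_def
  have hsplit : ∑' i, a i = a 0 + s := Summable.tsum_eq_zero_add ha_sum
  have hs_nonneg : 0 ≤ s := tsum_nonneg fun i => (ha_pos _).le
  have hs_lt : s < 1 := by nlinarith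
  have h1s : 0 < 1 - s := by linarith
  set m : ℕ → ℝ := fun n => ∫ ω, ξ n ω ∂μ with hm_def
  have hξ_nonneg : ∀ n, 1 ≤ n → ∀ ω, 0 ≤ ξ n ω := by
    intro n hn ω; rcases hval n hn ω with h | h <;> simp [h]
  have hξ_le : ∀ n, 1 ≤ n → ∀ ω, ξ n ω ≤ 1 := by
    intro n hn ω; rcases hval n hn ω with h | h <;> simp [h]
  have hint : ∀ n, 1 ≤ n → Integrable (ξ n) μ := by
    intro n hn
    refine Integrable.mono' (integrable_const 1) (hmeas n).aestronglyMeasurable ?_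
    filter_upwards with ω
    rw [Real.norm_eq_abs, abs_le]
    exact ⟨by linarith [hξ_nonneg n hn ω], hξ_le n hn ω⟩
  have hm_nonneg : ∀ n, 1 ≤ n → 0 ≤ m n := fun n hn => integral_nonneg (hξ_nonneg n hn)
  have hm_le : ∀ n, 1 ≤ n → m n ≤ 1 := by
    intro n hn
    calc m n ≤ ∫ _, (1 : ℝ) ∂μ :=
          integral_mono (hint n hn) (integrable_const 1) (hξ_le n hn)
      _ = 1 := by simp
  have hm1 : m 1 = a 0 := by
    have hind : ξ 1 = Set.indicator {ω | ξ 1 ω = 1} (fun _ => (1 : ℝ)) := by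
      funext ω
      rcases hval 1 le_rfl ω with h | h <;> simp [Set.indicator_apply, h]
    have hms : MeasurableSet {ω | ξ 1 ω = 1} := hmeas 1 (measurableSet_singleton 1)
    calc m 1 = ∫ ω, Set.indicator {ω | ξ 1 ω = 1} (fun _ => (1 : ℝ)) ω ∂μ := by
          simp only [hm_def]; rw [← hind]
      _ = (μ {ω | ξ 1 ω = 1}).toReal • (1 : ℝ) := integral_indicator_const 1 hms
      _ = a 0 := by rw [hinit, smul_eq_mul, mul_one, ENNReal.toReal_ofReal ha0.le]
  -- the recursion for the expectations
  have hrec : ∀ n, 2 ≤ n → m n = a 0 + ∑ i ∈ Finset.Icc 1 (n - 1), a (n - i) * m i := by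
    intro n hn
    have hle : (⨆ i ∈ Finset.Icc 1 (n - 1),
        MeasurableSpace.comap (ξ i) Real.measurableSpace) ≤ ‹MeasurableSpace Ω› :=
      iSup₂_le fun i _ => measurable_iff_comap_le.mp (hmeas i)
    have h1 : ∫ ω, ξ n ω ∂μ
        = ∫ ω, (a 0 + ∑ i ∈ Finset.Icc 1 (n - 1), a (n - i) * ξ i ω) ∂μ := by
      rw [← integral_condExp hle]
      exact integral_congr_ae (hcond n hn)
    have hintsum : Integrable (fun ω => ∑ i ∈ Finset.Icc 1 (n - 1), a (n - i) * ξ i ω) μ :=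
      integrable_finset_sum _ fun i hi => ((hint i (Finset.mem_Icc.mp hi).1).const_mul _)
    have h2 : ∫ ω, (a 0 + ∑ i ∈ Finset.Icc 1 (n - 1), a (n - i) * ξ i ω) ∂μ
        = a 0 + ∑ i ∈ Finset.Icc 1 (n - 1), a (n - i) * m i := by
      rw [integral_add (integrable_const _) hintsum]
      congr 1
      · simp
      · rw [integral_finset_sum _ fun i hi => ((hint i (Finset.mem_Icc.mp hi).1).const_mul _)]
        exact Finset.sum_congr rfl fun i _ => integral_const_mul _ _
    simp only [hm_def]
    rw [h1, h2]
  set B : ℕ → ℝ := fun k => ∑ j ∈ Finset.Icc 1 k, a j with hB_def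
  set r : ℕ → ℝ := fun k => s - B k with hr_def
  have hB_range : ∀ k, B k = ∑ j ∈ Finset.range k, a (j + 1) := by
    intro k
    induction k with
    | zero => simp [hB_def]
    | succ k ih =>
      rw [Finset.sum_range_succ, ← ih]
      simp only [hB_def]
      exact Finset.sum_Icc_succ_top (by omega) a
  have hr_nonneg : ∀ k, 0 ≤ r k := by
    intro k
    simp only [hr_def, sub_nonneg, hB_range k, hs_def]
    exact Summable.sum_le_tsum (Finset.range k) (fun i _ => (ha_pos _).le) ha1_sum
  have hr_succ : ∀ t, r (t + 1) = r t - a (t + 1) := by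
    intro t
    simp only [hr_def, hB_def]
    rw [Finset.sum_Icc_succ_top (show (1 : ℕ) ≤ t + 1 by omega)]
    ring
  have hr_tendsto : Tendsto r atTop (𝓝 0) := by
    have h := ha1_sum.hasSum.tendsto_sum_nat
    have h2 : Tendsto B atTop (𝓝 s) := by
      rw [hs_def]; exact h.congr fun k => (hB_range k).symm
    have h3 := (tendsto_const_nhds (x := s)).sub h2
    rw [hr_def]
    simpa using h3
  set S : ℕ → ℝ := fun n => ∑ i ∈ Finset.Icc 1 n, m i with hS_def
  set E : ℕ → ℝ := fun n => ∑ i ∈ Finset.Icc 1 (n - 1), m i * r (n - i) with hE_def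
  -- telescoping step for the error term
  have hEstep : ∀ j : ℕ, E (j + 1 + 1) = E (j + 1) + s * m (j + 1) + a 0 - m (j + 1 + 1) := by
    intro j
    have hmrec2 := hrec (j + 1 + 1) (by omega)
    rw [Nat.add_sub_cancel] at hmrec2
    have hmrec2' : m (j + 1 + 1)
        = a 0 + ((∑ i ∈ Finset.Icc 1 j, a (j + 1 + 1 - i) * m i) + a 1 * m (j + 1)) := by
      rw [hmrec2, Finset.sum_Icc_succ_top (show (1 : ℕ) ≤ j + 1 by omega)]
      rw [show j + 1 + 1 - (j + 1) = 1 from by omega]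
    have hE2 : E (j + 1 + 1)
        = (∑ i ∈ Finset.Icc 1 j, m i * r (j + 1 + 1 - i)) + m (j + 1) * r 1 := by
      simp only [hE_def, Nat.add_sub_cancel]
      rw [Finset.sum_Icc_succ_top (show (1 : ℕ) ≤ j + 1 by omega)]
      rw [show j + 1 + 1 - (j + 1) = 1 from by omega]
    have hE1 : E (j + 1) = ∑ i ∈ Finset.Icc 1 j, m i * r (j + 1 - i) := by
      simp only [hE_def, Nat.add_sub_cancel]
    have hr1 : r 1 = s - a 1 := by simp [hr_def, hB_def]
    have hinner : ∀ i ∈ Finset.Icc 1 j,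
        m i * r (j + 1 + 1 - i) = m i * r (j + 1 - i) - m i * a (j + 1 + 1 - i) := by
      intro i hi
      have hi' := Finset.mem_Icc.mp hi
      rw [show j + 1 + 1 - i = (j + 1 - i) + 1 from by omega, hr_succ]
      ring
    have hXY : (∑ i ∈ Finset.Icc 1 j, m i * a (j + 1 + 1 - i))
        = ∑ i ∈ Finset.Icc 1 j, a (j + 1 + 1 - i) * m i :=
      Finset.sum_congr rfl fun i _ => mul_comm _ _
    rw [hE2, Finset.sum_congr rfl hinner, Finset.sum_sub_distrib, ← hE1, hr1, hmrec2', hXY]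
    ring
  -- the key identity
  have hkey : ∀ n, 1 ≤ n → (1 - s) * S n = n * a 0 - s * m n - E n := by
    intro n
    induction n with
    | zero => intro h; exact absurd h (by norm_num)
    | succ k ih =>
      intro _
      rcases Nat.eq_zero_or_pos k with rfl | hk
      · have e1 : S 1 = a 0 := by simp [hS_def, hm1]
        have e2 : E 1 = 0 := by simp [hE_def]
        norm_num [e1, e2, hm1]
        ring
      · have ih' := ih hk
        obtain ⟨j, rfl⟩ : ∃ j, k = j + 1 := ⟨k - 1, by omega⟩
        have hSstep : S (j + 1 + 1) = S (j + 1) + m (j + 1 + 1) := by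
          simp only [hS_def]
          exact Finset.sum_Icc_succ_top (by omega) m
        rw [hSstep, hEstep j]
        push_cast at ih' ⊢
        linear_combination ih'
  -- bounds on the error term
  have hE_nonneg : ∀ n, 0 ≤ E n := by
    intro n
    apply Finset.sum_nonneg
    intro i hi
    exact mul_nonneg (hm_nonneg i (Finset.mem_Icc.mp hi).1) (hr_nonneg _)
  have hE_le : ∀ n, E n ≤ ∑ k ∈ Finset.range n, r k := by
    intro n
    calc E n ≤ ∑ i ∈ Finset.Icc 1 (n - 1), r (n - i) := by
          apply Finset.sum_le_sum
          intro i hi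
          exact mul_le_of_le_one_left (hr_nonneg _) (hm_le i (Finset.mem_Icc.mp hi).1)
      _ = ∑ k ∈ (Finset.Icc 1 (n - 1)).image (fun i => n - i), r k := by
          rw [Finset.sum_image]
          intro x hx y hy hxy
          have hx' := Finset.mem_Icc.mp hx
          have hy' := Finset.mem_Icc.mp hy
          simp only at hxy
          omega
      _ ≤ ∑ k ∈ Finset.range n, r k := by
          apply Finset.sum_le_sum_of_subset_of_nonneg
          · intro k hk
            simp only [Finset.mem_image, Finset.mem_Icc] at hk
            obtain ⟨i, ⟨hi1, hi2⟩, rfl⟩ := hk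
            simp only [Finset.mem_range]
            omega
          · intro k _ _
            exact hr_nonneg k
  have hC : Tendsto (fun n : ℕ => (n : ℝ)⁻¹ * ∑ i ∈ Finset.range n, r i) atTop (𝓝 0) :=
    hr_tendsto.cesaro
  have hE_div : Tendsto (fun n : ℕ => E n / n) atTop (𝓝 0) := by
    apply squeeze_zero (fun n => div_nonneg (hE_nonneg n) (Nat.cast_nonneg n)) _ hC
    intro n
    rw [div_eq_mul_inv, mul_comm]
    exact mul_le_mul_of_nonneg_left (hE_le n) (inv_nonneg.mpr (Nat.cast_nonneg n))
  have hmn_div : Tendsto (fun n : ℕ => m n / n) atTop (𝓝 0) := by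
    apply squeeze_zero' _ _ tendsto_one_div_atTop_nhds_zero_nat
    · filter_upwards [eventually_ge_atTop 1] with n hn
      exact div_nonneg (hm_nonneg n hn) (Nat.cast_nonneg n)
    · filter_upwards [eventually_ge_atTop 1] with n hn
      have hn0 : (0 : ℝ) < n := by exact_mod_cast hn
      exact (div_le_div_iff_of_pos_right hn0).mpr (hm_le n hn)
  have hT : Tendsto (fun n : ℕ => (a 0 - s * (m n / n) - E n / n) / (1 - s)) atTop
      (𝓝 (a 0 / (1 - s))) := by
    have h := (((tendsto_const_nhds (x := a 0)).sub (hmn_div.const_mul s)).sub hE_div).div_const (1 - s)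
    simpa using h
  refine Tendsto.congr' ?_ hT
  filter_upwards [eventually_ge_atTop 1] with n hn
  have hn0 : (n : ℝ) ≠ 0 := Nat.cast_ne_zero.mpr (by omega)
  have hS : (∑ i ∈ Finset.Icc 1 n, ∫ ω, ξ i ω ∂μ) = S n := by simp only [hS_def, hm_def]
  rw [hS]
  have h := hkey n hn
  field_simp
  linear_combination (-1 : ℝ) * h
end

section
/- For every continuous and concave function g : [0,1] → ℝ, the limit Γ_g = lim_{n→∞} (1/n) log 𝔼(exp(n·g(H_n/n))) exists (as a finite real number). -/
open MeasureTheory Filter Topology Set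

namespace DTHP

variable {Ω : Type*} [MeasurableSpace Ω]

noncomputable def lam (a : ℕ → ℝ) (E : Finset ℕ) (k : ℕ) : ℝ :=
  a 0 + ∑ i ∈ Finset.Icc 1 (k - 1), a (k - i) * (if i ∈ E then (1:ℝ) else 0)

def cyl (ξ : ℕ → Ω → ℝ) (n : ℕ) (E : Finset ℕ) : Set Ω :=
  {ω | ∀ i ∈ Finset.Icc 1 n, ξ i ω = if i ∈ E then (1:ℝ) else 0}

noncomputable def pd (a : ℕ → ℝ) (n : ℕ) (E : Finset ℕ) : ℝ :=
  ∏ k ∈ Finset.Icc 1 n, (if k ∈ E then lam a E k else 1 - lam a E k)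

lemma lam_ge {a : ℕ → ℝ} (ha_pos : ∀ i, 0 < a i) (E : Finset ℕ) (k : ℕ) : a 0 ≤ lam a E k := by
  have : (0:ℝ) ≤ ∑ i ∈ Finset.Icc 1 (k - 1), a (k - i) * (if i ∈ E then (1:ℝ) else 0) := by
    apply Finset.sum_nonneg
    intro i _
    have := (ha_pos (k - i)).le
    positivity
  unfold lam; linarith

lemma lam_pos {a : ℕ → ℝ} (ha_pos : ∀ i, 0 < a i) (E : Finset ℕ) (k : ℕ) : 0 < lam a E k :=
  lt_of_lt_of_le (ha_pos 0) (lam_ge ha_pos E k)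

lemma lam_le {a : ℕ → ℝ} (ha_pos : ∀ i, 0 < a i) (ha_sum : Summable a)
    (E : Finset ℕ) {k : ℕ} (hk : 1 ≤ k) : lam a E k ≤ ∑' i, a i := by
  have h1 : lam a E k ≤ a 0 + ∑ i ∈ Finset.Icc 1 (k - 1), a (k - i) := by
    unfold lam
    have : ∀ i ∈ Finset.Icc 1 (k-1), a (k - i) * (if i ∈ E then (1:ℝ) else 0) ≤ a (k - i) := by
      intro i _
      rcases (em (i ∈ E)) with h | h <;> simp [h, (ha_pos (k-i)).le]
    linarith [Finset.sum_le_sum this]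
  have h2 : ∑ i ∈ Finset.Icc 1 (k - 1), a (k - i) = ∑ j ∈ Finset.Icc 1 (k-1), a j := by
    refine Finset.sum_nbij' (fun i => k - i) (fun j => k - j) ?_ ?_ ?_ ?_ ?_ <;>
      · intro i hi
        first
        | rfl
        | (simp only [Finset.mem_Icc] at *; omega)
  have h3 : a 0 + ∑ j ∈ Finset.Icc 1 (k-1), a j = ∑ j ∈ Finset.range k, a j := by
    have h4 : Finset.Icc 1 (k-1) = Finset.Ico 1 k := by
      ext j; simp only [Finset.mem_Icc, Finset.mem_Ico]; omega
    rw [h4, Finset.range_eq_Ico, Finset.sum_eq_sum_Ico_succ_bot hk]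
  calc lam a E k ≤ a 0 + ∑ i ∈ Finset.Icc 1 (k - 1), a (k - i) := h1
    _ = ∑ j ∈ Finset.range k, a j := by rw [h2, h3]
    _ ≤ ∑' i, a i := Summable.sum_le_tsum _ (fun i _ => (ha_pos i).le) ha_sum

lemma pd_nonneg {a : ℕ → ℝ} (ha_pos : ∀ i, 0 < a i) (ha_sum : Summable a)
    (ha_lt : ∑' i, a i < 1) (n : ℕ) (E : Finset ℕ) : 0 ≤ pd a n E := by
  apply Finset.prod_nonneg
  intro k hk
  simp only [Finset.mem_Icc] at hk
  rcases em (k ∈ E) with h | h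
  · simp [h, (lam_pos ha_pos E k).le]
  · simp only [h, if_false]
    have := lam_le ha_pos ha_sum E (k := k) hk.1
    linarith

noncomputable def Falg (ξ : ℕ → Ω → ℝ) (n : ℕ) : MeasurableSpace Ω :=
  ⨆ i ∈ Finset.Icc 1 n, MeasurableSpace.comap (ξ i) Real.measurableSpace

lemma Falg_le {ξ : ℕ → Ω → ℝ} (hmeas : ∀ n, Measurable (ξ n)) (n : ℕ) :
    Falg ξ n ≤ ‹MeasurableSpace Ω› :=
  iSup₂_le fun i _ => (hmeas i).comap_le

lemma measurable_xi_Falg {ξ : ℕ → Ω → ℝ} {n i : ℕ} (hi : i ∈ Finset.Icc 1 n) :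
    Measurable[Falg ξ n] (ξ i) :=
  Measurable.of_comap_le (le_iSup₂ (f := fun i (_ : i ∈ Finset.Icc 1 n) =>
    MeasurableSpace.comap (ξ i) Real.measurableSpace) i hi)

lemma measurableSet_cyl_F {ξ : ℕ → Ω → ℝ} (n : ℕ) (E : Finset ℕ) :
    MeasurableSet[Falg ξ n] (cyl ξ n E) := by
  have h : cyl ξ n E = ⋂ i ∈ Finset.Icc 1 n, ξ i ⁻¹' {if i ∈ E then (1:ℝ) else 0} := by
    ext ω; simp [cyl, Set.mem_iInter]
  rw [h]
  exact MeasurableSet.biInter (Finset.Icc 1 n).countable_toSet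
    (fun i hi => measurable_xi_Falg hi (measurableSet_singleton _))

lemma measurableSet_cyl {ξ : ℕ → Ω → ℝ} (hmeas : ∀ n, Measurable (ξ n)) (n : ℕ) (E : Finset ℕ) :
    MeasurableSet (cyl ξ n E) :=
  Falg_le hmeas n _ (measurableSet_cyl_F n E)

lemma integrable_xi {μ : Measure Ω} [IsProbabilityMeasure μ] {ξ : ℕ → Ω → ℝ}
    (hmeas : ∀ n, Measurable (ξ n)) (hval : ∀ n, 1 ≤ n → ∀ ω, ξ n ω = 0 ∨ ξ n ω = 1)
    {n : ℕ} (hn : 1 ≤ n) : Integrable (ξ n) μ := by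
  refine (integrable_const (1:ℝ)).mono' ((hmeas n).aestronglyMeasurable)
    (Eventually.of_forall fun ω => ?_)
  rcases hval n hn ω with h | h <;> simp [h]

lemma pd_succ (a : ℕ → ℝ) (N : ℕ) (E : Finset ℕ) :
    pd a (N+1) E = (if N+1 ∈ E then lam a E (N+1) else 1 - lam a E (N+1)) * pd a N E := by
  unfold pd
  rw [show Finset.Icc 1 (N+1) = insert (N+1) (Finset.Icc 1 N) by
    ext j; simp only [Finset.mem_Icc, Finset.mem_insert]; omega]
  rw [Finset.prod_insert (by simp)]

lemma cyl_succ (ξ : ℕ → Ω → ℝ) (N : ℕ) (E : Finset ℕ) :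
    cyl ξ (N+1) E = cyl ξ N E ∩ ξ (N+1) ⁻¹' {if N+1 ∈ E then (1:ℝ) else 0} := by
  ext ω
  simp only [cyl, Set.mem_setOf_eq, Set.mem_inter_iff, Set.mem_preimage, Set.mem_singleton_iff,
    Finset.mem_Icc]
  constructor
  · intro h
    exact ⟨fun i hi => h i ⟨hi.1, by omega⟩, h (N+1) ⟨by omega, le_rfl⟩⟩
  · rintro ⟨h1, h2⟩ i hi
    rcases Nat.lt_or_ge i (N+1) with h | h
    · exact h1 i ⟨hi.1, by omega⟩
    · have : i = N + 1 := by omega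
      rw [this]; exact h2

lemma lam_const_on_cyl {a : ℕ → ℝ} {ξ : ℕ → Ω → ℝ} {N : ℕ} {E : Finset ℕ} {ω : Ω}
    (hω : ω ∈ cyl ξ N E) :
    a 0 + ∑ i ∈ Finset.Icc 1 N, a (N+1-i) * ξ i ω = lam a E (N+1) := by
  unfold lam
  simp only [Nat.add_sub_cancel]
  congr 1
  apply Finset.sum_congr rfl
  intro i hi
  rw [hω i hi]

theorem measure_cyl {μ : Measure Ω} [IsProbabilityMeasure μ] {a : ℕ → ℝ} {ξ : ℕ → Ω → ℝ}
    (ha_pos : ∀ i, 0 < a i) (ha_sum : Summable a) (ha_lt_one : ∑' i, a i < 1)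
    (hmeas : ∀ n, Measurable (ξ n))
    (hval : ∀ n, 1 ≤ n → ∀ ω, ξ n ω = 0 ∨ ξ n ω = 1)
    (hinit : μ {ω | ξ 1 ω = 1} = ENNReal.ofReal (a 0))
    (hcond : ∀ n, 2 ≤ n →
      μ[ξ n | ⨆ i ∈ Finset.Icc 1 (n - 1), MeasurableSpace.comap (ξ i) Real.measurableSpace]
        =ᵐ[μ] fun ω => a 0 + ∑ i ∈ Finset.Icc 1 (n - 1), a (n - i) * ξ i ω)
    (n : ℕ) (E : Finset ℕ) :
    μ (cyl ξ n E) = ENNReal.ofReal (pd a n E) := by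
  induction n with
  | zero =>
    have h1 : cyl ξ 0 E = Set.univ := by
      ext ω; simp [cyl]
    have h2 : pd a 0 E = 1 := by simp [pd]
    rw [h1, h2, measure_univ, ENNReal.ofReal_one]
  | succ N IH =>
    rcases Nat.eq_zero_or_pos N with rfl | hN
    · -- base case n = 1
      have hcyl1 : cyl ξ 1 E = {ω | ξ 1 ω = if 1 ∈ E then (1:ℝ) else 0} := by
        ext ω
        simp only [cyl, Set.mem_setOf_eq, Finset.mem_Icc]
        constructor
        · intro h; exact h 1 ⟨le_rfl, le_rfl⟩
        · intro h i hi
          have : i = 1 := by omega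
          rw [this]; exact h
      have hlam1 : lam a E 1 = a 0 := by simp [lam]
      have hpd1 : pd a 1 E = if 1 ∈ E then a 0 else 1 - a 0 := by
        simp [pd, hlam1]
      by_cases h1 : 1 ∈ E
      · rw [hcyl1, hpd1]
        simp only [h1, if_true]
        exact hinit
      · rw [hcyl1, hpd1]
        simp only [h1, if_false]
        have hset : {ω | ξ 1 ω = (0:ℝ)} = {ω | ξ 1 ω = (1:ℝ)}ᶜ := by
          ext ω
          simp only [Set.mem_setOf_eq, Set.mem_compl_iff]
          rcases hval 1 le_rfl ω with h | h <;> simp [h]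
        have hms : MeasurableSet {ω | ξ 1 ω = (1:ℝ)} := (hmeas 1) (measurableSet_singleton 1)
        rw [hset, prob_compl_eq_one_sub hms, hinit]
        rw [ENNReal.ofReal_sub 1 (ha_pos 0).le, ENNReal.ofReal_one]
    · -- inductive step, N ≥ 1, use hcond (N+1)
      have hm := Falg_le hmeas N
      haveI : IsFiniteMeasure (μ.trim hm) := isFiniteMeasure_trim hm
      have hc : μ[ξ (N+1) | Falg ξ N]
          =ᵐ[μ] fun ω => a 0 + ∑ i ∈ Finset.Icc 1 N, a (N+1-i) * ξ i ω := by
        have := hcond (N+1) (by omega)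
        simpa [Falg] using this
      have hcylms : MeasurableSet (cyl ξ N E) := measurableSet_cyl hmeas N E
      have hint : Integrable (ξ (N+1)) μ := integrable_xi hmeas hval (by omega)
      have hpdnn : 0 ≤ pd a N E := pd_nonneg ha_pos ha_sum ha_lt_one N E
      -- key computation
      have h1 : ∫ ω in cyl ξ N E, (μ[ξ (N+1)|Falg ξ N]) ω ∂μ = ∫ ω in cyl ξ N E, ξ (N+1) ω ∂μ :=
        setIntegral_condExp hm hint (measurableSet_cyl_F N E)
      have h2 : ∫ ω in cyl ξ N E, (μ[ξ (N+1)|Falg ξ N]) ω ∂μ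
          = ∫ ω in cyl ξ N E, (a 0 + ∑ i ∈ Finset.Icc 1 N, a (N+1-i) * ξ i ω) ∂μ :=
        integral_congr_ae (ae_restrict_of_ae hc)
      have h3 : ∫ ω in cyl ξ N E, (a 0 + ∑ i ∈ Finset.Icc 1 N, a (N+1-i) * ξ i ω) ∂μ
          = lam a E (N+1) * pd a N E := by
        rw [setIntegral_congr_fun hcylms (g := fun _ => lam a E (N+1))
          (fun ω hω => lam_const_on_cyl hω)]
        rw [setIntegral_const, measureReal_def, IH, ENNReal.toReal_ofReal hpdnn, smul_eq_mul, mul_comm]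
      have h4 : ∫ ω in cyl ξ N E, ξ (N+1) ω ∂μ
          = (μ (cyl ξ N E ∩ ξ (N+1) ⁻¹' {(1:ℝ)})).toReal := by
        have heq : ∀ ω, ξ (N+1) ω = Set.indicator (ξ (N+1) ⁻¹' {(1:ℝ)}) (fun _ => (1:ℝ)) ω := by
          intro ω
          by_cases hmem : ω ∈ ξ (N+1) ⁻¹' {(1:ℝ)}
          · rw [Set.indicator_of_mem hmem]
            simpa using hmem
          · rw [Set.indicator_of_notMem hmem]
            rcases hval (N+1) (by omega) ω with h | h
            · exact h
            · exact absurd (by simpa using h) hmem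
        calc ∫ ω in cyl ξ N E, ξ (N+1) ω ∂μ
            = ∫ ω in cyl ξ N E,
                Set.indicator (ξ (N+1) ⁻¹' {(1:ℝ)}) (fun _ => (1:ℝ)) ω ∂μ :=
              integral_congr_ae (Eventually.of_forall fun ω => heq ω)
          _ = ∫ _ω in cyl ξ N E ∩ ξ (N+1) ⁻¹' {(1:ℝ)}, (1:ℝ) ∂μ :=
              setIntegral_indicator ((hmeas (N+1)) (measurableSet_singleton _))
          _ = (μ (cyl ξ N E ∩ ξ (N+1) ⁻¹' {(1:ℝ)})).toReal := by
              rw [setIntegral_const]; simp [measureReal_def]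
      have hkey : (μ (cyl ξ N E ∩ ξ (N+1) ⁻¹' {(1:ℝ)})).toReal = lam a E (N+1) * pd a N E := by
        rw [← h4, ← h1, h2, h3]
      have hfin : μ (cyl ξ N E ∩ ξ (N+1) ⁻¹' {(1:ℝ)}) ≠ ⊤ := measure_ne_top μ _
      have hone : μ (cyl ξ N E ∩ ξ (N+1) ⁻¹' {(1:ℝ)})
          = ENNReal.ofReal (lam a E (N+1) * pd a N E) := by
        rw [← hkey, ENNReal.ofReal_toReal hfin]
      rw [cyl_succ, pd_succ]
      by_cases hE : N+1 ∈ E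
      · simp only [hE, if_true]
        exact hone
      · simp only [hE, if_false]
        have hset : cyl ξ N E ∩ ξ (N+1) ⁻¹' {(0:ℝ)}
            = cyl ξ N E \ (cyl ξ N E ∩ ξ (N+1) ⁻¹' {(1:ℝ)}) := by
          ext ω
          simp only [Set.mem_inter_iff, Set.mem_preimage, Set.mem_singleton_iff, Set.mem_diff,
            not_and]
          constructor
          · rintro ⟨ha', hb'⟩
            refine ⟨ha', fun _ hc' => ?_⟩
            rw [hb'] at hc'; norm_num at hc'
          · rintro ⟨ha', hb'⟩
            refine ⟨ha', ?_⟩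
            rcases hval (N+1) (by omega) ω with h | h
            · exact h
            · exact absurd h (hb' ha')
        rw [hset, measure_diff Set.inter_subset_left
            ((hcylms.inter ((hmeas (N+1)) (measurableSet_singleton _))).nullMeasurableSet) hfin,
          hone, IH, ← ENNReal.ofReal_sub _
            (mul_nonneg (lam_pos ha_pos E (N+1)).le hpdnn)]
        congr 1
        ring

open Classical in
lemma integral_eq_sum {μ : Measure Ω} [IsProbabilityMeasure μ] {ξ : ℕ → Ω → ℝ}
    (hmeas : ∀ n, Measurable (ξ n))
    (hval : ∀ n, 1 ≤ n → ∀ ω, ξ n ω = 0 ∨ ξ n ω = 1)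
    (n : ℕ) (φ : ℝ → ℝ) :
    ∫ ω, φ (∑ i ∈ Finset.Icc 1 n, ξ i ω) ∂μ
      = ∑ E ∈ (Finset.Icc 1 n).powerset, φ (E.card) * (μ (cyl ξ n E)).toReal := by
  have hpt : ∀ ω, φ (∑ i ∈ Finset.Icc 1 n, ξ i ω)
      = ∑ E ∈ (Finset.Icc 1 n).powerset,
          Set.indicator (cyl ξ n E) (fun _ => φ (E.card)) ω := by
    intro ω
    set Eω := (Finset.Icc 1 n).filter (fun i => ξ i ω = 1) with hEω
    have hmem : ω ∈ cyl ξ n Eω := by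
      intro i hi
      rcases hval i (Finset.mem_Icc.mp hi).1 ω with h | h
      · have : i ∉ Eω := by simp [hEω, Finset.mem_filter, h]
        simp [this, h]
      · have : i ∈ Eω := by simp [hEω, Finset.mem_filter, hi, h]
        simp [this, h]
    have huniq : ∀ E ∈ (Finset.Icc 1 n).powerset, E ≠ Eω → ω ∉ cyl ξ n E := by
      intro E hE hne hc
      apply hne
      ext i
      by_cases hi : i ∈ Finset.Icc 1 n
      · have h1 := hc i hi
        have h2 := hmem i hi
        constructor
        · intro hiE
          simp only [hiE, if_true] at h1
          by_contra hiEω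
          simp only [hiEω, if_false] at h2
          rw [h1] at h2; norm_num at h2
        · intro hiEω
          simp only [hiEω, if_true] at h2
          by_contra hiE
          simp only [hiE, if_false] at h1
          rw [h1] at h2; norm_num at h2
      · constructor
        · intro hiE; exact absurd (Finset.mem_powerset.mp hE hiE) hi
        · intro hiEω
          exact absurd (Finset.filter_subset _ _ hiEω) hi
    have hsum : ∑ i ∈ Finset.Icc 1 n, ξ i ω = (Eω.card : ℝ) := by
      rw [Finset.card_filter]
      push_cast
      apply Finset.sum_congr rfl
      intro i hi
      rcases hval i (Finset.mem_Icc.mp hi).1 ω with h | h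
      · simp [h, hEω, Finset.mem_filter]
      · simp [h, hEω]
    rw [Finset.sum_eq_single_of_mem Eω
      (Finset.mem_powerset.mpr (Finset.filter_subset _ _))
      (fun E hE hne => Set.indicator_of_notMem (huniq E hE hne) _),
      Set.indicator_of_mem hmem, hsum]
  calc ∫ ω, φ (∑ i ∈ Finset.Icc 1 n, ξ i ω) ∂μ
      = ∫ ω, ∑ E ∈ (Finset.Icc 1 n).powerset,
          Set.indicator (cyl ξ n E) (fun _ => φ (E.card)) ω ∂μ :=
        integral_congr_ae (Eventually.of_forall hpt)
    _ = ∑ E ∈ (Finset.Icc 1 n).powerset,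
          ∫ ω, Set.indicator (cyl ξ n E) (fun _ => φ (E.card)) ω ∂μ :=
        integral_finset_sum _ (fun E _ =>
          (integrable_const (φ (E.card))).indicator (measurableSet_cyl hmeas n E))
    _ = ∑ E ∈ (Finset.Icc 1 n).powerset, φ (E.card) * (μ (cyl ξ n E)).toReal := by
        apply Finset.sum_congr rfl
        intro E _
        rw [integral_indicator_const _ (measurableSet_cyl hmeas n E)]
        rw [smul_eq_mul, mul_comm, measureReal_def]

noncomputable def tail (a : ℕ → ℝ) (j : ℕ) : ℝ := ∑' d, if j ≤ d then a d else 0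

section tails
variable {a : ℕ → ℝ}

lemma summable_tail (ha_pos : ∀ i, 0 < a i) (ha_sum : Summable a) (j : ℕ) :
    Summable (fun d => if j ≤ d then a d else 0) := by
  apply Summable.of_nonneg_of_le (fun d => ?_) (fun d => ?_) ha_sum
  · split <;> simp [(ha_pos d).le]
  · split <;> simp [(ha_pos d).le]

lemma tail_nonneg (ha_pos : ∀ i, 0 < a i) (ha_sum : Summable a) (j : ℕ) : 0 ≤ tail a j :=
  tsum_nonneg (fun d => by split <;> simp [(ha_pos d).le])

lemma mul_tail_le (ha_pos : ∀ i, 0 < a i) (ha_sum : Summable a)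
    (ha_moment : Summable (fun i : ℕ => (i : ℝ) * a i)) (j : ℕ) :
    (j : ℝ) * tail a j ≤ ∑' d : ℕ, (d : ℝ) * a d := by
  rw [tail, ← tsum_mul_left]
  apply Summable.tsum_le_tsum _ ((summable_tail ha_pos ha_sum j).mul_left _) ha_moment
  intro d
  split
  · next h => exact mul_le_mul_of_nonneg_right (by exact_mod_cast h) (ha_pos d).le
  · next h =>
    simp only [mul_zero]
    exact mul_nonneg (Nat.cast_nonneg d) (ha_pos d).le

lemma sum_tail_le (ha_pos : ∀ i, 0 < a i) (ha_sum : Summable a)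
    (ha_moment : Summable (fun i : ℕ => (i : ℝ) * a i)) (m : ℕ) :
    ∑ j ∈ Finset.Icc 1 m, tail a j ≤ ∑' d : ℕ, (d : ℝ) * a d := by
  have hswap : ∑ j ∈ Finset.Icc 1 m, tail a j
      = ∑' d, ∑ j ∈ Finset.Icc 1 m, (if j ≤ d then a d else 0) :=
    (Summable.tsum_finsetSum (fun j _ => summable_tail ha_pos ha_sum j)).symm
  rw [hswap]
  apply Summable.tsum_le_tsum _ ?_ ha_moment
  · intro d
    have h1 : ∑ j ∈ Finset.Icc 1 m, (if j ≤ d then a d else 0)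
        = ((Finset.Icc 1 m).filter (fun j => j ≤ d)).card * a d := by
      rw [← Finset.sum_filter, Finset.sum_const, nsmul_eq_mul]
    rw [h1]
    have h2 : ((Finset.Icc 1 m).filter (fun j => j ≤ d)).card ≤ d := by
      have : (Finset.Icc 1 m).filter (fun j => j ≤ d) ⊆ Finset.Icc 1 d := by
        intro x hx
        simp only [Finset.mem_filter, Finset.mem_Icc] at *
        omega
      simpa using (Finset.card_le_card this)
    exact mul_le_mul_of_nonneg_right (by exact_mod_cast h2) (ha_pos d).le
  · exact summable_sum (fun j _ => summable_tail ha_pos ha_sum j)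

lemma tail_le_of_ge (ha_pos : ∀ i, 0 < a i) (ha_sum : Summable a)
    (ha_moment : Summable (fun i : ℕ => (i : ℝ) * a i)) {j : ℕ} (hj : 1 ≤ j) :
    tail a j ≤ (∑' d : ℕ, (d : ℝ) * a d) / j := by
  rw [le_div_iff₀ (by positivity : (0:ℝ) < (j:ℝ))]
  calc tail a j * j = (j : ℝ) * tail a j := by ring
    _ ≤ _ := mul_tail_le ha_pos ha_sum ha_moment j

end tails

noncomputable def shiftF (n m : ℕ) (E : Finset ℕ) : Finset ℕ :=
  (Finset.Icc 1 m).filter (fun j => n + j ∈ E)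

lemma lam_split {a : ℕ → ℝ} (n m j : ℕ) (hj1 : 1 ≤ j) (hjm : j ≤ m) (E : Finset ℕ) :
    lam a E (n + j) = lam a (shiftF n m E) j
      + ∑ i ∈ Finset.Icc 1 n, a (n + j - i) * (if i ∈ E then (1:ℝ) else 0) := by
  unfold lam
  have hsplit : Finset.Icc 1 (n + j - 1) = Finset.Icc 1 n ∪ Finset.Icc (n+1) (n+j-1) := by
    ext x; simp only [Finset.mem_Icc, Finset.mem_union]; omega
  have hdisj : Disjoint (Finset.Icc 1 n) (Finset.Icc (n+1) (n+j-1)) := by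
    rw [Finset.disjoint_left]
    intro x hx hx'
    simp only [Finset.mem_Icc] at hx hx'
    omega
  rw [hsplit, Finset.sum_union hdisj]
  have hre : ∑ i ∈ Finset.Icc (n+1) (n+j-1), a (n + j - i) * (if i ∈ E then (1:ℝ) else 0)
      = ∑ i ∈ Finset.Icc 1 (j - 1), a (j - i) * (if i ∈ shiftF n m E then (1:ℝ) else 0) := by
    refine Finset.sum_nbij' (fun i => i - n) (fun i => n + i) ?_ ?_ ?_ ?_ ?_
    · intro i hi; simp only [Finset.mem_Icc] at *; omega
    · intro i hi; simp only [Finset.mem_Icc] at *; omega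
    · intro i hi; simp only [Finset.mem_Icc] at *; omega
    · intro i hi; simp only [Finset.mem_Icc] at *; omega
    · intro i hi
      simp only [Finset.mem_Icc] at hi
      have h1 : n + j - i = j - (i - n) := by omega
      have h2 : (i ∈ E) ↔ ((i - n) ∈ shiftF n m E) := by
        simp only [shiftF, Finset.mem_filter, Finset.mem_Icc]
        constructor
        · intro h
          exact ⟨⟨by omega, by omega⟩, by rwa [show n + (i - n) = i by omega]⟩
        · rintro ⟨_, h⟩
          rwa [show n + (i - n) = i by omega] at h
      rw [h1, if_congr h2 rfl rfl]
  rw [hre]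
  ring

lemma r_nonneg {a : ℕ → ℝ} (ha_pos : ∀ i, 0 < a i) (n j : ℕ) (E : Finset ℕ) :
    0 ≤ ∑ i ∈ Finset.Icc 1 n, a (n + j - i) * (if i ∈ E then (1:ℝ) else 0) := by
  apply Finset.sum_nonneg
  intro i _
  have := (ha_pos (n + j - i)).le
  positivity

lemma r_le_tail {a : ℕ → ℝ} (ha_pos : ∀ i, 0 < a i) (ha_sum : Summable a)
    (n j : ℕ) (hj : 1 ≤ j) (E : Finset ℕ) :
    ∑ i ∈ Finset.Icc 1 n, a (n + j - i) * (if i ∈ E then (1:ℝ) else 0) ≤ tail a j := by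
  have h1 : ∑ i ∈ Finset.Icc 1 n, a (n + j - i) * (if i ∈ E then (1:ℝ) else 0)
      ≤ ∑ i ∈ Finset.Icc 1 n, a (n + j - i) := by
    apply Finset.sum_le_sum
    intro i _
    rcases em (i ∈ E) with h | h <;> simp [h, (ha_pos (n + j - i)).le]
  have h2 : ∑ i ∈ Finset.Icc 1 n, a (n + j - i)
      = ∑ d ∈ Finset.Icc j (n + j - 1), (if j ≤ d then a d else 0) := by
    refine Finset.sum_nbij' (fun i => n + j - i) (fun d => n + j - d) ?_ ?_ ?_ ?_ ?_
    · intro i hi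
      show n + j - i ∈ Finset.Icc j (n + j - 1)
      simp only [Finset.mem_Icc] at *; omega
    · intro i hi
      show n + j - i ∈ Finset.Icc 1 n
      simp only [Finset.mem_Icc] at *; omega
    · intro i hi
      show n + j - (n + j - i) = i
      simp only [Finset.mem_Icc] at hi; omega
    · intro i hi
      show n + j - (n + j - i) = i
      simp only [Finset.mem_Icc] at hi; omega
    · intro i hi
      simp only [Finset.mem_Icc] at hi
      show a (n + j - i) = if j ≤ n + j - i then a (n + j - i) else 0
      rw [if_pos (by omega)]
  have h3 : ∑ d ∈ Finset.Icc j (n + j - 1), (if j ≤ d then a d else 0) ≤ tail a j := by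
    apply Summable.sum_le_tsum _ _ (summable_tail ha_pos ha_sum j)
    intro d _
    split <;> simp [(ha_pos d).le]
  linarith

lemma exp_neg_two_mul_le {x : ℝ} (h0 : 0 ≤ x) (h2 : x ≤ 1/2) : Real.exp (-(2*x)) ≤ 1 - x := by
  have h1 : 1 + 2*x ≤ Real.exp (2*x) := by
    have := Real.add_one_le_exp (2*x); linarith
  have hpos : (0:ℝ) < 1 + 2*x := by linarith
  have h3 : Real.exp (-(2*x)) = 1 / Real.exp (2*x) := by
    rw [Real.exp_neg]; exact (one_div _).symm
  have h4 : 1 / Real.exp (2*x) ≤ 1 / (1 + 2*x) :=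
    one_div_le_one_div_of_le hpos h1
  have h5 : 1 / (1+2*x) ≤ 1 - x := by
    rw [div_le_iff₀ hpos]; nlinarith
  linarith

noncomputable def gam (a : ℕ → ℝ) (K j : ℕ) : ℝ :=
  if j < K then 1 - ∑' i, a i else Real.exp (-(2 / (1 - ∑' i, a i)) * tail a j)

lemma gam_pos {a : ℕ → ℝ} (hS : ∑' i, a i < 1) (K j : ℕ) : 0 < gam a K j := by
  unfold gam; split
  · linarith
  · exact Real.exp_pos _

lemma gam_le_one {a : ℕ → ℝ} (ha_pos : ∀ i, 0 < a i) (ha_sum : Summable a)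
    (hS : ∑' i, a i < 1) (K j : ℕ) : gam a K j ≤ 1 := by
  have h0 : 0 ≤ ∑' i, a i := tsum_nonneg (fun i => (ha_pos i).le)
  unfold gam; split
  · linarith
  · rw [Real.exp_le_one_iff]
    have h1 : 0 ≤ tail a j := tail_nonneg ha_pos ha_sum j
    have h2 : 0 ≤ 2 / (1 - ∑' i, a i) := div_nonneg (by norm_num) (by linarith)
    nlinarith

lemma factor_ge {a : ℕ → ℝ} (ha_pos : ∀ i, 0 < a i) (ha_sum : Summable a)
    (hS : ∑' i, a i < 1) (K : ℕ)
    (hK : ∀ j, K ≤ j → tail a j ≤ (1 - ∑' i, a i)/2)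
    (n m j : ℕ) (hj1 : 1 ≤ j) (hjm : j ≤ m) (E : Finset ℕ) :
    gam a K j * (if j ∈ shiftF n m E then lam a (shiftF n m E) j
        else 1 - lam a (shiftF n m E) j)
      ≤ (if n + j ∈ E then lam a E (n+j) else 1 - lam a E (n+j)) := by
  set S := ∑' i, a i with hSdef
  set F := shiftF n m E with hFdef
  set r := ∑ i ∈ Finset.Icc 1 n, a (n + j - i) * (if i ∈ E then (1:ℝ) else 0) with hrdef
  have hmemiff : j ∈ F ↔ n + j ∈ E := by
    simp only [hFdef, shiftF, Finset.mem_filter, Finset.mem_Icc]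
    constructor
    · rintro ⟨_, h⟩; exact h
    · intro h; exact ⟨⟨hj1, hjm⟩, h⟩
  have hsplit : lam a E (n + j) = lam a F j + r := lam_split n m j hj1 hjm E
  have hr0 : 0 ≤ r := r_nonneg ha_pos n j E
  have hrt : r ≤ tail a j := r_le_tail ha_pos ha_sum n j hj1 E
  have hlamF0 : 0 < lam a F j := lam_pos ha_pos F j
  have hlamFS : lam a F j ≤ S := lam_le ha_pos ha_sum F hj1
  have hlamES : lam a E (n + j) ≤ S := lam_le ha_pos ha_sum E (by omega)
  have hgam1 : gam a K j ≤ 1 := gam_le_one ha_pos ha_sum hS K j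
  by_cases hmem : n + j ∈ E
  · rw [if_pos hmem, if_pos (hmemiff.mpr hmem)]
    calc gam a K j * lam a F j ≤ 1 * lam a F j :=
          mul_le_mul_of_nonneg_right hgam1 hlamF0.le
      _ = lam a F j := one_mul _
      _ ≤ lam a E (n + j) := by rw [hsplit]; linarith
  · rw [if_neg hmem, if_neg (fun h => hmem (hmemiff.mp h))]
    rw [hsplit]
    unfold gam
    split
    · -- j < K : use 1 - S bound
      have h1 : 1 - (lam a F j + r) = 1 - lam a E (n+j) := by rw [hsplit]
      have h2 : 1 - S ≤ 1 - lam a E (n+j) := by linarith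
      have h3 : 1 - lam a F j ≤ 1 := by linarith
      nlinarith
    · next hKj =>
      have hKj' : K ≤ j := by omega
      have htail := hK j hKj'
      have htail0 : 0 ≤ tail a j := tail_nonneg ha_pos ha_sum j
      set x := tail a j / (1 - S) with hxdef
      have hSpos : 0 < 1 - S := by linarith
      have hx0 : 0 ≤ x := by positivity
      have hx2 : x ≤ 1/2 := by
        rw [hxdef, div_le_iff₀ hSpos]; linarith
      have harg : -(2 / (1 - S)) * tail a j = -(2*x) := by
        rw [hxdef]; field_simp
      rw [harg]
      have hexp : Real.exp (-(2*x)) ≤ 1 - x := exp_neg_two_mul_le hx0 hx2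
      have hrx : r ≤ x * (1 - lam a F j) := by
        have h1 : r ≤ x * (1 - S) := by
          rw [hxdef]; field_simp; linarith
        have h2 : x * (1 - S) ≤ x * (1 - lam a F j) :=
          mul_le_mul_of_nonneg_left (by linarith) hx0
        linarith
      have hlamF1 : 1 - lam a F j ≤ 1 := by linarith
      have h0F : 0 ≤ 1 - lam a F j := by linarith
      calc Real.exp (-(2*x)) * (1 - lam a F j) ≤ (1 - x) * (1 - lam a F j) :=
            mul_le_mul_of_nonneg_right hexp h0F
        _ = (1 - lam a F j) - x * (1 - lam a F j) := by ring
        _ ≤ (1 - lam a F j) - r := by linarith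
        _ = 1 - (lam a F j + r) := by ring

lemma fresh_nonneg {a : ℕ → ℝ} (ha_pos : ∀ i, 0 < a i) (ha_sum : Summable a)
    (hS : ∑' i, a i < 1) (F : Finset ℕ) {j : ℕ} (hj : 1 ≤ j) :
    0 ≤ (if j ∈ F then lam a F j else 1 - lam a F j) := by
  split
  · exact (lam_pos ha_pos F j).le
  · have := lam_le ha_pos ha_sum F hj
    linarith

lemma gam_prod_ge {a : ℕ → ℝ} (ha_pos : ∀ i, 0 < a i) (ha_sum : Summable a)
    (ha_moment : Summable (fun i : ℕ => (i : ℝ) * a i))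
    (hS : ∑' i, a i < 1) (K m : ℕ) :
    (1 - ∑' i, a i)^K * Real.exp (-(2 / (1 - ∑' i, a i)) * ∑' d : ℕ, (d:ℝ) * a d)
      ≤ ∏ j ∈ Finset.Icc 1 m, gam a K j := by
  classical
  set S := ∑' i, a i with hSdef
  set B := ∑' d : ℕ, (d:ℝ) * a d with hBdef
  have hS0 : 0 ≤ S := tsum_nonneg (fun i => (ha_pos i).le)
  have hS1 : 0 < 1 - S := by linarith
  have hB0 : 0 ≤ B := tsum_nonneg (fun d => mul_nonneg (Nat.cast_nonneg d) (ha_pos d).le)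
  rw [← Finset.prod_filter_mul_prod_filter_not (Finset.Icc 1 m) (fun j => j < K) (gam a K)]
  have hP1 : (1 - S)^K ≤ ∏ j ∈ (Finset.Icc 1 m).filter (fun j => j < K), gam a K j := by
    have he : ∏ j ∈ (Finset.Icc 1 m).filter (fun j => j < K), gam a K j
        = (1 - S)^(((Finset.Icc 1 m).filter (fun j => j < K)).card) := by
      rw [Finset.prod_congr rfl (fun j hj => ?_), Finset.prod_const]
      rw [Finset.mem_filter] at hj
      unfold gam
      rw [if_pos hj.2]
    rw [he]
    apply pow_le_pow_of_le_one hS1.le (by linarith)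
    calc ((Finset.Icc 1 m).filter (fun j => j < K)).card
        ≤ (Finset.Icc 1 (K-1)).card := by
          apply Finset.card_le_card
          intro x hx
          simp only [Finset.mem_filter, Finset.mem_Icc] at *
          omega
      _ ≤ K := by rw [Nat.card_Icc]; omega
  have hP2 : Real.exp (-(2 / (1 - S)) * B)
      ≤ ∏ j ∈ (Finset.Icc 1 m).filter (fun j => ¬ j < K), gam a K j := by
    have he : ∏ j ∈ (Finset.Icc 1 m).filter (fun j => ¬ j < K), gam a K j
        = Real.exp (∑ j ∈ (Finset.Icc 1 m).filter (fun j => ¬ j < K),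
            (-(2 / (1 - S)) * tail a j)) := by
      rw [Real.exp_sum]
      apply Finset.prod_congr rfl
      intro j hj
      rw [Finset.mem_filter] at hj
      unfold gam
      rw [if_neg hj.2]
    rw [he]
    apply Real.exp_le_exp.mpr
    have hsub : ∑ j ∈ (Finset.Icc 1 m).filter (fun j => ¬ j < K), tail a j
        ≤ ∑ j ∈ Finset.Icc 1 m, tail a j :=
      Finset.sum_le_sum_of_subset_of_nonneg (Finset.filter_subset _ _)
        (fun j _ _ => tail_nonneg ha_pos ha_sum j)
    have htot := sum_tail_le ha_pos ha_sum ha_moment m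
    have hc : 0 ≤ 2 / (1 - S) := div_nonneg (by norm_num) hS1.le
    have heq2 : ∑ j ∈ (Finset.Icc 1 m).filter (fun j => ¬ j < K),
        (-(2 / (1 - S)) * tail a j)
        = -((2 / (1 - S)) * ∑ j ∈ (Finset.Icc 1 m).filter (fun j => ¬ j < K), tail a j) := by
      rw [Finset.mul_sum, ← Finset.sum_neg_distrib]
      apply Finset.sum_congr rfl
      intro j _
      ring
    rw [heq2]
    have h1 : (2 / (1 - S)) * ∑ j ∈ (Finset.Icc 1 m).filter (fun j => ¬ j < K), tail a j
        ≤ (2 / (1 - S)) * B :=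
      mul_le_mul_of_nonneg_left (le_trans hsub htot) hc
    linarith
  calc (1 - S)^K * Real.exp (-(2 / (1 - S)) * B)
      ≤ (∏ j ∈ (Finset.Icc 1 m).filter (fun j => j < K), gam a K j)
        * (∏ j ∈ (Finset.Icc 1 m).filter (fun j => ¬ j < K), gam a K j) :=
        mul_le_mul hP1 hP2 (Real.exp_pos _).le
          (Finset.prod_nonneg (fun j _ => (gam_pos hS K j).le))
    _ = _ := rfl

lemma pd_super {a : ℕ → ℝ} (ha_pos : ∀ i, 0 < a i) (ha_sum : Summable a)
    (ha_moment : Summable (fun i : ℕ => (i : ℝ) * a i))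
    (hS : ∑' i, a i < 1) (K : ℕ)
    (hK : ∀ j, K ≤ j → tail a j ≤ (1 - ∑' i, a i)/2)
    (n m : ℕ) (hn : 1 ≤ n) (hm : 1 ≤ m) (E : Finset ℕ) :
    ((1 - ∑' i, a i)^K * Real.exp (-(2 / (1 - ∑' i, a i)) * ∑' d : ℕ, (d:ℝ) * a d))
      * (pd a n E * pd a m (shiftF n m E)) ≤ pd a (n + m) E := by
  classical
  set S := ∑' i, a i with hSdef
  set c := (1 - S)^K * Real.exp (-(2 / (1 - S)) * ∑' d : ℕ, (d:ℝ) * a d) with hcdef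
  set F := shiftF n m E with hFdef
  have hc0 : 0 < c := by
    apply mul_pos (pow_pos (by linarith) K) (Real.exp_pos _)
  have hpdn0 : 0 ≤ pd a n E := pd_nonneg ha_pos ha_sum hS n E
  have hpdm0 : 0 ≤ pd a m F := pd_nonneg ha_pos ha_sum hS m F
  have hsplit : pd a (n+m) E = pd a n E
      * ∏ k ∈ Finset.Icc (n+1) (n+m), (if k ∈ E then lam a E k else 1 - lam a E k) := by
    unfold pd
    rw [show Finset.Icc 1 (n+m) = Finset.Icc 1 n ∪ Finset.Icc (n+1) (n+m) by
      ext x; simp only [Finset.mem_Icc, Finset.mem_union]; omega]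
    rw [Finset.prod_union (by
      rw [Finset.disjoint_left]
      intro x hx hx'
      simp only [Finset.mem_Icc] at hx hx'
      omega)]
  have hreindex : ∏ k ∈ Finset.Icc (n+1) (n+m), (if k ∈ E then lam a E k else 1 - lam a E k)
      = ∏ j ∈ Finset.Icc 1 m, (if n + j ∈ E then lam a E (n+j) else 1 - lam a E (n+j)) := by
    refine Finset.prod_nbij' (fun k => k - n) (fun j => n + j) ?_ ?_ ?_ ?_ ?_
    · intro k hk
      show k - n ∈ Finset.Icc 1 m
      simp only [Finset.mem_Icc] at *; omega
    · intro j hj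
      show n + j ∈ Finset.Icc (n+1) (n+m)
      simp only [Finset.mem_Icc] at *; omega
    · intro k hk
      show n + (k - n) = k
      simp only [Finset.mem_Icc] at hk; omega
    · intro j hj
      show (n + j) - n = j
      omega
    · intro k hk
      simp only [Finset.mem_Icc] at hk
      show (if k ∈ E then lam a E k else 1 - lam a E k)
        = (if n + (k - n) ∈ E then lam a E (n + (k - n)) else 1 - lam a E (n + (k - n)))
      rw [show n + (k - n) = k by omega]
  have hterm : ∀ j ∈ Finset.Icc 1 m,
      gam a K j * (if j ∈ F then lam a F j else 1 - lam a F j)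
        ≤ (if n + j ∈ E then lam a E (n+j) else 1 - lam a E (n+j)) := by
    intro j hj
    simp only [Finset.mem_Icc] at hj
    exact factor_ge ha_pos ha_sum hS K hK n m j hj.1 hj.2 E
  have hprodmono : ∏ j ∈ Finset.Icc 1 m,
      (gam a K j * (if j ∈ F then lam a F j else 1 - lam a F j))
      ≤ ∏ j ∈ Finset.Icc 1 m, (if n + j ∈ E then lam a E (n+j) else 1 - lam a E (n+j)) := by
    apply Finset.prod_le_prod
    · intro j hj
      simp only [Finset.mem_Icc] at hj
      exact mul_nonneg (gam_pos hS K j).le (fresh_nonneg ha_pos ha_sum hS F hj.1)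
    · exact hterm
  have hfactor : ∏ j ∈ Finset.Icc 1 m,
      (gam a K j * (if j ∈ F then lam a F j else 1 - lam a F j))
      = (∏ j ∈ Finset.Icc 1 m, gam a K j) * pd a m F := by
    rw [Finset.prod_mul_distrib]
    rfl
  have hgam := gam_prod_ge ha_pos ha_sum ha_moment hS K m
  have hkey : c * pd a m F ≤ ∏ j ∈ Finset.Icc 1 m,
      (if n + j ∈ E then lam a E (n+j) else 1 - lam a E (n+j)) := by
    calc c * pd a m F ≤ (∏ j ∈ Finset.Icc 1 m, gam a K j) * pd a m F :=
          mul_le_mul_of_nonneg_right hgam hpdm0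
      _ = ∏ j ∈ Finset.Icc 1 m, (gam a K j * (if j ∈ F then lam a F j else 1 - lam a F j)) :=
          hfactor.symm
      _ ≤ _ := hprodmono
  calc c * (pd a n E * pd a m F) = pd a n E * (c * pd a m F) := by ring
    _ ≤ pd a n E * ∏ j ∈ Finset.Icc 1 m,
        (if n + j ∈ E then lam a E (n+j) else 1 - lam a E (n+j)) :=
        mul_le_mul_of_nonneg_left hkey hpdn0
    _ = pd a (n + m) E := by rw [hsplit, hreindex]

lemma lam_congr {a : ℕ → ℝ} {E E' : Finset ℕ} {k : ℕ}
    (h : ∀ i ∈ Finset.Icc 1 (k-1), (i ∈ E ↔ i ∈ E')) : lam a E k = lam a E' k := by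
  unfold lam
  congr 1
  apply Finset.sum_congr rfl
  intro i hi
  rw [if_congr (h i hi) rfl rfl]

lemma pd_congr {a : ℕ → ℝ} {n : ℕ} {E E' : Finset ℕ}
    (h : ∀ i ∈ Finset.Icc 1 n, (i ∈ E ↔ i ∈ E')) : pd a n E = pd a n E' := by
  unfold pd
  apply Finset.prod_congr rfl
  intro k hk
  have hk' := Finset.mem_Icc.mp hk
  have hl : lam a E k = lam a E' k :=
    lam_congr (fun i hi => h i (by simp only [Finset.mem_Icc] at *; omega))
  rw [hl, if_congr (h k hk) rfl rfl]

lemma pd_filter (a : ℕ → ℝ) (n m : ℕ) {E : Finset ℕ} (hE : E ⊆ Finset.Icc 1 (n+m)) :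
    pd a n (E.filter (fun i => i ≤ n)) = pd a n E := by
  apply pd_congr
  intro i hi
  have hi' := Finset.mem_Icc.mp hi
  simp only [Finset.mem_filter]
  constructor
  · rintro ⟨h, _⟩; exact h
  · intro h; exact ⟨h, hi'.2⟩

lemma card_split (n m : ℕ) {E : Finset ℕ} (hE : E ⊆ Finset.Icc 1 (n+m)) :
    E.card = (E.filter (fun i => i ≤ n)).card
      + ((Finset.Icc 1 m).filter (fun j => n + j ∈ E)).card := by
  classical
  have h1 : (E.filter (fun i => i ≤ n)).card + (E.filter (fun i => ¬ i ≤ n)).card = E.card :=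
    Finset.card_filter_add_card_filter_not _
  have h2 : (E.filter (fun i => ¬ i ≤ n)).card
      = ((Finset.Icc 1 m).filter (fun j => n + j ∈ E)).card := by
    apply Finset.card_nbij' (fun i => i - n) (fun j => n + j)
    · intro i hi
      simp only [Finset.mem_coe] at hi ⊢
      simp only [Finset.mem_filter, Finset.mem_Icc] at *
      have := hE hi.1
      rw [Finset.mem_Icc] at this
      refine ⟨⟨by omega, by omega⟩, ?_⟩
      rw [show n + (i - n) = i by omega]
      exact hi.1
    · intro j hj
      simp only [Finset.mem_coe] at hj ⊢
      simp only [Finset.mem_filter, Finset.mem_Icc] at *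
      exact ⟨hj.2, by omega⟩
    · intro i hi
      simp only [Finset.mem_coe] at hi
      simp only [Finset.mem_filter] at hi
      show n + (i - n) = i
      omega
    · intro j hj
      show (n + j) - n = j
      omega
  omega

open Classical in
lemma sum_powerset_split (n m : ℕ) (t : Finset ℕ → Finset ℕ → ℝ) :
    ∑ E ∈ (Finset.Icc 1 (n+m)).powerset,
        t (E.filter (fun i => i ≤ n)) ((Finset.Icc 1 m).filter (fun j => n + j ∈ E))
      = (∑ A ∈ (Finset.Icc 1 n).powerset, ∑ B ∈ (Finset.Icc 1 m).powerset, t A B) := by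
  rw [← Finset.sum_product']
  refine Finset.sum_nbij'
    (fun E => (E.filter (fun i => i ≤ n), (Finset.Icc 1 m).filter (fun j => n + j ∈ E)))
    (fun p => p.1 ∪ p.2.image (fun j => n + j)) ?_ ?_ ?_ ?_ ?_
  · intro E hE
    rw [Finset.mem_powerset] at hE
    simp only [Finset.mem_product, Finset.mem_powerset]
    constructor
    · intro x hx
      simp only [Finset.mem_filter] at hx
      have := hE hx.1
      rw [Finset.mem_Icc] at this
      rw [Finset.mem_Icc]
      exact ⟨this.1, hx.2⟩
    · exact Finset.filter_subset _ _
  · intro p hp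
    simp only [Finset.mem_product, Finset.mem_powerset] at hp
    rw [Finset.mem_powerset]
    apply Finset.union_subset
    · intro x hx
      have := hp.1 hx
      rw [Finset.mem_Icc] at *
      omega
    · intro x hx
      simp only [Finset.mem_image] at hx
      obtain ⟨j, hj, rfl⟩ := hx
      have := hp.2 hj
      rw [Finset.mem_Icc] at *
      omega
  · intro E hE
    rw [Finset.mem_powerset] at hE
    show (E.filter (fun i => i ≤ n)) ∪
      ((Finset.Icc 1 m).filter (fun j => n + j ∈ E)).image (fun j => n + j) = E
    ext i
    simp only [Finset.mem_union, Finset.mem_filter, Finset.mem_image, Finset.mem_Icc]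
    constructor
    · rintro (⟨hiE, _⟩ | ⟨j, ⟨⟨hj1, hjm⟩, hjE⟩, rfl⟩)
      · exact hiE
      · exact hjE
    · intro hiE
      have := hE hiE
      rw [Finset.mem_Icc] at this
      by_cases hle : i ≤ n
      · exact Or.inl ⟨hiE, hle⟩
      · refine Or.inr ⟨i - n, ⟨⟨by omega, by omega⟩, ?_⟩, by omega⟩
        rwa [show n + (i - n) = i by omega]
  · intro p hp
    simp only [Finset.mem_product, Finset.mem_powerset] at hp
    show ((p.1 ∪ p.2.image (fun j => n + j)).filter (fun i => i ≤ n),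
      (Finset.Icc 1 m).filter (fun j => n + j ∈ p.1 ∪ p.2.image (fun j => n + j))) = p
    have hc1 : (p.1 ∪ p.2.image (fun j => n + j)).filter (fun i => i ≤ n) = p.1 := by
      ext i
      simp only [Finset.mem_filter, Finset.mem_union, Finset.mem_image]
      constructor
      · rintro ⟨hmem | ⟨j, hj, rfl⟩, hle⟩
        · exact hmem
        · have := hp.2 hj
          rw [Finset.mem_Icc] at this
          omega
      · intro h
        have := hp.1 h
        rw [Finset.mem_Icc] at this
        exact ⟨Or.inl h, this.2⟩
    have hc2 : (Finset.Icc 1 m).filter (fun j => n + j ∈ p.1 ∪ p.2.image (fun j => n + j))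
        = p.2 := by
      ext j
      simp only [Finset.mem_filter, Finset.mem_union, Finset.mem_image, Finset.mem_Icc]
      constructor
      · rintro ⟨hj, hmem | ⟨j', hj', hij⟩⟩
        · have := hp.1 hmem
          rw [Finset.mem_Icc] at this
          omega
        · have : j' = j := by omega
          rwa [← this]
      · intro h
        have := hp.2 h
        rw [Finset.mem_Icc] at this
        exact ⟨⟨this.1, this.2⟩, Or.inr ⟨j, h, rfl⟩⟩
    rw [hc1, hc2]
  · intro E hE
    rfl

lemma conc_step {g : ℝ → ℝ} (hg : ConcaveOn ℝ (Set.Icc 0 1) g)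
    {n m kA kB : ℕ} (hn : 1 ≤ n) (hm : 1 ≤ m) (hkA : kA ≤ n) (hkB : kB ≤ m) :
    (n : ℝ) * g (kA / n) + (m : ℝ) * g (kB / m)
      ≤ ((n:ℝ) + m) * g (((kA:ℝ) + kB) / ((n:ℝ) + m)) := by
  have hn0 : (0:ℝ) < n := by exact_mod_cast hn
  have hm0 : (0:ℝ) < m := by exact_mod_cast hm
  have hnm0 : (0:ℝ) < (n:ℝ) + m := by linarith
  have hx : (kA:ℝ)/n ∈ Set.Icc (0:ℝ) 1 :=
    ⟨by positivity, by rw [div_le_one hn0]; exact_mod_cast hkA⟩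
  have hy : (kB:ℝ)/m ∈ Set.Icc (0:ℝ) 1 :=
    ⟨by positivity, by rw [div_le_one hm0]; exact_mod_cast hkB⟩
  have ha : (0:ℝ) ≤ (n:ℝ)/((n:ℝ)+(m:ℝ)) := by positivity
  have hb : (0:ℝ) ≤ (m:ℝ)/((n:ℝ)+(m:ℝ)) := by positivity
  have hab : (n:ℝ)/((n:ℝ)+(m:ℝ)) + (m:ℝ)/((n:ℝ)+(m:ℝ)) = 1 := by
    rw [← add_div, div_self hnm0.ne']
  have h := hg.2 hx hy ha hb hab
  simp only [smul_eq_mul] at h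
  have harg : ((n:ℝ)/((n:ℝ)+(m:ℝ))) * ((kA:ℝ)/(n:ℝ)) + ((m:ℝ)/((n:ℝ)+(m:ℝ))) * ((kB:ℝ)/(m:ℝ))
      = ((kA:ℝ) + (kB:ℝ))/((n:ℝ)+(m:ℝ)) := by
    field_simp
  rw [harg] at h
  calc (n:ℝ) * g ((kA:ℝ)/(n:ℝ)) + (m:ℝ) * g ((kB:ℝ)/(m:ℝ))
      = ((n:ℝ)+(m:ℝ)) * (((n:ℝ)/((n:ℝ)+(m:ℝ))) * g ((kA:ℝ)/(n:ℝ))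
          + ((m:ℝ)/((n:ℝ)+(m:ℝ))) * g ((kB:ℝ)/(m:ℝ))) := by
        field_simp
    _ ≤ ((n:ℝ)+(m:ℝ)) * g (((kA:ℝ) + (kB:ℝ))/((n:ℝ)+(m:ℝ))) :=
        mul_le_mul_of_nonneg_left h hnm0.le

noncomputable def Wfun (a : ℕ → ℝ) (g : ℝ → ℝ) (n : ℕ) : ℝ :=
  ∑ E ∈ (Finset.Icc 1 n).powerset, Real.exp ((n:ℝ) * g ((E.card : ℝ) / n)) * pd a n E

lemma sum_sum_mul (c : ℝ) (s t : Finset (Finset ℕ)) (f h : Finset ℕ → ℝ) :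
    ∑ A ∈ s, ∑ B ∈ t, c * (f A * h B) = c * ((∑ A ∈ s, f A) * (∑ B ∈ t, h B)) := by
  rw [Finset.sum_mul, Finset.mul_sum]
  apply Finset.sum_congr rfl
  intro A _
  calc ∑ B ∈ t, c * (f A * h B) = ∑ B ∈ t, (c * f A) * h B := by
        apply Finset.sum_congr rfl; intros; ring
    _ = (c * f A) * ∑ B ∈ t, h B := by rw [← Finset.mul_sum]
    _ = c * (f A * ∑ B ∈ t, h B) := by ring

end DTHP

open DTHP

theorem dthp_bryc_limit_exists
    {Ω : Type*} [MeasurableSpace Ω] (μ : Measure Ω) [IsProbabilityMeasure μ]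
    (a : ℕ → ℝ) (ξ : ℕ → Ω → ℝ)
    (ha_pos : ∀ i, 0 < a i)
    (ha_sum : Summable a)
    (ha_lt_one : ∑' i, a i < 1)
    (ha_moment : Summable (fun i : ℕ => (i : ℝ) * a i))
    (hmeas : ∀ n, Measurable (ξ n))
    (hval : ∀ n, 1 ≤ n → ∀ ω, ξ n ω = 0 ∨ ξ n ω = 1)
    (hinit : μ {ω | ξ 1 ω = 1} = ENNReal.ofReal (a 0))
    (hcond : ∀ n, 2 ≤ n →
      μ[ξ n | ⨆ i ∈ Finset.Icc 1 (n - 1), MeasurableSpace.comap (ξ i) Real.measurableSpace]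
        =ᵐ[μ] fun ω => a 0 + ∑ i ∈ Finset.Icc 1 (n - 1), a (n - i) * ξ i ω)
    :
    ∀ g : ℝ → ℝ, ContinuousOn g (Set.Icc 0 1) → ConcaveOn ℝ (Set.Icc 0 1) g →
      ∃ Γg : ℝ,
        Tendsto
          (fun n : ℕ =>
            (1 / (n : ℝ)) *
              Real.log (∫ ω, Real.exp (n * g ((∑ i ∈ Finset.Icc 1 n, ξ i ω) / n)) ∂μ))
          atTop (𝓝 Γg) := by
  intro g hg_cont hg_conc
  classical
  have hS0 : 0 ≤ ∑' i, a i := tsum_nonneg fun i => (ha_pos i).le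
  have hS1 : (0:ℝ) < 1 - ∑' i, a i := by linarith
  have hB0 : 0 ≤ ∑' d : ℕ, (d:ℝ) * a d :=
    tsum_nonneg fun d => mul_nonneg (Nat.cast_nonneg d) (ha_pos d).le
  set K := Nat.ceil (2 * (∑' d : ℕ, (d:ℝ) * a d) / (1 - ∑' i, a i)) + 1 with hKdef
  have hK : ∀ j, K ≤ j → tail a j ≤ (1 - ∑' i, a i)/2 := by
    intro j hj
    have hj1 : 1 ≤ j := le_trans (by omega) hj
    have ht := tail_le_of_ge ha_pos ha_sum ha_moment hj1
    have hj0 : (0:ℝ) < j := by exact_mod_cast hj1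
    have hjR : 2 * (∑' d : ℕ, (d:ℝ) * a d) / (1 - ∑' i, a i) ≤ (j:ℝ) := by
      calc 2 * (∑' d : ℕ, (d:ℝ) * a d) / (1 - ∑' i, a i)
          ≤ (Nat.ceil (2 * (∑' d : ℕ, (d:ℝ) * a d) / (1 - ∑' i, a i)) : ℝ) := Nat.le_ceil _
        _ ≤ (j:ℝ) := by exact_mod_cast (by omega : Nat.ceil
            (2 * (∑' d : ℕ, (d:ℝ) * a d) / (1 - ∑' i, a i)) ≤ j)
    have h2 : 2 * (∑' d : ℕ, (d:ℝ) * a d) ≤ (j:ℝ) * (1 - ∑' i, a i) :=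
      (div_le_iff₀ hS1).mp hjR
    have h3 : (∑' d : ℕ, (d:ℝ) * a d) / (j:ℝ) ≤ (1 - ∑' i, a i)/2 := by
      rw [div_le_div_iff₀ hj0 (by norm_num : (0:ℝ) < 2)]
      nlinarith
    linarith
  set c := (1 - ∑' i, a i)^K * Real.exp (-(2 / (1 - ∑' i, a i)) * ∑' d : ℕ, (d:ℝ) * a d)
    with hcdef
  have hc0 : 0 < c := mul_pos (pow_pos hS1 K) (Real.exp_pos _)
  have hc1 : c ≤ 1 := by
    have h1 : (1 - ∑' i, a i)^K ≤ 1 := pow_le_one₀ hS1.le (by linarith)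
    have h2 : Real.exp (-(2 / (1 - ∑' i, a i)) * ∑' d : ℕ, (d:ℝ) * a d) ≤ 1 := by
      rw [Real.exp_le_one_iff]
      have h3 : 0 ≤ 2 / (1 - ∑' i, a i) * ∑' d : ℕ, (d:ℝ) * a d :=
        mul_nonneg (div_nonneg (by norm_num) hS1.le) hB0
      nlinarith
    calc c ≤ 1 * Real.exp (-(2 / (1 - ∑' i, a i)) * ∑' d : ℕ, (d:ℝ) * a d) := by
          rw [hcdef]
          exact mul_le_mul_of_nonneg_right h1 (Real.exp_pos _).le
      _ ≤ 1 := by rw [one_mul]; exact h2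
  set C := -Real.log c with hCdef
  have hC0 : 0 ≤ C := by
    have := Real.log_nonpos hc0.le hc1
    rw [hCdef]; linarith
  obtain ⟨xM, hxM_mem, hxM⟩ := (isCompact_Icc : IsCompact (Set.Icc (0:ℝ) 1)).exists_isMaxOn
    (Set.nonempty_Icc.mpr (by norm_num)) hg_cont
  obtain ⟨x0, hx0_mem, hx0⟩ := (isCompact_Icc : IsCompact (Set.Icc (0:ℝ) 1)).exists_isMinOn
    (Set.nonempty_Icc.mpr (by norm_num)) hg_cont
  have hgM : ∀ x ∈ Set.Icc (0:ℝ) 1, g x ≤ g xM := fun x hx => hxM hx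
  have hgm : ∀ x ∈ Set.Icc (0:ℝ) 1, g x0 ≤ g x := fun x hx => hx0 hx
  -- identification of the integral with Wfun
  have hWV : ∀ n : ℕ,
      (∫ ω, Real.exp ((n:ℝ) * g ((∑ i ∈ Finset.Icc 1 n, ξ i ω) / n)) ∂μ) = Wfun a g n := by
    intro n
    refine (integral_eq_sum (μ := μ) hmeas hval n
      (fun x => Real.exp ((n:ℝ) * g (x / n)))).trans ?_
    unfold Wfun
    apply Finset.sum_congr rfl
    intro E _
    rw [measure_cyl ha_pos ha_sum ha_lt_one hmeas hval hinit hcond n E,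
      ENNReal.toReal_ofReal (pd_nonneg ha_pos ha_sum ha_lt_one n E)]
  have hsum_pd : ∀ n : ℕ, ∑ E ∈ (Finset.Icc 1 n).powerset, pd a n E = 1 := by
    intro n
    have h := integral_eq_sum (μ := μ) hmeas hval n (fun _ => (1:ℝ))
    have h2 : (∫ _ω, (1:ℝ) ∂μ) = 1 := by simp
    calc ∑ E ∈ (Finset.Icc 1 n).powerset, pd a n E
        = ∑ E ∈ (Finset.Icc 1 n).powerset, (1:ℝ) * (μ (cyl ξ n E)).toReal := by
          apply Finset.sum_congr rfl
          intro E _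
          rw [one_mul, measure_cyl ha_pos ha_sum ha_lt_one hmeas hval hinit hcond n E,
            ENNReal.toReal_ofReal (pd_nonneg ha_pos ha_sum ha_lt_one n E)]
      _ = 1 := by rw [← h, h2]
  have hcard_mem : ∀ n : ℕ, 1 ≤ n → ∀ E ∈ (Finset.Icc 1 n).powerset,
      (E.card : ℝ)/n ∈ Set.Icc (0:ℝ) 1 := by
    intro n hn E hE
    have hc : E.card ≤ n := by
      calc E.card ≤ (Finset.Icc 1 n).card := Finset.card_le_card (Finset.mem_powerset.mp hE)
        _ = n := by rw [Nat.card_Icc]; omega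
    have hn0 : (0:ℝ) < n := by exact_mod_cast hn
    constructor
    · positivity
    · rw [div_le_one hn0]; exact_mod_cast hc
  have hW_le : ∀ n : ℕ, 1 ≤ n → Wfun a g n ≤ Real.exp ((n:ℝ) * g xM) := by
    intro n hn
    calc Wfun a g n ≤ ∑ E ∈ (Finset.Icc 1 n).powerset, Real.exp ((n:ℝ) * g xM) * pd a n E := by
          unfold Wfun
          apply Finset.sum_le_sum
          intro E hE
          apply mul_le_mul_of_nonneg_right _ (pd_nonneg ha_pos ha_sum ha_lt_one n E)
          apply Real.exp_le_exp.mpr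
          exact mul_le_mul_of_nonneg_left (hgM _ (hcard_mem n hn E hE)) (Nat.cast_nonneg n)
      _ = Real.exp ((n:ℝ) * g xM) := by rw [← Finset.mul_sum, hsum_pd n, mul_one]
  have hW_ge : ∀ n : ℕ, 1 ≤ n → Real.exp ((n:ℝ) * g x0) ≤ Wfun a g n := by
    intro n hn
    calc Real.exp ((n:ℝ) * g x0)
        = ∑ E ∈ (Finset.Icc 1 n).powerset, Real.exp ((n:ℝ) * g x0) * pd a n E := by
          rw [← Finset.mul_sum, hsum_pd n, mul_one]
      _ ≤ Wfun a g n := by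
          unfold Wfun
          apply Finset.sum_le_sum
          intro E hE
          apply mul_le_mul_of_nonneg_right _ (pd_nonneg ha_pos ha_sum ha_lt_one n E)
          apply Real.exp_le_exp.mpr
          exact mul_le_mul_of_nonneg_left (hgm _ (hcard_mem n hn E hE)) (Nat.cast_nonneg n)
  have hW_pos : ∀ n : ℕ, 1 ≤ n → 0 < Wfun a g n :=
    fun n hn => lt_of_lt_of_le (Real.exp_pos _) (hW_ge n hn)
  have hsuper : ∀ p q : ℕ, 1 ≤ p → 1 ≤ q →
      c * (Wfun a g p * Wfun a g q) ≤ Wfun a g (p + q) := by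
    intro p q hp hq
    have key : ∀ E ∈ (Finset.Icc 1 (p+q)).powerset,
        c * ((Real.exp ((p:ℝ) * g (((E.filter (fun i => i ≤ p)).card : ℝ) / p))
            * pd a p (E.filter (fun i => i ≤ p)))
          * (Real.exp ((q:ℝ) * g ((((Finset.Icc 1 q).filter (fun j => p + j ∈ E)).card : ℝ) / q))
            * pd a q ((Finset.Icc 1 q).filter (fun j => p + j ∈ E))))
        ≤ Real.exp (((p+q : ℕ):ℝ) * g ((E.card : ℝ) / ((p+q:ℕ):ℝ))) * pd a (p+q) E := by
      intro E hE
      have hEsub := Finset.mem_powerset.mp hE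
      have hkA : (E.filter (fun i => i ≤ p)).card ≤ p := by
        have hApq : E.filter (fun i => i ≤ p) ⊆ Finset.Icc 1 p := by
          intro i hi
          simp only [Finset.mem_filter] at hi
          have h' := hEsub hi.1
          rw [Finset.mem_Icc] at h' ⊢
          exact ⟨h'.1, hi.2⟩
        calc (E.filter (fun i => i ≤ p)).card ≤ (Finset.Icc 1 p).card :=
              Finset.card_le_card hApq
          _ = p := by rw [Nat.card_Icc]; omega
      have hkB : ((Finset.Icc 1 q).filter (fun j => p + j ∈ E)).card ≤ q := by
        calc ((Finset.Icc 1 q).filter (fun j => p + j ∈ E)).card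
            ≤ (Finset.Icc 1 q).card := Finset.card_le_card (Finset.filter_subset _ _)
          _ = q := by rw [Nat.card_Icc]; omega
      have hcardE : E.card = (E.filter (fun i => i ≤ p)).card
          + ((Finset.Icc 1 q).filter (fun j => p + j ∈ E)).card := card_split p q hEsub
      have hpdsup := pd_super ha_pos ha_sum ha_moment ha_lt_one K hK p q hp hq E
      have hpdE : pd a p (E.filter (fun i => i ≤ p)) = pd a p E := pd_filter a p q hEsub
      have hshift : shiftF p q E = (Finset.Icc 1 q).filter (fun j => p + j ∈ E) := rfl
      rw [hshift] at hpdsup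
      have hexp : Real.exp ((p:ℝ) * g (((E.filter (fun i => i ≤ p)).card : ℝ)/p))
          * Real.exp ((q:ℝ) * g ((((Finset.Icc 1 q).filter (fun j => p + j ∈ E)).card : ℝ)/q))
          ≤ Real.exp (((p+q:ℕ):ℝ) * g ((E.card:ℝ)/((p+q:ℕ):ℝ))) := by
        rw [← Real.exp_add]
        apply Real.exp_le_exp.mpr
        have hcast : ((p+q:ℕ):ℝ) = (p:ℝ) + (q:ℝ) := by push_cast; ring
        have hcastE : (E.card : ℝ) = ((E.filter (fun i => i ≤ p)).card : ℝ)
            + (((Finset.Icc 1 q).filter (fun j => p + j ∈ E)).card : ℝ) := by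
          rw [hcardE]; push_cast; ring
        rw [hcast, hcastE]
        exact conc_step hg_conc hp hq hkA hkB
      have hpd0 : 0 ≤ pd a p (E.filter (fun i => i ≤ p)) :=
        pd_nonneg ha_pos ha_sum ha_lt_one p _
      have hpd0B : 0 ≤ pd a q ((Finset.Icc 1 q).filter (fun j => p + j ∈ E)) :=
        pd_nonneg ha_pos ha_sum ha_lt_one q _
      have hstep : c * (pd a p (E.filter (fun i => i ≤ p))
          * pd a q ((Finset.Icc 1 q).filter (fun j => p + j ∈ E))) ≤ pd a (p+q) E := by
        rw [hpdE, hcdef]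
        exact hpdsup
      calc c * ((Real.exp ((p:ℝ) * g (((E.filter (fun i => i ≤ p)).card : ℝ) / p))
            * pd a p (E.filter (fun i => i ≤ p)))
          * (Real.exp ((q:ℝ) * g ((((Finset.Icc 1 q).filter (fun j => p + j ∈ E)).card : ℝ) / q))
            * pd a q ((Finset.Icc 1 q).filter (fun j => p + j ∈ E))))
          = (Real.exp ((p:ℝ) * g (((E.filter (fun i => i ≤ p)).card : ℝ) / p))
            * Real.exp ((q:ℝ) * g ((((Finset.Icc 1 q).filter (fun j => p + j ∈ E)).card : ℝ) / q)))
            * (c * (pd a p (E.filter (fun i => i ≤ p))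
              * pd a q ((Finset.Icc 1 q).filter (fun j => p + j ∈ E)))) := by ring
        _ ≤ (Real.exp ((p:ℝ) * g (((E.filter (fun i => i ≤ p)).card : ℝ) / p))
            * Real.exp ((q:ℝ) * g ((((Finset.Icc 1 q).filter (fun j => p + j ∈ E)).card : ℝ) / q)))
            * pd a (p+q) E :=
            mul_le_mul_of_nonneg_left hstep
              (mul_pos (Real.exp_pos _) (Real.exp_pos _)).le
        _ ≤ Real.exp (((p+q : ℕ):ℝ) * g ((E.card : ℝ) / ((p+q:ℕ):ℝ))) * pd a (p+q) E :=
            mul_le_mul_of_nonneg_right hexp (pd_nonneg ha_pos ha_sum ha_lt_one (p+q) E)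
    calc c * (Wfun a g p * Wfun a g q)
        = ∑ A ∈ (Finset.Icc 1 p).powerset, ∑ B ∈ (Finset.Icc 1 q).powerset,
            c * ((Real.exp ((p:ℝ) * g ((A.card:ℝ)/p)) * pd a p A)
              * (Real.exp ((q:ℝ) * g ((B.card:ℝ)/q)) * pd a q B)) :=
          (sum_sum_mul c _ _ _ _).symm
      _ = ∑ E ∈ (Finset.Icc 1 (p+q)).powerset,
            c * ((Real.exp ((p:ℝ) * g (((E.filter (fun i => i ≤ p)).card : ℝ) / p))
              * pd a p (E.filter (fun i => i ≤ p)))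
            * (Real.exp ((q:ℝ) * g ((((Finset.Icc 1 q).filter (fun j => p + j ∈ E)).card : ℝ) / q))
              * pd a q ((Finset.Icc 1 q).filter (fun j => p + j ∈ E)))) :=
          (sum_powerset_split p q (fun A B =>
            c * ((Real.exp ((p:ℝ) * g ((A.card:ℝ)/p)) * pd a p A)
              * (Real.exp ((q:ℝ) * g ((B.card:ℝ)/q)) * pd a q B)))).symm
      _ ≤ ∑ E ∈ (Finset.Icc 1 (p+q)).powerset,
            Real.exp (((p+q : ℕ):ℝ) * g ((E.card : ℝ) / ((p+q:ℕ):ℝ))) * pd a (p+q) E :=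
          Finset.sum_le_sum key
      _ = Wfun a g (p + q) := rfl
  -- Fekete's lemma
  set u : ℕ → ℝ := fun k => if k = 0 then C else C - Real.log (Wfun a g k) with hudef
  have hu0 : u 0 = C := by rw [hudef]; simp
  have hun : ∀ n : ℕ, n ≠ 0 → u n = C - Real.log (Wfun a g n) := by
    intro n hn
    rw [hudef]
    simp only [if_neg hn]
  have hsub : Subadditive u := by
    intro p q
    by_cases hp : p = 0
    · subst hp
      rw [zero_add, hu0]
      linarith
    · by_cases hq : q = 0
      · subst hq
        rw [add_zero, hu0]
        linarith
      · have hp1 : 1 ≤ p := Nat.one_le_iff_ne_zero.mpr hp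
        have hq1 : 1 ≤ q := Nat.one_le_iff_ne_zero.mpr hq
        have hWp := hW_pos p hp1
        have hWq := hW_pos q hq1
        have hWpq := hW_pos (p+q) (by omega)
        have h := hsuper p q hp1 hq1
        have hlog : Real.log c + (Real.log (Wfun a g p) + Real.log (Wfun a g q))
            ≤ Real.log (Wfun a g (p+q)) := by
          calc Real.log c + (Real.log (Wfun a g p) + Real.log (Wfun a g q))
              = Real.log (c * (Wfun a g p * Wfun a g q)) := by
                rw [Real.log_mul hc0.ne' (mul_pos hWp hWq).ne',
                  Real.log_mul hWp.ne' hWq.ne']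
            _ ≤ Real.log (Wfun a g (p+q)) :=
                Real.log_le_log (mul_pos hc0 (mul_pos hWp hWq)) h
        rw [hun p hp, hun q hq, hun (p+q) (by omega)]
        rw [hCdef] at *
        linarith
  have hbdd : BddBelow (Set.range fun n : ℕ => u n / n) := by
    refine ⟨min (-(g xM)) 0, ?_⟩
    rintro x ⟨n, rfl⟩
    by_cases hn : n = 0
    · subst hn
      simp only [Nat.cast_zero, div_zero]
      exact min_le_right _ _
    · have hn1 : 1 ≤ n := Nat.one_le_iff_ne_zero.mpr hn
      have hWn := hW_pos n hn1
      have hn0 : (0:ℝ) < n := by exact_mod_cast hn1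
      have hlogle : Real.log (Wfun a g n) ≤ (n:ℝ) * g xM := by
        calc Real.log (Wfun a g n) ≤ Real.log (Real.exp ((n:ℝ) * g xM)) :=
              Real.log_le_log hWn (hW_le n hn1)
          _ = (n:ℝ) * g xM := Real.log_exp _
      have hstep : -(g xM) ≤ u n / n := by
        rw [hun n hn, le_div_iff₀ hn0]
        nlinarith
      calc min (-(g xM)) 0 ≤ -(g xM) := min_le_left _ _
        _ ≤ u n / n := hstep
  have hlim := hsub.tendsto_lim hbdd
  refine ⟨-hsub.lim, ?_⟩
  have hCn : Tendsto (fun n : ℕ => C / n) atTop (𝓝 0) := tendsto_const_div_atTop_nhds_zero_nat C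
  have h2 : Tendsto (fun n : ℕ => C / n - u n / n) atTop (𝓝 (0 - hsub.lim)) := hCn.sub hlim
  rw [zero_sub] at h2
  refine h2.congr' ?_
  filter_upwards [eventually_ge_atTop 1] with n hn
  have hne : n ≠ 0 := by omega
  have hn0 : ((n:ℝ)) ≠ 0 := Nat.cast_ne_zero.mpr hne
  rw [hWV n, hun n hne]
  field_simp
  ring
end

section
/- For every t ∈ ℝ, the scaled logarithmic moment generating functions converge pointwise: the limit Γ(t) = lim_{n→∞} (1/n) log 𝔼(e^{t H_n}) exists (as a finite real number). -/
open MeasureTheory Filter Topology Set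

namespace DTHPaux

/-- intensity at step n+1 given baseline b and configuration s ⊆ Icc 1 n -/
def Q (a : ℕ → ℝ) (n : ℕ) (b : ℕ → ℝ) (s : Finset ℕ) : ℝ :=
  b (n+1) + ∑ i ∈ Finset.Icc 1 n, if i ∈ s then a (n+1-i) else 0

/-- weight of configuration s in the length-n process with baseline b -/
def W (a : ℕ → ℝ) : ℕ → (ℕ → ℝ) → Finset ℕ → ℝ
  | 0, _, s => if s = ∅ then 1 else 0
  | (n+1), b, s => W a n b (s.erase (n+1)) *
      (if n+1 ∈ s then Q a n b (s.erase (n+1)) else 1 - Q a n b (s.erase (n+1)))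

/-- MGF (θ = e^t) of the length-m process with baseline b, first-step recursion -/
def G (a : ℕ → ℝ) (θ : ℝ) : ℕ → (ℕ → ℝ) → ℝ
  | 0, _ => 1
  | (m+1), b => (1 - b 1) * G a θ m (fun j => b (j+1)) +
      b 1 * θ * G a θ m (fun j => b (j+1) + a j)

def shiftb (a : ℕ → ℝ) (n : ℕ) (b : ℕ → ℝ) (s : Finset ℕ) : ℕ → ℝ :=
  fun j => b (n + j) + ∑ i ∈ Finset.Icc 1 n, if i ∈ s then a (n + j - i) else 0

/-- valid baselines -/
def Vb (a : ℕ → ℝ) (b : ℕ → ℝ) : Prop :=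
  ∀ k, 1 ≤ k → a 0 ≤ b k ∧ b k + ∑ i ∈ Finset.Icc 1 (k-1), a i ≤ ∑' i, a i

variable {a : ℕ → ℝ} (hpos : ∀ i, 0 < a i) (hsum : Summable a) (hlt : ∑' i, a i < 1)

lemma sum_reflect (g : ℕ → ℝ) (n k : ℕ) (hk : 1 ≤ k) :
    ∑ i ∈ Finset.Icc 1 n, g (n + k - i) = ∑ j ∈ Finset.Icc k (n + k - 1), g j := by
  refine Finset.sum_nbij' (fun i => n + k - i) (fun j => n + k - j) ?_ ?_ ?_ ?_ ?_ <;>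
    intro x hx <;> simp only [Finset.mem_Icc] at * <;> omega

lemma sum_Icc_split (g : ℕ → ℝ) {k K : ℕ} (hk : 1 ≤ k) (hK : k - 1 ≤ K) :
    ∑ i ∈ Finset.Icc 1 (k-1), g i + ∑ i ∈ Finset.Icc k K, g i = ∑ i ∈ Finset.Icc 1 K, g i := by
  have h1 : Finset.Icc 1 (k-1) = Finset.Ioc 0 (k-1) := Finset.Icc_add_one_left_eq_Ioc 0 (k-1)
  have h2 : Finset.Icc k K = Finset.Ioc (k-1) K := by
    rw [← Finset.Icc_add_one_left_eq_Ioc]; congr 1; omega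
  have h3 : Finset.Icc 1 K = Finset.Ioc 0 K := Finset.Icc_add_one_left_eq_Ioc 0 K
  rw [h1, h2, h3]
  exact Finset.sum_Ioc_consecutive g (by omega) (by omega)

include hpos hsum in
lemma sum_Icc_zero_le_tsum (K : ℕ) : ∑ i ∈ Finset.Icc 0 K, a i ≤ ∑' i, a i :=
  Summable.sum_le_tsum _ (fun i _ => (hpos i).le) hsum

lemma Icc_zero_eq (K : ℕ) : Finset.Icc 0 K = insert 0 (Finset.Icc 1 K) := by
  ext x; simp only [Finset.mem_Icc, Finset.mem_insert]; omega

include hpos hsum in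
lemma Vb_const : Vb a (fun _ => a 0) := by
  intro k hk
  refine ⟨le_refl _, ?_⟩
  have h : a 0 + ∑ i ∈ Finset.Icc 1 (k-1), a i = ∑ i ∈ Finset.Icc 0 (k-1), a i := by
    rw [Icc_zero_eq, Finset.sum_insert (by simp)]
  rw [h]; exact sum_Icc_zero_le_tsum hpos hsum _

include hpos hsum in
lemma Vb_shift0 {b : ℕ → ℝ} (hb : Vb a b) : Vb a (fun j => b (j+1)) := by
  intro k hk
  obtain ⟨h1, h2⟩ := hb (k+1) (by omega)
  refine ⟨h1, ?_⟩
  calc b (k+1) + ∑ i ∈ Finset.Icc 1 (k-1), a i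
      ≤ b (k+1) + ∑ i ∈ Finset.Icc 1 ((k+1)-1), a i := by
        have := Finset.sum_le_sum_of_subset_of_nonneg
          (show Finset.Icc 1 (k-1) ⊆ Finset.Icc 1 ((k+1)-1) from
            Finset.Icc_subset_Icc_right (by omega))
          (fun i _ _ => (hpos i).le)
        linarith
    _ ≤ ∑' i, a i := h2

include hpos hsum in
lemma Vb_shift1 {b : ℕ → ℝ} (hb : Vb a b) : Vb a (fun j => b (j+1) + a j) := by
  intro k hk
  obtain ⟨h1, h2⟩ := hb (k+1) (by omega)
  constructor
  · show a 0 ≤ b (k+1) + a k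
    linarith [(hpos k).le]
  · have hsplit : ∑ i ∈ Finset.Icc 1 (k-1), a i + a k = ∑ i ∈ Finset.Icc 1 k, a i := by
      have : Finset.Icc 1 k = insert k (Finset.Icc 1 (k-1)) := by
        ext x; simp only [Finset.mem_Icc, Finset.mem_insert]; omega
      rw [this, Finset.sum_insert (by simp only [Finset.mem_Icc]; omega)]; ring
    have : b (k+1) + a k + ∑ i ∈ Finset.Icc 1 (k-1), a i
        = b (k+1) + ∑ i ∈ Finset.Icc 1 ((k+1)-1), a i := by
      simp only [Nat.add_sub_cancel]; rw [← hsplit]; ring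
    rw [this]; exact h2

include hpos hsum hlt in
lemma Vb_b1 {b : ℕ → ℝ} (hb : Vb a b) : a 0 ≤ b 1 ∧ b 1 < 1 := by
  obtain ⟨h1, h2⟩ := hb 1 le_rfl
  simp only [Nat.sub_self, Finset.Icc_self] at h2
  have : Finset.Icc 1 0 = (∅ : Finset ℕ) := by simp
  constructor
  · exact h1
  · have h2' : b 1 + ∑ i ∈ Finset.Icc 1 (1-1), a i ≤ ∑' i, a i := (hb 1 le_rfl).2
    simp only [show (1:ℕ)-1 = 0 from rfl, this] at h2'
    simp only [Finset.sum_empty, add_zero] at h2'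
    linarith

include hpos hsum hlt in
lemma G_bounds {θ : ℝ} (hθ : 0 < θ) : ∀ m (b : ℕ → ℝ), Vb a b →
    min 1 θ ^ m ≤ G a θ m b ∧ G a θ m b ≤ max 1 θ ^ m := by
  intro m
  induction m with
  | zero => intro b hb; simp [G]
  | succ m ih =>
    intro b hb
    obtain ⟨hp0, hp1⟩ := Vb_b1 hpos hsum hlt hb
    have ha0 := hpos 0
    obtain ⟨l0, u0⟩ := ih _ (Vb_shift0 hpos hsum hb)
    obtain ⟨l1, u1⟩ := ih _ (Vb_shift1 hpos hsum hb)
    have hminpos : (0:ℝ) < min 1 θ := lt_min one_pos hθ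
    have hminle : min 1 θ ≤ 1 := min_le_left _ _
    have hminleθ : min 1 θ ≤ θ := min_le_right _ _
    have hmaxge : (1:ℝ) ≤ max 1 θ := le_max_left _ _
    have hmaxgeθ : θ ≤ max 1 θ := le_max_right _ _
    have hmp : (0:ℝ) < min 1 θ ^ m := pow_pos hminpos m
    have hMp : (0:ℝ) < max 1 θ ^ m := pow_pos (by linarith) m
    have hb1 : 0 < b 1 := lt_of_lt_of_le ha0 hp0
    have hmix : min 1 θ ≤ 1 - b 1 + b 1 * θ := by
      rcases le_total 1 θ with h | h
      · rw [min_eq_left h]; nlinarith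
      · rw [min_eq_right h]; nlinarith
    have hmix' : 1 - b 1 + b 1 * θ ≤ max 1 θ := by
      rcases le_total 1 θ with h | h
      · rw [max_eq_right h]; nlinarith
      · rw [max_eq_left h]; nlinarith
    simp only [G, pow_succ]
    constructor
    · nlinarith [mul_le_mul_of_nonneg_left l0 (by linarith : (0:ℝ) ≤ 1 - b 1),
        mul_le_mul_of_nonneg_left l1 (by nlinarith : (0:ℝ) ≤ b 1 * θ),
        mul_le_mul_of_nonneg_left hmix hmp.le]
    · nlinarith [mul_le_mul_of_nonneg_left u0 (by linarith : (0:ℝ) ≤ 1 - b 1),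
        mul_le_mul_of_nonneg_left u1 (by nlinarith : (0:ℝ) ≤ b 1 * θ),
        mul_le_mul_of_nonneg_left hmix' hMp.le]

include hpos hsum hlt in
lemma G_pos {θ : ℝ} (hθ : 0 < θ) (m : ℕ) (b : ℕ → ℝ) (hb : Vb a b) : 0 < G a θ m b :=
  lt_of_lt_of_le (pow_pos (lt_min one_pos hθ) m) (G_bounds hpos hsum hlt hθ m b hb).1

include hpos hsum hlt in
lemma G_mono {θ : ℝ} (hθ : 1 ≤ θ) : ∀ m (b b' : ℕ → ℝ), Vb a b → Vb a b' →
    (∀ k, 1 ≤ k → b k ≤ b' k) → G a θ m b ≤ G a θ m b' := by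
  have hθ0 : 0 < θ := by linarith
  intro m
  induction m with
  | zero => intro b b' _ _ _; simp [G]
  | succ m ih =>
    intro b b' hb hb' hle
    have hb0 := Vb_shift0 hpos hsum hb
    have hb1 := Vb_shift1 hpos hsum hb
    have hb'0 := Vb_shift0 hpos hsum hb'
    have hb'1 := Vb_shift1 hpos hsum hb'
    have h00 : G a θ m (fun j => b (j+1)) ≤ G a θ m (fun j => b' (j+1)) :=
      ih _ _ hb0 hb'0 (fun k hk => hle (k+1) (by omega))
    have h11 : G a θ m (fun j => b (j+1) + a j) ≤ G a θ m (fun j => b' (j+1) + a j) :=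
      ih _ _ hb1 hb'1 (fun k hk => by have := hle (k+1) (by omega); linarith)
    have h01 : G a θ m (fun j => b' (j+1)) ≤ G a θ m (fun j => b' (j+1) + a j) :=
      ih _ _ hb'0 hb'1 (fun k hk => by have := (hpos k).le; linarith)
    have hGpos : 0 < G a θ m (fun j => b' (j+1)) := G_pos hpos hsum hlt hθ0 m _ hb'0
    obtain ⟨hbl, hbu⟩ := Vb_b1 hpos hsum hlt hb
    obtain ⟨hbl', hbu'⟩ := Vb_b1 hpos hsum hlt hb'
    have hpp : b 1 ≤ b' 1 := hle 1 le_rfl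
    have ha0 := hpos 0
    have hG1pos : 0 < G a θ m (fun j => b' (j+1) + a j) := G_pos hpos hsum hlt hθ0 m _ hb'1
    simp only [G]
    have key : G a θ m (fun j => b' (j+1)) ≤ θ * G a θ m (fun j => b' (j+1) + a j) := by
      calc G a θ m (fun j => b' (j+1)) ≤ G a θ m (fun j => b' (j+1) + a j) := h01
        _ ≤ θ * G a θ m (fun j => b' (j+1) + a j) := by nlinarith
    nlinarith [mul_le_mul_of_nonneg_left h00 (by linarith : (0:ℝ) ≤ 1 - b 1),
      mul_le_mul_of_nonneg_left h11 (by nlinarith : (0:ℝ) ≤ b 1 * θ),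
      mul_nonneg (sub_nonneg.2 hpp) (sub_nonneg.2 key)]

include hpos hsum hlt in
lemma G_anti {θ : ℝ} (hθ0 : 0 < θ) (hθ : θ ≤ 1) : ∀ m (b b' : ℕ → ℝ), Vb a b → Vb a b' →
    (∀ k, 1 ≤ k → b k ≤ b' k) → G a θ m b' ≤ G a θ m b := by
  intro m
  induction m with
  | zero => intro b b' _ _ _; simp [G]
  | succ m ih =>
    intro b b' hb hb' hle
    have hb0 := Vb_shift0 hpos hsum hb
    have hb1 := Vb_shift1 hpos hsum hb
    have hb'0 := Vb_shift0 hpos hsum hb'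
    have hb'1 := Vb_shift1 hpos hsum hb'
    have h00 : G a θ m (fun j => b' (j+1)) ≤ G a θ m (fun j => b (j+1)) :=
      ih _ _ hb0 hb'0 (fun k hk => hle (k+1) (by omega))
    have h11 : G a θ m (fun j => b' (j+1) + a j) ≤ G a θ m (fun j => b (j+1) + a j) :=
      ih _ _ hb1 hb'1 (fun k hk => by have := hle (k+1) (by omega); linarith)
    have h01 : G a θ m (fun j => b (j+1) + a j) ≤ G a θ m (fun j => b (j+1)) :=
      ih _ _ hb0 hb1 (fun k hk => by have := (hpos k).le; linarith)
    obtain ⟨hbl, hbu⟩ := Vb_b1 hpos hsum hlt hb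
    obtain ⟨hbl', hbu'⟩ := Vb_b1 hpos hsum hlt hb'
    have hpp : b 1 ≤ b' 1 := hle 1 le_rfl
    have ha0 := hpos 0
    have hG1pos : 0 < G a θ m (fun j => b (j+1) + a j) := G_pos hpos hsum hlt hθ0 m _ hb1
    simp only [G]
    have key : θ * G a θ m (fun j => b (j+1) + a j) ≤ G a θ m (fun j => b (j+1)) := by
      calc θ * G a θ m (fun j => b (j+1) + a j) ≤ G a θ m (fun j => b (j+1) + a j) := by nlinarith
        _ ≤ G a θ m (fun j => b (j+1)) := h01
    nlinarith [mul_le_mul_of_nonneg_left h00 (by linarith : (0:ℝ) ≤ 1 - b' 1),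
      mul_le_mul_of_nonneg_left h11 (by nlinarith : (0:ℝ) ≤ b' 1 * θ),
      mul_nonneg (sub_nonneg.2 hpp) (sub_nonneg.2 key)]

lemma Icc_succ_insert (n : ℕ) : Finset.Icc 1 (n+1) = insert (n+1) (Finset.Icc 1 n) := by
  ext x; simp only [Finset.mem_Icc, Finset.mem_insert]; omega

lemma shiftb_one (n : ℕ) (b : ℕ → ℝ) (s : Finset ℕ) :
    shiftb a n b s 1 = Q a n b s := rfl

lemma shiftb_zero (b : ℕ → ℝ) : shiftb a 0 b ∅ = b := by
  funext j; simp [shiftb]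

lemma shiftb_succ0 (n : ℕ) (b : ℕ → ℝ) (s : Finset ℕ) (hs : s ⊆ Finset.Icc 1 n) :
    (fun j => shiftb a n b s (j+1)) = shiftb a (n+1) b s := by
  funext j
  have hns : n+1 ∉ s := fun h => by simpa using (Finset.mem_Icc.1 (hs h))
  simp only [shiftb, Icc_succ_insert, Finset.sum_insert (by simp : (n+1:ℕ) ∉ Finset.Icc 1 n),
    if_neg hns]
  have h1 : n + (j+1) = n + 1 + j := by omega
  rw [h1]
  ring

lemma shiftb_succ1 (n : ℕ) (b : ℕ → ℝ) (s : Finset ℕ) (hs : s ⊆ Finset.Icc 1 n) :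
    (fun j => shiftb a n b s (j+1) + a j) = shiftb a (n+1) b (insert (n+1) s) := by
  funext j
  have hns : (n+1:ℕ) ∉ Finset.Icc 1 n := by simp
  simp only [shiftb, Icc_succ_insert, Finset.sum_insert hns, Finset.mem_insert, true_or, if_pos]
  have h1 : n + (j+1) = n + 1 + j := by omega
  have h2 : n + 1 + j - (n+1) = j := by omega
  rw [h1, h2]
  have h3 : ∀ i ∈ Finset.Icc 1 n, (if i = n+1 ∨ i ∈ s then a (n+1+j-i) else 0)
      = (if i ∈ s then a (n+1+j-i) else 0) := by
    intro i hi
    have : i ≠ n+1 := by have := (Finset.mem_Icc.1 hi).2; omega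
    simp [this]
  rw [Finset.sum_congr rfl h3]
  ring

lemma G_split (θ : ℝ) : ∀ n m (b : ℕ → ℝ),
    G a θ (n + m) b = ∑ s ∈ (Finset.Icc 1 n).powerset,
      W a n b s * θ ^ s.card * G a θ m (shiftb a n b s) := by
  intro n
  induction n with
  | zero =>
    intro m b
    simp [W, shiftb_zero]
  | succ n ih =>
    intro m b
    have h1 : n + 1 + m = n + (m + 1) := by omega
    rw [h1, ih (m+1) b]
    have hstep : ∀ s ∈ (Finset.Icc 1 n).powerset,
        W a n b s * θ ^ s.card * G a θ (m+1) (shiftb a n b s)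
        = W a n b s * θ ^ s.card * ((1 - Q a n b s) * G a θ m (shiftb a (n+1) b s))
          + W a n b s * θ ^ s.card * (Q a n b s * θ * G a θ m (shiftb a (n+1) b (insert (n+1) s))) := by
      intro s hs
      have hs' := Finset.mem_powerset.1 hs
      have : G a θ (m+1) (shiftb a n b s)
          = (1 - Q a n b s) * G a θ m (shiftb a (n+1) b s)
            + Q a n b s * θ * G a θ m (shiftb a (n+1) b (insert (n+1) s)) := by
        show (1 - shiftb a n b s 1) * G a θ m (fun j => shiftb a n b s (j+1))
            + shiftb a n b s 1 * θ * G a θ m (fun j => shiftb a n b s (j+1) + a j) = _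
        rw [shiftb_one, shiftb_succ0 n b s hs', shiftb_succ1 n b s hs']
      rw [this]; ring
    rw [Finset.sum_congr rfl hstep, Finset.sum_add_distrib]
    have hnotin : (n+1:ℕ) ∉ Finset.Icc 1 n := by simp
    rw [Icc_succ_insert, Finset.sum_powerset_insert hnotin]
    congr 1
    · apply Finset.sum_congr rfl
      intro s hs
      have hs' := Finset.mem_powerset.1 hs
      have hns : n+1 ∉ s := fun h => by simpa using (Finset.mem_Icc.1 (hs' h))
      show W a n b s * θ ^ s.card * ((1 - Q a n b s) * G a θ m (shiftb a (n+1) b s)) = _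
      have hW : W a (n+1) b s = W a n b s * (1 - Q a n b s) := by
        show W a n b (s.erase (n+1)) * _ = _
        rw [Finset.erase_eq_of_notMem hns, if_neg hns]
      rw [hW]; ring
    · apply Finset.sum_congr rfl
      intro s hs
      have hs' := Finset.mem_powerset.1 hs
      have hns : n+1 ∉ s := fun h => by simpa using (Finset.mem_Icc.1 (hs' h))
      have hW : W a (n+1) b (insert (n+1) s) = W a n b s * Q a n b s := by
        show W a n b ((insert (n+1) s).erase (n+1)) * _ = _
        rw [Finset.erase_insert hns, if_pos (Finset.mem_insert_self _ _)]
      rw [hW, Finset.card_insert_of_notMem hns, pow_succ]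
      ring

lemma G_eq_sum_W (θ : ℝ) (n : ℕ) (b : ℕ → ℝ) :
    G a θ n b = ∑ s ∈ (Finset.Icc 1 n).powerset, W a n b s * θ ^ s.card := by
  have := G_split (a := a) θ n 0 b
  simpa [G] using this

include hpos hsum hlt in
lemma Q_bounds {b : ℕ → ℝ} (hb : Vb a b) (n : ℕ) (s : Finset ℕ) :
    0 ≤ Q a n b s ∧ Q a n b s ≤ ∑' i, a i := by
  have h1 := (hb (n+1) (by omega)).1
  have h2 := (hb (n+1) (by omega)).2
  have ha0 := hpos 0
  constructor
  · have : (0:ℝ) ≤ ∑ i ∈ Finset.Icc 1 n, if i ∈ s then a (n+1-i) else 0 :=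
      Finset.sum_nonneg (fun i _ => by split <;> [exact (hpos _).le; rfl])
    have hb1 : 0 < b (n+1) := lt_of_lt_of_le ha0 h1
    simp only [Q]; linarith
  · have hle : ∑ i ∈ Finset.Icc 1 n, (if i ∈ s then a (n+1-i) else 0)
        ≤ ∑ i ∈ Finset.Icc 1 n, a (n+1-i) := by
      apply Finset.sum_le_sum
      intro i _
      split <;> [exact le_rfl; exact (hpos _).le]
    have hre : ∑ i ∈ Finset.Icc 1 n, a (n+1-i) = ∑ j ∈ Finset.Icc 1 (n+1-1), a j := by
      simpa using sum_reflect a n 1 le_rfl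
    simp only [Q]
    have := h2
    simp only [Nat.add_sub_cancel] at hre this
    linarith

include hpos hsum hlt in
lemma W_nonneg {b : ℕ → ℝ} (hb : Vb a b) : ∀ n s, 0 ≤ W a n b s := by
  intro n
  induction n with
  | zero => intro s; simp only [W]; split <;> norm_num
  | succ n ih =>
    intro s
    obtain ⟨hq0, hq1⟩ := Q_bounds hpos hsum hlt hb n (s.erase (n+1))
    have := ih (s.erase (n+1))
    simp only [W]
    split
    · exact mul_nonneg this hq0
    · exact mul_nonneg this (by linarith)

include hpos hsum hlt in
lemma Vb_shiftb {b : ℕ → ℝ} (hb : Vb a b) (n : ℕ) {s : Finset ℕ} (hs : s ⊆ Finset.Icc 1 n) :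
    Vb a (shiftb a n b s) := by
  intro k hk
  have h1 := (hb (n+k) (by omega)).1
  have h2 := (hb (n+k) (by omega)).2
  have hsum_nonneg : (0:ℝ) ≤ ∑ i ∈ Finset.Icc 1 n, if i ∈ s then a (n+k-i) else 0 :=
    Finset.sum_nonneg (fun i _ => by split <;> [exact (hpos _).le; rfl])
  constructor
  · show a 0 ≤ b (n+k) + _
    linarith
  · show b (n+k) + _ + _ ≤ _
    have hle : ∑ i ∈ Finset.Icc 1 n, (if i ∈ s then a (n+k-i) else 0)
        ≤ ∑ i ∈ Finset.Icc 1 n, a (n+k-i) := by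
      apply Finset.sum_le_sum
      intro i _
      split <;> [exact le_rfl; exact (hpos _).le]
    have hre : ∑ i ∈ Finset.Icc 1 n, a (n+k-i) = ∑ j ∈ Finset.Icc k (n+k-1), a j :=
      sum_reflect a n k hk
    have hsp : ∑ i ∈ Finset.Icc 1 (k-1), a i + ∑ i ∈ Finset.Icc k (n+k-1), a i
        = ∑ i ∈ Finset.Icc 1 (n+k-1), a i := sum_Icc_split a hk (by omega)
    have h2' : b (n+k) + ∑ i ∈ Finset.Icc 1 (n+k-1), a i ≤ ∑' i, a i := by
      have : (n+k)-1 = n+k-1 := rfl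
      exact h2
    linarith

include hpos hsum hlt in
lemma Vb_shiftb_ge {b : ℕ → ℝ} (hb : Vb a b) (n : ℕ) (s : Finset ℕ) :
    ∀ k, 1 ≤ k → b k ≤ shiftb a (0:ℕ) b ∅ k := by
  intro k hk; simp [shiftb]

include hpos hsum hlt in
lemma G_supermul {θ : ℝ} (hθ : 1 ≤ θ) (n m : ℕ) :
    G a θ n (fun _ => a 0) * G a θ m (fun _ => a 0) ≤ G a θ (n + m) (fun _ => a 0) := by
  have hc : Vb a (fun _ => a 0) := Vb_const hpos hsum
  rw [G_split θ n m, G_eq_sum_W θ n]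
  rw [Finset.sum_mul]
  apply Finset.sum_le_sum
  intro s hs
  have hs' := Finset.mem_powerset.1 hs
  have hWn : 0 ≤ W a n (fun _ => a 0) s := W_nonneg hpos hsum hlt hc n s
  have hθ0 : (0:ℝ) < θ := by linarith
  have hVsh : Vb a (shiftb a n (fun _ => a 0) s) := Vb_shiftb hpos hsum hlt hc n hs'
  have hge : ∀ k, 1 ≤ k → (fun _ => a 0) k ≤ shiftb a n (fun _ => a 0) s k := by
    intro k hk
    show a 0 ≤ a 0 + _
    have : (0:ℝ) ≤ ∑ i ∈ Finset.Icc 1 n, if i ∈ s then a (n+k-i) else 0 :=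
      Finset.sum_nonneg (fun i _ => by split <;> [exact (hpos _).le; rfl])
    linarith
  have hmono : G a θ m (fun _ => a 0) ≤ G a θ m (shiftb a n (fun _ => a 0) s) :=
    G_mono hpos hsum hlt hθ m _ _ hc hVsh hge
  have hcoef : 0 ≤ W a n (fun _ => a 0) s * θ ^ s.card :=
    mul_nonneg hWn (pow_nonneg hθ0.le _)
  calc W a n (fun _ => a 0) s * θ ^ s.card * G a θ m (fun _ => a 0)
      ≤ W a n (fun _ => a 0) s * θ ^ s.card * G a θ m (shiftb a n (fun _ => a 0) s) :=
        mul_le_mul_of_nonneg_left hmono hcoef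
    _ = _ := rfl

include hpos hsum hlt in
lemma G_submul {θ : ℝ} (hθ0 : 0 < θ) (hθ : θ ≤ 1) (n m : ℕ) :
    G a θ (n + m) (fun _ => a 0) ≤ G a θ n (fun _ => a 0) * G a θ m (fun _ => a 0) := by
  have hc : Vb a (fun _ => a 0) := Vb_const hpos hsum
  rw [G_split θ n m, G_eq_sum_W θ n]
  rw [Finset.sum_mul]
  apply Finset.sum_le_sum
  intro s hs
  have hs' := Finset.mem_powerset.1 hs
  have hWn : 0 ≤ W a n (fun _ => a 0) s := W_nonneg hpos hsum hlt hc n s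
  have hVsh : Vb a (shiftb a n (fun _ => a 0) s) := Vb_shiftb hpos hsum hlt hc n hs'
  have hge : ∀ k, 1 ≤ k → (fun _ => a 0) k ≤ shiftb a n (fun _ => a 0) s k := by
    intro k hk
    show a 0 ≤ a 0 + _
    have : (0:ℝ) ≤ ∑ i ∈ Finset.Icc 1 n, if i ∈ s then a (n+k-i) else 0 :=
      Finset.sum_nonneg (fun i _ => by split <;> [exact (hpos _).le; rfl])
    linarith
  have hmono : G a θ m (shiftb a n (fun _ => a 0) s) ≤ G a θ m (fun _ => a 0) :=
    G_anti hpos hsum hlt hθ0 hθ m _ _ hc hVsh hge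
  have hcoef : 0 ≤ W a n (fun _ => a 0) s * θ ^ s.card :=
    mul_nonneg hWn (pow_nonneg hθ0.le _)
  exact mul_le_mul_of_nonneg_left hmono hcoef

open scoped Classical in
noncomputable def cfg {Ω : Type*} (ξ : ℕ → Ω → ℝ) (n : ℕ) (ω : Ω) : Finset ℕ :=
  (Finset.Icc 1 n).filter (fun i => ξ i ω = 1)

def mSig {Ω : Type*} [MeasurableSpace Ω] (ξ : ℕ → Ω → ℝ) (n : ℕ) : MeasurableSpace Ω :=
  ⨆ i ∈ Finset.Icc 1 n, MeasurableSpace.comap (ξ i) Real.measurableSpace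

section PartA

variable {Ω : Type*} [MeasurableSpace Ω] {μ : Measure Ω} [IsProbabilityMeasure μ]
  {ξ : ℕ → Ω → ℝ}

lemma mSig_le (hmeas : ∀ n, Measurable (ξ n)) (n : ℕ) :
    mSig ξ n ≤ ‹MeasurableSpace Ω› := by
  apply iSup₂_le
  intro i _
  exact (hmeas i).comap_le

lemma measurableSet_xi_one (i : ℕ) {n : ℕ} (hi : i ∈ Finset.Icc 1 n) :
    MeasurableSet[mSig ξ n] {ω | ξ i ω = 1} := by
  have h1 : MeasurableSet[MeasurableSpace.comap (ξ i) Real.measurableSpace] {ω | ξ i ω = 1} :=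
    MeasurableSpace.measurableSet_comap.2 ⟨{1}, measurableSet_singleton 1, rfl⟩
  exact (le_iSup₂ (f := fun i (_ : i ∈ Finset.Icc 1 n) =>
    MeasurableSpace.comap (ξ i) Real.measurableSpace) i hi) _ h1

lemma measurableSet_cfg (hval : ∀ n, 1 ≤ n → ∀ ω, ξ n ω = 0 ∨ ξ n ω = 1)
    (n : ℕ) {s : Finset ℕ} (hs : s ⊆ Finset.Icc 1 n) :
    MeasurableSet[mSig ξ n] {ω | cfg ξ n ω = s} := by
  have hchar : {ω | cfg ξ n ω = s}
      = ⋂ i ∈ (Finset.Icc 1 n : Set ℕ),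
          (if i ∈ s then {ω | ξ i ω = 1} else {ω | ξ i ω = 1}ᶜ) := by
    ext ω
    simp only [Set.mem_setOf_eq, Set.mem_iInter, Finset.coe_Icc, Set.mem_Icc]
    constructor
    · intro h i hi
      subst h
      by_cases hmem : i ∈ cfg ξ n ω
      · rw [if_pos hmem]
        exact Set.mem_setOf_eq ▸ (Finset.mem_filter.1 hmem).2
      · rw [if_neg hmem]
        intro hcon
        exact hmem (Finset.mem_filter.2 ⟨Finset.mem_Icc.2 hi, hcon⟩)
    · intro h
      ext i
      constructor
      · intro hi
        obtain ⟨hi1, hi2⟩ := Finset.mem_filter.1 hi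
        have := h i (Set.mem_Icc.2 (Finset.mem_Icc.1 hi1))
        by_cases hmem : i ∈ s
        · exact hmem
        · rw [if_neg hmem] at this
          exact absurd hi2 this
      · intro hi
        have hi1 := hs hi
        have := h i (Set.mem_Icc.2 (Finset.mem_Icc.1 hi1))
        rw [if_pos hi] at this
        exact Finset.mem_filter.2 ⟨hi1, this⟩
  rw [hchar]
  apply MeasurableSet.biInter (Finset.Icc 1 n).countable_toSet
  intro i hi
  have hi' : i ∈ Finset.Icc 1 n := hi
  split
  · exact measurableSet_xi_one i hi'
  · exact (measurableSet_xi_one i hi').compl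

lemma cfg_mem_powerset (n : ℕ) (ω : Ω) : cfg ξ n ω ∈ (Finset.Icc 1 n).powerset :=
  Finset.mem_powerset.2 (Finset.filter_subset _ _)

lemma sm_comp_cfg (hval : ∀ n, 1 ≤ n → ∀ ω, ξ n ω = 0 ∨ ξ n ω = 1)
    (n : ℕ) (f : Finset ℕ → ℝ) :
    StronglyMeasurable[mSig ξ n] (fun ω => f (cfg ξ n ω)) := by
  have heq : (fun ω => f (cfg ξ n ω))
      = fun ω => ∑ s ∈ (Finset.Icc 1 n).powerset,
          Set.indicator {ω' | cfg ξ n ω' = s} (fun _ => f s) ω := by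
    funext ω
    rw [Finset.sum_eq_single (cfg ξ n ω)]
    · exact (Set.indicator_of_mem (by exact rfl) _).symm
    · intro s _ hne
      apply Set.indicator_of_notMem
      intro h
      exact hne (show cfg ξ n ω = s from h).symm
    · intro h
      exact absurd (cfg_mem_powerset n ω) h
  rw [heq]
  apply Finset.stronglyMeasurable_fun_sum
  intro s hs
  exact stronglyMeasurable_const.indicator
    (measurableSet_cfg hval n (Finset.mem_powerset.1 hs))

lemma integrable_comp_cfg (hmeas : ∀ n, Measurable (ξ n))
    (hval : ∀ n, 1 ≤ n → ∀ ω, ξ n ω = 0 ∨ ξ n ω = 1)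
    (n : ℕ) (f : Finset ℕ → ℝ) :
    Integrable (fun ω => f (cfg ξ n ω)) μ := by
  apply Integrable.mono' (integrable_const (∑ s ∈ (Finset.Icc 1 n).powerset, ‖f s‖))
  · exact ((sm_comp_cfg hval n f).mono (mSig_le hmeas n)).aestronglyMeasurable
  · apply ae_of_all
    intro ω
    exact Finset.single_le_sum (f := fun s => ‖f s‖) (fun s _ => norm_nonneg _)
      (cfg_mem_powerset n ω)

lemma xi_bound (hval : ∀ n, 1 ≤ n → ∀ ω, ξ n ω = 0 ∨ ξ n ω = 1) {i : ℕ} (hi : 1 ≤ i)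
    (ω : Ω) : ‖ξ i ω‖ ≤ 1 := by
  rcases hval i hi ω with h | h <;> simp [h]

lemma integrable_xi (hmeas : ∀ n, Measurable (ξ n))
    (hval : ∀ n, 1 ≤ n → ∀ ω, ξ n ω = 0 ∨ ξ n ω = 1) {i : ℕ} (hi : 1 ≤ i) :
    Integrable (ξ i) μ := by
  apply Integrable.mono' (integrable_const 1) (hmeas i).aestronglyMeasurable
  exact ae_of_all _ (xi_bound hval hi)

lemma integrable_comp_cfg_mul_xi (hmeas : ∀ n, Measurable (ξ n))
    (hval : ∀ n, 1 ≤ n → ∀ ω, ξ n ω = 0 ∨ ξ n ω = 1)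
    (n : ℕ) (f : Finset ℕ → ℝ) {i : ℕ} (hi : 1 ≤ i) :
    Integrable (fun ω => f (cfg ξ n ω) * ξ i ω) μ := by
  apply Integrable.mono' (integrable_const (∑ s ∈ (Finset.Icc 1 n).powerset, ‖f s‖))
  · exact (((sm_comp_cfg hval n f).mono (mSig_le hmeas n)).aestronglyMeasurable).mul
      (hmeas i).aestronglyMeasurable
  · apply ae_of_all
    intro ω
    have h1 : ‖f (cfg ξ n ω)‖ ≤ ∑ s ∈ (Finset.Icc 1 n).powerset, ‖f s‖ :=
      Finset.single_le_sum (f := fun s => ‖f s‖) (fun s _ => norm_nonneg _)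
        (cfg_mem_powerset n ω)
    have h2 := xi_bound hval hi ω
    calc ‖f (cfg ξ n ω) * ξ i ω‖ = ‖f (cfg ξ n ω)‖ * ‖ξ i ω‖ := norm_mul _ _
      _ ≤ ‖f (cfg ξ n ω)‖ * 1 := by
          exact mul_le_mul_of_nonneg_left h2 (norm_nonneg _)
      _ ≤ _ := by rw [mul_one]; exact h1

lemma integral_xi_one (hval : ∀ n, 1 ≤ n → ∀ ω, ξ n ω = 0 ∨ ξ n ω = 1)
    (hmeas : ∀ n, Measurable (ξ n))
    (hinit : μ {ω | ξ 1 ω = 1} = ENNReal.ofReal (a 0)) (ha0 : 0 ≤ a 0) :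
    ∫ ω, ξ 1 ω ∂μ = a 0 := by
  have heq : (fun ω => ξ 1 ω) = Set.indicator {ω | ξ 1 ω = 1} 1 := by
    funext ω
    rcases hval 1 le_rfl ω with h | h
    · rw [h, Set.indicator_of_notMem]
      simp only [Set.mem_setOf_eq, h]
      norm_num
    · rw [h, Set.indicator_of_mem (show ω ∈ {ω | ξ 1 ω = 1} from h)]
      rfl
  have hms : MeasurableSet {ω | ξ 1 ω = 1} := (hmeas 1) (measurableSet_singleton 1)
  rw [show (∫ ω, ξ 1 ω ∂μ) = ∫ ω, Set.indicator {ω | ξ 1 ω = 1} 1 ω ∂μ from by rw [← heq],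
    integral_indicator_one hms, measureReal_def, hinit, ENNReal.toReal_ofReal ha0]

lemma W_step (n : ℕ) (b : ℕ → ℝ) (f : Finset ℕ → ℝ) :
    ∑ s ∈ (Finset.Icc 1 (n+1)).powerset, W a (n+1) b s * f s
    = ∑ s ∈ (Finset.Icc 1 n).powerset,
        W a n b s * ((1 - Q a n b s) * f s + Q a n b s * f (insert (n+1) s)) := by
  have hnotin : (n+1:ℕ) ∉ Finset.Icc 1 n := by simp
  rw [Icc_succ_insert, Finset.sum_powerset_insert hnotin]
  rw [← Finset.sum_add_distrib]
  apply Finset.sum_congr rfl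
  intro s hs
  have hs' := Finset.mem_powerset.1 hs
  have hns : n+1 ∉ s := fun h => by simpa using (Finset.mem_Icc.1 (hs' h))
  have hW1 : W a (n+1) b s = W a n b s * (1 - Q a n b s) := by
    show W a n b (s.erase (n+1)) * _ = _
    rw [Finset.erase_eq_of_notMem hns, if_neg hns]
  have hW2 : W a (n+1) b (insert (n+1) s) = W a n b s * Q a n b s := by
    show W a n b ((insert (n+1) s).erase (n+1)) * _ = _
    rw [Finset.erase_insert hns, if_pos (Finset.mem_insert_self _ _)]
  rw [hW1, hW2]
  ring

lemma cfg_zero (ω : Ω) : cfg ξ 0 ω = ∅ := by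
  simp [cfg]

lemma cfg_succ_pt (hval : ∀ n, 1 ≤ n → ∀ ω, ξ n ω = 0 ∨ ξ n ω = 1) (n : ℕ) (ω : Ω)
    (f : Finset ℕ → ℝ) :
    f (cfg ξ (n+1) ω) = f (cfg ξ n ω)
      + (f (insert (n+1) (cfg ξ n ω)) - f (cfg ξ n ω)) * ξ (n+1) ω := by
  classical
  have hsplit : cfg ξ (n+1) ω
      = if ξ (n+1) ω = 1 then insert (n+1) (cfg ξ n ω) else cfg ξ n ω := by
    simp only [cfg, Icc_succ_insert, Finset.filter_insert]
  rcases hval (n+1) (by omega) ω with h | h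
  · rw [hsplit, if_neg (by rw [h]; norm_num), h]
    ring
  · rw [hsplit, if_pos h, h]
    ring

lemma intensity_eq_Q (hval : ∀ n, 1 ≤ n → ∀ ω, ξ n ω = 0 ∨ ξ n ω = 1) (n : ℕ) (ω : Ω) :
    a 0 + ∑ i ∈ Finset.Icc 1 n, a (n+1-i) * ξ i ω = Q a n (fun _ => a 0) (cfg ξ n ω) := by
  classical
  simp only [Q]
  congr 1
  apply Finset.sum_congr rfl
  intro i hi
  have hi1 := (Finset.mem_Icc.1 hi).1
  by_cases hmem : i ∈ cfg ξ n ω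
  · have : ξ i ω = 1 := (Finset.mem_filter.1 hmem).2
    rw [this, if_pos hmem, mul_one]
  · have : ξ i ω = 0 := by
      rcases hval i hi1 ω with h | h
      · exact h
      · exact absurd (Finset.mem_filter.2 ⟨hi, h⟩) hmem
    rw [this, if_neg hmem, mul_zero]

lemma lawA (hmeas : ∀ n, Measurable (ξ n))
    (hval : ∀ n, 1 ≤ n → ∀ ω, ξ n ω = 0 ∨ ξ n ω = 1)
    (ha0 : 0 ≤ a 0)
    (hinit : μ {ω | ξ 1 ω = 1} = ENNReal.ofReal (a 0))
    (hcond : ∀ n, 2 ≤ n →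
      μ[ξ n | ⨆ i ∈ Finset.Icc 1 (n - 1), MeasurableSpace.comap (ξ i) Real.measurableSpace]
        =ᵐ[μ] fun ω => a 0 + ∑ i ∈ Finset.Icc 1 (n - 1), a (n - i) * ξ i ω) :
    ∀ n (f : Finset ℕ → ℝ),
      ∫ ω, f (cfg ξ n ω) ∂μ
        = ∑ s ∈ (Finset.Icc 1 n).powerset, W a n (fun _ => a 0) s * f s := by
  intro n
  induction n with
  | zero =>
    intro f
    simp only [cfg_zero, integral_const, measure_univ, ENNReal.toReal_one, smul_eq_mul, one_mul]
    simp [W]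
  | succ n ih =>
    intro f
    set c : ℕ → ℝ := fun _ => a 0 with hc
    set g : Finset ℕ → ℝ := fun s => f (insert (n+1) s) - f s with hg
    -- pointwise decomposition
    have hpt : ∀ ω, f (cfg ξ (n+1) ω)
        = f (cfg ξ n ω) + g (cfg ξ n ω) * ξ (n+1) ω := fun ω => cfg_succ_pt hval n ω f
    have hint1 : Integrable (fun ω => f (cfg ξ n ω)) μ := integrable_comp_cfg hmeas hval n f
    have hint2 : Integrable (fun ω => g (cfg ξ n ω) * ξ (n+1) ω) μ :=
      integrable_comp_cfg_mul_xi hmeas hval n g (by omega)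
    have hsplit : ∫ ω, f (cfg ξ (n+1) ω) ∂μ
        = ∫ ω, f (cfg ξ n ω) ∂μ + ∫ ω, g (cfg ξ n ω) * ξ (n+1) ω ∂μ := by
      rw [← integral_add hint1 hint2]
      exact integral_congr_ae (ae_of_all _ hpt)
    -- the conditional expectation step
    have hkey : ∫ ω, g (cfg ξ n ω) * ξ (n+1) ω ∂μ
        = ∫ ω, g (cfg ξ n ω) * Q a n c (cfg ξ n ω) ∂μ := by
      rcases Nat.eq_zero_or_pos n with hn0 | hn1
      · subst hn0
        have h1 : ∀ ω, g (cfg ξ 0 ω) * ξ 1 ω = g ∅ * ξ 1 ω := by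
          intro ω; rw [cfg_zero]
        have h2 : ∀ ω, g (cfg ξ 0 ω) * Q a 0 c (cfg ξ 0 ω) = g ∅ * a 0 := by
          intro ω; rw [cfg_zero]; simp [Q, hc]
        rw [integral_congr_ae (ae_of_all _ h1), integral_congr_ae (ae_of_all _ h2)]
        rw [integral_const_mul, integral_const, integral_xi_one hval hmeas hinit ha0]
        simp [measure_univ]
      · -- n ≥ 1, use hcond (n+1)
        have hm : mSig ξ n ≤ ‹MeasurableSpace Ω› := mSig_le hmeas n
        haveI : SigmaFinite (μ.trim hm) := by infer_instance
        have hGsm : StronglyMeasurable[mSig ξ n] (fun ω => g (cfg ξ n ω)) :=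
          sm_comp_cfg hval n g
        have hintξ : Integrable (ξ (n+1)) μ := integrable_xi hmeas hval (by omega)
        have hintprod : Integrable ((fun ω => g (cfg ξ n ω)) * ξ (n+1)) μ := by
          have := integrable_comp_cfg_mul_xi (μ := μ) hmeas hval n g (show 1 ≤ n+1 by omega)
          exact this
        have hmul := condExp_mul_of_stronglyMeasurable_left (μ := μ) hGsm hintprod hintξ
        have hcnd := hcond (n+1) (by omega)
        simp only [Nat.add_sub_cancel] at hcnd
        have hcnd' : μ[ξ (n+1) | mSig ξ n]
            =ᵐ[μ] fun ω => a 0 + ∑ i ∈ Finset.Icc 1 n, a (n+1-i) * ξ i ω := hcnd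
        calc ∫ ω, g (cfg ξ n ω) * ξ (n+1) ω ∂μ
            = ∫ ω, ((fun ω => g (cfg ξ n ω)) * ξ (n+1)) ω ∂μ := rfl
          _ = ∫ ω, (μ[(fun ω => g (cfg ξ n ω)) * ξ (n+1) | mSig ξ n]) ω ∂μ :=
              (integral_condExp hm).symm
          _ = ∫ ω, g (cfg ξ n ω) * (μ[ξ (n+1) | mSig ξ n]) ω ∂μ := by
              apply integral_congr_ae
              filter_upwards [hmul] with ω hω
              rw [hω]; rfl
          _ = ∫ ω, g (cfg ξ n ω) * (a 0 + ∑ i ∈ Finset.Icc 1 n, a (n+1-i) * ξ i ω) ∂μ := by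
              apply integral_congr_ae
              filter_upwards [hcnd'] with ω hω
              rw [hω]
          _ = ∫ ω, g (cfg ξ n ω) * Q a n c (cfg ξ n ω) ∂μ := by
              apply integral_congr_ae
              apply ae_of_all
              intro ω
              exact congrArg (fun x => g (cfg ξ n ω) * x) (intensity_eq_Q hval n ω)
    -- assemble using IH and the combinatorial step
    have hIH1 := ih f
    have hIH2 := ih (fun s => g s * Q a n c s)
    have hintQ : ∫ ω, g (cfg ξ n ω) * Q a n c (cfg ξ n ω) ∂μ
        = ∑ s ∈ (Finset.Icc 1 n).powerset, W a n c s * (g s * Q a n c s) := hIH2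
    rw [hsplit, hkey, hIH1, hintQ, W_step n c f, ← Finset.sum_add_distrib]
    apply Finset.sum_congr rfl
    intro s hs
    simp only [hg]
    ring

lemma exp_sum_eq (hval : ∀ n, 1 ≤ n → ∀ ω, ξ n ω = 0 ∨ ξ n ω = 1) (t : ℝ) (n : ℕ) (ω : Ω) :
    Real.exp (t * ∑ i ∈ Finset.Icc 1 n, ξ i ω) = Real.exp t ^ (cfg ξ n ω).card := by
  classical
  have hsum : ∑ i ∈ Finset.Icc 1 n, ξ i ω = ((cfg ξ n ω).card : ℝ) := by
    rw [cfg, Finset.card_filter, Nat.cast_sum]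
    apply Finset.sum_congr rfl
    intro i hi
    rcases hval i (Finset.mem_Icc.1 hi).1 ω with h | h <;> simp [h]
  rw [hsum, mul_comm, Real.exp_nat_mul]

end PartA

end DTHPaux

open DTHPaux in
theorem dthp_scaled_log_mgf_converges'
    {Ω : Type*} [MeasurableSpace Ω] (μ : Measure Ω) [IsProbabilityMeasure μ]
    (a : ℕ → ℝ) (ξ : ℕ → Ω → ℝ)
    (ha_pos : ∀ i, 0 < a i)
    (ha_sum : Summable a)
    (ha_lt_one : ∑' i, a i < 1)
    (hmeas : ∀ n, Measurable (ξ n))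
    (hval : ∀ n, 1 ≤ n → ∀ ω, ξ n ω = 0 ∨ ξ n ω = 1)
    (hinit : μ {ω | ξ 1 ω = 1} = ENNReal.ofReal (a 0))
    (hcond : ∀ n, 2 ≤ n →
      μ[ξ n | ⨆ i ∈ Finset.Icc 1 (n - 1), MeasurableSpace.comap (ξ i) Real.measurableSpace]
        =ᵐ[μ] fun ω => a 0 + ∑ i ∈ Finset.Icc 1 (n - 1), a (n - i) * ξ i ω) :
    ∀ t : ℝ, ∃ Γt : ℝ,
      Tendsto
        (fun n : ℕ =>
          (1 / (n : ℝ)) *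
            Real.log (∫ ω, Real.exp (t * ∑ i ∈ Finset.Icc 1 n, ξ i ω) ∂μ))
        atTop (𝓝 Γt) := by
  intro t
  set θ : ℝ := Real.exp t with hθdef
  have hθpos : 0 < θ := Real.exp_pos t
  set c : ℕ → ℝ := fun _ => a 0 with hcdef
  have hVc : Vb a c := Vb_const ha_pos ha_sum
  set Z : ℕ → ℝ := fun n => G a θ n c with hZdef
  have hZpos : ∀ n, 0 < Z n := fun n => G_pos ha_pos ha_sum ha_lt_one hθpos n c hVc
  have hZeq : ∀ n, ∫ ω, Real.exp (t * ∑ i ∈ Finset.Icc 1 n, ξ i ω) ∂μ = Z n := by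
    intro n
    have h1 : ∫ ω, Real.exp (t * ∑ i ∈ Finset.Icc 1 n, ξ i ω) ∂μ
        = ∫ ω, (fun s : Finset ℕ => θ ^ s.card) (cfg ξ n ω) ∂μ := by
      apply integral_congr_ae
      apply ae_of_all
      intro ω
      exact exp_sum_eq hval t n ω
    rw [h1, lawA hmeas hval (ha_pos 0).le hinit hcond n (fun s : Finset ℕ => θ ^ s.card)]
    exact (G_eq_sum_W θ n c).symm
  have hb1 : ∀ n : ℕ, Real.log (Z n) ≤ (n:ℝ) * Real.log (max 1 θ) := by
    intro n
    have := (G_bounds ha_pos ha_sum ha_lt_one hθpos n c hVc).2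
    calc Real.log (Z n) ≤ Real.log (max 1 θ ^ n) :=
          Real.log_le_log (hZpos n) this
      _ = n * Real.log (max 1 θ) := by rw [Real.log_pow]
  have hb2 : ∀ n : ℕ, (n : ℝ) * Real.log (min 1 θ) ≤ Real.log (Z n) := by
    intro n
    have := (G_bounds ha_pos ha_sum ha_lt_one hθpos n c hVc).1
    calc (n:ℝ) * Real.log (min 1 θ) = Real.log (min 1 θ ^ n) := by rw [Real.log_pow]
      _ ≤ Real.log (Z n) := Real.log_le_log (pow_pos (lt_min one_pos hθpos) n) this
  rcases le_total t 0 with ht | ht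
  · -- θ ≤ 1
    have hθle : θ ≤ 1 := Real.exp_le_one_iff.2 ht
    have hmin : min 1 θ = θ := min_eq_right hθle
    set u : ℕ → ℝ := fun n => Real.log (Z n) with hudef
    have hsub : Subadditive u := by
      intro m n
      have h := G_submul ha_pos ha_sum ha_lt_one hθpos hθle m n
      have : Real.log (Z (m+n)) ≤ Real.log (Z m * Z n) :=
        Real.log_le_log (hZpos (m+n)) h
      rwa [Real.log_mul (hZpos m).ne' (hZpos n).ne'] at this
    have hbdd : BddBelow (Set.range fun n => u n / n) := by
      refine ⟨t, ?_⟩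
      rintro x ⟨n, rfl⟩
      rcases Nat.eq_zero_or_pos n with h0 | hpos
      · subst h0
        simp only [hudef, Nat.cast_zero, div_zero]
        linarith
      · have hn : (0:ℝ) < n := by exact_mod_cast hpos
        rw [le_div_iff₀ hn]
        have := hb2 n
        rw [hmin, hθdef, Real.log_exp] at this
        linarith
    refine ⟨hsub.lim, ?_⟩
    have hT := hsub.tendsto_lim hbdd
    have heq : (fun n : ℕ =>
        (1 / (n : ℝ)) * Real.log (∫ ω, Real.exp (t * ∑ i ∈ Finset.Icc 1 n, ξ i ω) ∂μ))
        = fun n : ℕ => u n / n := by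
      funext n
      rw [hZeq n, one_div, inv_mul_eq_div]
    rw [heq]
    exact hT
  · -- θ ≥ 1
    have hθge : 1 ≤ θ := Real.one_le_exp ht
    have hmax : max 1 θ = θ := max_eq_right hθge
    set u : ℕ → ℝ := fun n => -Real.log (Z n) with hudef
    have hsub : Subadditive u := by
      intro m n
      have h := G_supermul ha_pos ha_sum ha_lt_one hθge m n
      have : Real.log (Z m * Z n) ≤ Real.log (Z (m+n)) :=
        Real.log_le_log (mul_pos (hZpos m) (hZpos n)) h
      rw [Real.log_mul (hZpos m).ne' (hZpos n).ne'] at this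
      simp only [hudef]
      linarith
    have hbdd : BddBelow (Set.range fun n => u n / n) := by
      refine ⟨-t, ?_⟩
      rintro x ⟨n, rfl⟩
      rcases Nat.eq_zero_or_pos n with h0 | hpos
      · subst h0
        simp only [hudef, Nat.cast_zero, div_zero]
        linarith
      · have hn : (0:ℝ) < n := by exact_mod_cast hpos
        rw [le_div_iff₀ hn]
        have := hb1 n
        rw [hmax, hθdef, Real.log_exp] at this
        simp only [hudef]
        linarith
    refine ⟨-hsub.lim, ?_⟩
    have hT := (hsub.tendsto_lim hbdd).neg
    have heq : (fun n : ℕ =>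
        (1 / (n : ℝ)) * Real.log (∫ ω, Real.exp (t * ∑ i ∈ Finset.Icc 1 n, ξ i ω) ∂μ))
        = fun n : ℕ => -(u n / n) := by
      funext n
      rw [hZeq n]
      simp only [hudef]
      ring
    rw [heq]
    exact hT

theorem dthp_scaled_log_mgf_converges
    {Ω : Type*} [MeasurableSpace Ω] (μ : Measure Ω) [IsProbabilityMeasure μ]
    (a : ℕ → ℝ) (ξ : ℕ → Ω → ℝ)
    (ha_pos : ∀ i, 0 < a i)
    (ha_sum : Summable a)
    (ha_lt_one : ∑' i, a i < 1)
    (ha_moment : Summable (fun i : ℕ => (i : ℝ) * a i))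
    (hmeas : ∀ n, Measurable (ξ n))
    (hval : ∀ n, 1 ≤ n → ∀ ω, ξ n ω = 0 ∨ ξ n ω = 1)
    (hinit : μ {ω | ξ 1 ω = 1} = ENNReal.ofReal (a 0))
    (hcond : ∀ n, 2 ≤ n →
      μ[ξ n | ⨆ i ∈ Finset.Icc 1 (n - 1), MeasurableSpace.comap (ξ i) Real.measurableSpace]
        =ᵐ[μ] fun ω => a 0 + ∑ i ∈ Finset.Icc 1 (n - 1), a (n - i) * ξ i ω)
    :
    ∀ t : ℝ, ∃ Γt : ℝ,
      Tendsto
        (fun n : ℕ =>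
          (1 / (n : ℝ)) *
            Real.log (∫ ω, Real.exp (t * ∑ i ∈ Finset.Icc 1 n, ξ i ω) ∂μ))
        atTop (𝓝 Γt) := by
  exact dthp_scaled_log_mgf_converges' μ a ξ ha_pos ha_sum ha_lt_one hmeas hval hinit hcond
end

section
/- For every t ≤ 0, the sequence of moment generating functions is nonincreasing in n, i.e. 𝔼(e^{t H_n}) ≤ 𝔼(e^{t H_{n−1}}) for all n ≥ 2, and satisfies the bounds (1 − a_0)^n < 𝔼(e^{t H_n}) ≤ 1 for all n ≥ 1. -/
open MeasureTheory Filter Topology Set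

theorem dthp_mgf_nonpositive_t_bounds
    {Ω : Type*} [MeasurableSpace Ω] (μ : Measure Ω) [IsProbabilityMeasure μ]
    (a : ℕ → ℝ) (ξ : ℕ → Ω → ℝ)
    (ha_pos : ∀ i, 0 < a i)
    (ha_sum : Summable a)
    (ha_lt_one : ∑' i, a i < 1)
    (ha_moment : Summable (fun i : ℕ => (i : ℝ) * a i))
    (hmeas : ∀ n, Measurable (ξ n))
    (hval : ∀ n, 1 ≤ n → ∀ ω, ξ n ω = 0 ∨ ξ n ω = 1)
    (hinit : μ {ω | ξ 1 ω = 1} = ENNReal.ofReal (a 0))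
    (hcond : ∀ n, 2 ≤ n →
      μ[ξ n | ⨆ i ∈ Finset.Icc 1 (n - 1), MeasurableSpace.comap (ξ i) Real.measurableSpace]
        =ᵐ[μ] fun ω => a 0 + ∑ i ∈ Finset.Icc 1 (n - 1), a (n - i) * ξ i ω)
    :
    ∀ t : ℝ, t ≤ 0 →
      (∀ n, 1 ≤ n →
        (∫ ω, Real.exp (t * ∑ i ∈ Finset.Icc 1 (n + 1), ξ i ω) ∂μ) ≤
          ∫ ω, Real.exp (t * ∑ i ∈ Finset.Icc 1 n, ξ i ω) ∂μ) ∧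
      (∀ n, 1 ≤ n →
        (1 - a 0) ^ n < (∫ ω, Real.exp (t * ∑ i ∈ Finset.Icc 1 n, ξ i ω) ∂μ) ∧
        (∫ ω, Real.exp (t * ∑ i ∈ Finset.Icc 1 n, ξ i ω) ∂μ) ≤ 1) := by
  intro t ht
  -- basic values of ξ
  have hξ0 : ∀ i, 1 ≤ i → ∀ ω, 0 ≤ ξ i ω := by
    intro i hi ω; rcases hval i hi ω with h | h <;> rw [h] <;> norm_num
  have hξ1 : ∀ i, 1 ≤ i → ∀ ω, ξ i ω ≤ 1 := by
    intro i hi ω; rcases hval i hi ω with h | h <;> rw [h] <;> norm_num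
  -- partial sums
  have hSnonneg : ∀ n (ω : Ω), 0 ≤ ∑ i ∈ Finset.Icc 1 n, ξ i ω := by
    intro n ω
    exact Finset.sum_nonneg fun i hi => hξ0 i (Finset.mem_Icc.mp hi).1 ω
  have hSle : ∀ n (ω : Ω), ∑ i ∈ Finset.Icc 1 n, ξ i ω ≤ n := by
    intro n ω
    calc ∑ i ∈ Finset.Icc 1 n, ξ i ω ≤ ∑ i ∈ Finset.Icc 1 n, 1 :=
          Finset.sum_le_sum fun i hi => hξ1 i (Finset.mem_Icc.mp hi).1 ω
      _ = n := by simp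
  have hfle1 : ∀ n (ω : Ω), Real.exp (t * ∑ i ∈ Finset.Icc 1 n, ξ i ω) ≤ 1 := by
    intro n ω
    rw [Real.exp_le_one_iff]
    exact mul_nonpos_of_nonpos_of_nonneg ht (hSnonneg n ω)
  have hfmeas : ∀ n, Measurable fun ω => Real.exp (t * ∑ i ∈ Finset.Icc 1 n, ξ i ω) := by
    intro n
    exact (Real.measurable_exp.comp
      ((measurable_const.mul (Finset.measurable_sum _ fun i _ => hmeas i))))
  have hfint : ∀ n, Integrable (fun ω => Real.exp (t * ∑ i ∈ Finset.Icc 1 n, ξ i ω)) μ := by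
    intro n
    refine Integrable.mono' (integrable_const 1) (hfmeas n).aestronglyMeasurable ?_
    filter_upwards with ω
    rw [Real.norm_eq_abs, abs_of_pos (Real.exp_pos _)]
    exact hfle1 n ω
  constructor
  · -- monotonicity
    intro n hn
    refine integral_mono (hfint (n + 1)) (hfint n) fun ω => ?_
    apply Real.exp_le_exp.mpr
    apply mul_le_mul_of_nonpos_left _ ht
    rw [Finset.sum_Icc_succ_top (by omega : 1 ≤ n + 1)]
    exact le_add_of_nonneg_right (hξ0 (n + 1) (by omega) ω)
  -- bounds
  have ha0_lt_one : a 0 < 1 := by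
    have := Summable.le_tsum ha_sum 0 (fun i _ => (ha_pos i).le)
    linarith
  have ha0_pos := ha_pos 0
  -- the all-zero events
  set A : ℕ → Set Ω := fun n => ⋂ i ∈ Finset.Icc 1 n, ξ i ⁻¹' {0} with hA
  have hmemA : ∀ n ω, ω ∈ A n ↔ ∀ i ∈ Finset.Icc 1 n, ξ i ω = 0 := by
    intro n ω; simp [hA]
  have hAmeas : ∀ n, MeasurableSet (A n) :=
    fun n => MeasurableSet.biInter (Finset.Icc 1 n).countable_toSet
      (fun i _ => hmeas i (measurableSet_singleton 0))
  have hAsucc : ∀ n, A (n + 1) = A n ∩ ξ (n + 1) ⁻¹' {0} := by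
    intro n
    ext ω
    simp only [hmemA, Set.mem_inter_iff, Set.mem_preimage, Set.mem_singleton_iff]
    constructor
    · intro h
      exact ⟨fun i hi => h i (Finset.mem_Icc.mp hi |>.imp_right (fun h2 => h2.trans (by omega)) |>
          (fun ⟨h1, h2⟩ => Finset.mem_Icc.mpr ⟨h1, h2⟩)), h (n + 1) (by simp)⟩
    · rintro ⟨h1, h2⟩ i hi
      rcases Finset.mem_Icc.mp hi with ⟨hi1, hi2⟩
      rcases Nat.lt_or_ge i (n + 1) with hlt | hge
      · exact h1 i (Finset.mem_Icc.mpr ⟨hi1, by omega⟩)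
      · have : i = n + 1 := by omega
        rw [this]; exact h2
  -- measure of A n
  have hμA : ∀ n, 1 ≤ n → (μ (A n)).toReal = (1 - a 0) ^ n := by
    intro n hn
    induction n with
    | zero => omega
    | succ m ih =>
      rcases eq_or_lt_of_le hn with h1 | h1
      · -- base case m = 0
        have hm0 : m = 0 := by omega
        subst hm0
        have hA1 : A 1 = {ω | ξ 1 ω = 1}ᶜ := by
          ext ω
          simp only [hmemA, Set.mem_compl_iff, Set.mem_setOf_eq]
          constructor
          · intro h h1
            have := h 1 (by simp)
            rw [this] at h1; norm_num at h1
          · intro h i hi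
            have : i = 1 := by simpa using hi
            subst this
            rcases hval 1 le_rfl ω with h2 | h2
            · exact h2
            · exact absurd h2 h
        have hms : MeasurableSet {ω : Ω | ξ 1 ω = 1} :=
          measurableSet_eq_fun (hmeas 1) measurable_const
        rw [hA1, measure_compl hms (measure_ne_top μ _), measure_univ, hinit, pow_one,
          ENNReal.toReal_sub_of_le (by
            rw [ENNReal.ofReal_le_one]; exact ha0_lt_one.le) (by simp)]
        simp [ENNReal.toReal_ofReal ha0_pos.le]
      · -- inductive step: m ≥ 1
        have hm1 : 1 ≤ m := by omega
        have ihm := ih hm1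
        -- sigma algebra
        have hmle : (⨆ i ∈ Finset.Icc 1 m,
            MeasurableSpace.comap (ξ i) Real.measurableSpace) ≤
            (inferInstance : MeasurableSpace Ω) :=
          iSup₂_le fun i _ => (hmeas i).comap_le
        have hAmF : MeasurableSet[⨆ i ∈ Finset.Icc 1 m,
            MeasurableSpace.comap (ξ i) Real.measurableSpace] (A m) := by
          refine MeasurableSet.biInter (Finset.Icc 1 m).countable_toSet fun i hi => ?_
          have hle : MeasurableSpace.comap (ξ i) Real.measurableSpace ≤
              ⨆ i ∈ Finset.Icc 1 m, MeasurableSpace.comap (ξ i) Real.measurableSpace :=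
            le_iSup₂ (f := fun i (_ : i ∈ Finset.Icc 1 m) =>
              MeasurableSpace.comap (ξ i) Real.measurableSpace) i hi
          exact hle _ ⟨{0}, measurableSet_singleton 0, rfl⟩
        have hξint : Integrable (ξ (m + 1)) μ := by
          refine Integrable.mono' (integrable_const 1) (hmeas (m + 1)).aestronglyMeasurable ?_
          filter_upwards with ω
          rw [Real.norm_eq_abs, abs_of_nonneg (hξ0 (m + 1) (by omega) ω)]
          exact hξ1 (m + 1) (by omega) ω
        -- key integral computation
        have hcond' := hcond (m + 1) (by omega)
        simp only [Nat.add_sub_cancel] at hcond'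
        have h1 : ∫ ω in A m, ξ (m + 1) ω ∂μ = a 0 * (μ (A m)).toReal := by
          rw [← setIntegral_condExp hmle hξint hAmF]
          rw [setIntegral_congr_ae (hmle _ hAmF) (hcond'.mono fun ω hω _ => hω)]
          rw [setIntegral_congr_fun (hmle _ hAmF) (g := fun _ => a 0) (fun ω hω => by
            have : ∀ i ∈ Finset.Icc 1 m, a (m + 1 - i) * ξ i ω = 0 := fun i hi => by
              rw [(hmemA m ω).mp hω i hi, mul_zero]
            simp [Finset.sum_eq_zero this])]
          simp [mul_comm]
          exact Or.inl rfl
        have h2 : (μ (A (m + 1))).toReal = ∫ ω in A m, (1 - ξ (m + 1) ω) ∂μ := by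
          have heq : ∀ ω, (1 : ℝ) - ξ (m + 1) ω =
              Set.indicator (ξ (m + 1) ⁻¹' {0}) (fun _ => (1 : ℝ)) ω := by
            intro ω
            rcases hval (m + 1) (by omega) ω with h | h
            · rw [h, Set.indicator_of_mem (by simpa [Set.mem_preimage] using h)]; ring
            · rw [h, Set.indicator_of_notMem (by simp [Set.mem_preimage, h])]; ring
          rw [show (fun ω => (1 : ℝ) - ξ (m + 1) ω) =
              Set.indicator (ξ (m + 1) ⁻¹' {0}) (fun _ => (1 : ℝ)) from funext heq]
          rw [setIntegral_indicator (hmeas (m + 1) (measurableSet_singleton 0))]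
          rw [setIntegral_const, ← hAsucc]
          simp
          rfl
        have h3 : ∫ ω in A m, (1 - ξ (m + 1) ω) ∂μ
            = (μ (A m)).toReal - a 0 * (μ (A m)).toReal := by
          rw [integral_sub (integrable_const 1).integrableOn hξint.integrableOn, h1]
          simp
          rfl
        rw [h2, h3, ihm, pow_succ]
        ring
  -- A n has measure < 1
  have hμAlt : ∀ n, 1 ≤ n → (μ (A n)).toReal < 1 := by
    intro n hn
    rw [hμA n hn]
    exact pow_lt_one₀ (by linarith) (by linarith) (by omega)
  intro n hn
  constructor
  · -- strict lower bound
    set f : Ω → ℝ := fun ω => Real.exp (t * ∑ i ∈ Finset.Icc 1 n, ξ i ω) with hf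
    set g : Ω → ℝ := (A n).indicator (fun _ => 1) + (A n)ᶜ.indicator (fun _ => Real.exp (t * n))
      with hg
    have hgle : ∀ ω, g ω ≤ f ω := by
      intro ω
      by_cases hω : ω ∈ A n
      · have hS : ∑ i ∈ Finset.Icc 1 n, ξ i ω = 0 :=
          Finset.sum_eq_zero fun i hi => (hmemA n ω).mp hω i hi
        have : g ω = 1 := by
          simp [hg, Set.indicator_of_mem hω, Set.indicator_of_notMem (by simp [hω] :
            ω ∉ (A n)ᶜ)]
        rw [this, hf]
        simp [hS]
      · have : g ω = Real.exp (t * n) := by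
          simp [hg, Set.indicator_of_notMem hω, Set.indicator_of_mem (Set.mem_compl hω)]
        rw [this, hf]
        apply Real.exp_le_exp.mpr
        exact mul_le_mul_of_nonpos_left (hSle n ω) ht
    have hgint1 : Integrable ((A n).indicator (fun _ => (1:ℝ))) μ :=
      (integrable_const 1).indicator (hAmeas n)
    have hgint2 : Integrable ((A n)ᶜ.indicator (fun _ => Real.exp (t * n))) μ :=
      (integrable_const _).indicator (hAmeas n).compl
    have hgint : Integrable g μ := hgint1.add hgint2
    have hintg : ∫ ω, g ω ∂μ
        = (μ (A n)).toReal + Real.exp (t * n) * (1 - (μ (A n)).toReal) := by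
      rw [hg]
      simp only [Pi.add_apply]
      rw [integral_add hgint1 hgint2, integral_indicator (hAmeas n),
        integral_indicator (hAmeas n).compl, setIntegral_const, setIntegral_const]
      simp only [measureReal_def]
      rw [measure_compl (hAmeas n) (measure_ne_top μ _), measure_univ,
        ENNReal.toReal_sub_of_le prob_le_one (by simp)]
      simp [mul_comm]
    have hlt : (1 - a 0) ^ n < ∫ ω, g ω ∂μ := by
      rw [hintg, hμA n hn]
      have h1 : 0 < Real.exp (t * n) := Real.exp_pos _
      have h2 : (0:ℝ) < 1 - (1 - a 0) ^ n := by
        have := pow_lt_one₀ (by linarith : (0:ℝ) ≤ 1 - a 0) (by linarith) (by omega : n ≠ 0)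
        linarith
      nlinarith
    calc (1 - a 0) ^ n < ∫ ω, g ω ∂μ := hlt
      _ ≤ ∫ ω, f ω ∂μ := integral_mono hgint (hfint n) hgle
  · -- upper bound
    calc ∫ ω, Real.exp (t * ∑ i ∈ Finset.Icc 1 n, ξ i ω) ∂μ
        ≤ ∫ _ω, (1:ℝ) ∂μ := integral_mono (hfint n) (integrable_const 1) (hfle1 n)
      _ = 1 := by simp
end

section
/- For every t > 0 and every n ≥ 1, the moment generating function of H_n satisfies (1 + (e^t − 1) a_0)^n ≤ 𝔼(e^{t H_n}) < (1 + (e^t − 1) Σ_{i=0}^∞ a_i)^n. -/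
open MeasureTheory Filter Topology Set

theorem dthp_mgf_positive_t_bounds
    {Ω : Type*} [MeasurableSpace Ω] (μ : Measure Ω) [IsProbabilityMeasure μ]
    (a : ℕ → ℝ) (ξ : ℕ → Ω → ℝ)
    (ha_pos : ∀ i, 0 < a i)
    (ha_sum : Summable a)
    (ha_lt_one : ∑' i, a i < 1)
    (ha_moment : Summable (fun i : ℕ => (i : ℝ) * a i))
    (hmeas : ∀ n, Measurable (ξ n))
    (hval : ∀ n, 1 ≤ n → ∀ ω, ξ n ω = 0 ∨ ξ n ω = 1)
    (hinit : μ {ω | ξ 1 ω = 1} = ENNReal.ofReal (a 0))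
    (hcond : ∀ n, 2 ≤ n →
      μ[ξ n | ⨆ i ∈ Finset.Icc 1 (n - 1), MeasurableSpace.comap (ξ i) Real.measurableSpace]
        =ᵐ[μ] fun ω => a 0 + ∑ i ∈ Finset.Icc 1 (n - 1), a (n - i) * ξ i ω)
    :
    ∀ t : ℝ, 0 < t → ∀ n, 1 ≤ n →
      (1 + (Real.exp t - 1) * a 0) ^ n ≤
        (∫ ω, Real.exp (t * ∑ i ∈ Finset.Icc 1 n, ξ i ω) ∂μ) ∧
      (∫ ω, Real.exp (t * ∑ i ∈ Finset.Icc 1 n, ξ i ω) ∂μ) <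
        (1 + (Real.exp t - 1) * ∑' i, a i) ^ n := by
  rename_i mΩ _instP
  intro t ht
  have hE : (1:ℝ) < Real.exp t := by
    rw [show (1:ℝ) = Real.exp 0 by simp]
    exact Real.exp_lt_exp.mpr ht
  set E := Real.exp t with hEdef
  set Sa := ∑' i, a i with hSa
  set F : ℕ → Ω → ℝ := fun n ω => Real.exp (t * ∑ i ∈ Finset.Icc 1 n, ξ i ω) with hF
  -- basic bounds on ξ
  have hξ0 : ∀ i, 1 ≤ i → ∀ ω, 0 ≤ ξ i ω := by
    intro i hi ω; rcases hval i hi ω with h | h <;> rw [h] <;> norm_num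
  have hξ1 : ∀ i, 1 ≤ i → ∀ ω, ξ i ω ≤ 1 := by
    intro i hi ω; rcases hval i hi ω with h | h <;> rw [h] <;> norm_num
  -- sum bound
  have hsum_bd : ∀ n ω, ∑ i ∈ Finset.Icc 1 n, ξ i ω ≤ (n : ℝ) := by
    intro n ω
    calc ∑ i ∈ Finset.Icc 1 n, ξ i ω ≤ ∑ i ∈ Finset.Icc 1 n, (1:ℝ) :=
          Finset.sum_le_sum fun i hi => hξ1 i (Finset.mem_Icc.mp hi).1 ω
      _ = (n : ℝ) := by simp [Nat.card_Icc]
  have hsum_nonneg : ∀ n ω, 0 ≤ ∑ i ∈ Finset.Icc 1 n, ξ i ω := by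
    intro n ω
    exact Finset.sum_nonneg fun i hi => hξ0 i (Finset.mem_Icc.mp hi).1 ω
  have hFpos : ∀ n ω, 0 < F n ω := fun n ω => Real.exp_pos _
  have hFbd : ∀ n ω, F n ω ≤ Real.exp (t * n) := by
    intro n ω
    exact Real.exp_le_exp.mpr (by nlinarith [hsum_bd n ω])
  have hFmeas : ∀ n, Measurable (F n) := by
    intro n
    exact Real.measurable_exp.comp ((measurable_const).mul
      (Finset.measurable_sum _ fun i _ => hmeas i))
  have hFint : ∀ n, Integrable (F n) μ := by
    intro n
    refine Integrable.mono' (integrable_const (Real.exp (t * n)))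
      (hFmeas n).aestronglyMeasurable (ae_of_all _ fun ω => ?_)
    rw [Real.norm_eq_abs, abs_of_pos (hFpos n ω)]
    exact hFbd n ω
  have hξmeasb : ∀ i, 1 ≤ i → Integrable (ξ i) μ := by
    intro i hi
    refine Integrable.mono' (integrable_const 1)
      (hmeas i).aestronglyMeasurable (ae_of_all _ fun ω => ?_)
    rw [Real.norm_eq_abs, abs_of_nonneg (hξ0 i hi ω)]
    exact hξ1 i hi ω
  -- F (n+1) = F n * (1 + (E-1) ξ (n+1))
  have hFsucc : ∀ n ω, F (n+1) ω = F n ω * (1 + (E - 1) * ξ (n+1) ω) := by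
    intro n ω
    show Real.exp (t * ∑ i ∈ Finset.Icc 1 (n+1), ξ i ω) = _
    rw [Finset.sum_Icc_succ_top (by omega : 1 ≤ n+1), mul_add, Real.exp_add]
    congr 1
    rcases hval (n+1) (by omega) ω with h | h <;> rw [h] <;> simp [hEdef]
  -- ∫ ξ 1 = a 0
  have hint1 : ∫ ω, ξ 1 ω ∂μ = a 0 := by
    have hset : MeasurableSet {ω | ξ 1 ω = 1} := by
      have : {ω | ξ 1 ω = 1} = ξ 1 ⁻¹' {1} := rfl
      rw [this]; exact (hmeas 1) (measurableSet_singleton 1)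
    have heq : ξ 1 = ({ω | ξ 1 ω = 1}).indicator (1 : Ω → ℝ) := by
      funext ω
      rcases hval 1 le_rfl ω with h | h
      · rw [h, Set.indicator_of_notMem]
        simp [Set.mem_setOf_eq, h]
      · rw [h, Set.indicator_of_mem (by exact h)]
        rfl
    rw [show (fun ω => ξ 1 ω) = ξ 1 from rfl, heq, integral_indicator_one hset, measureReal_def, hinit,
      ENNReal.toReal_ofReal (ha_pos 0).le]
  -- key conditional expectation step
  have hgmeas : ∀ n, Measurable (fun ω => a 0 + ∑ i ∈ Finset.Icc 1 n, a (n+1-i) * ξ i ω) := by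
    intro n
    exact measurable_const.add (Finset.measurable_sum _ fun i _ => (measurable_const.mul (hmeas i)))
  have hg_lb : ∀ n ω, a 0 ≤ a 0 + ∑ i ∈ Finset.Icc 1 n, a (n+1-i) * ξ i ω := by
    intro n ω
    have : 0 ≤ ∑ i ∈ Finset.Icc 1 n, a (n+1-i) * ξ i ω :=
      Finset.sum_nonneg fun i hi =>
        mul_nonneg (ha_pos _).le (hξ0 i (Finset.mem_Icc.mp hi).1 ω)
    linarith
  -- reindexing : ∑_{i∈Icc 1 n} a (n+1-i) = ∑_{i∈Icc 1 n} a i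
  have hreindex : ∀ n, ∑ i ∈ Finset.Icc 1 n, a (n+1-i) = ∑ i ∈ Finset.Icc 1 n, a i := by
    intro n
    refine Finset.sum_nbij' (fun i => n+1-i) (fun i => n+1-i) ?_ ?_ ?_ ?_ ?_
    · intro i hi; simp only [Finset.mem_Icc] at *; omega
    · intro i hi; simp only [Finset.mem_Icc] at *; omega
    · intro i hi; simp only [Finset.mem_Icc] at hi
      show n+1-(n+1-i) = i; omega
    · intro i hi; simp only [Finset.mem_Icc] at hi
      show n+1-(n+1-i) = i; omega
    · intro i hi; rfl
  have hsum_split : ∀ n : ℕ, a 0 + ∑ i ∈ Finset.Icc 1 n, a i = ∑ i ∈ Finset.range (n+1), a i := by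
    intro n
    induction n with
    | zero => simp
    | succ k ih =>
      rw [Finset.sum_Icc_succ_top (by omega : 1 ≤ k+1), Finset.sum_range_succ, ← ih]
      ring
  have hg_ub : ∀ n ω, a 0 + ∑ i ∈ Finset.Icc 1 n, a (n+1-i) * ξ i ω
      ≤ ∑ i ∈ Finset.range (n+1), a i := by
    intro n ω
    have h1 : ∑ i ∈ Finset.Icc 1 n, a (n+1-i) * ξ i ω ≤ ∑ i ∈ Finset.Icc 1 n, a (n+1-i) := by
      refine Finset.sum_le_sum fun i hi => ?_
      have := hξ1 i (Finset.mem_Icc.mp hi).1 ω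
      nlinarith [ha_pos (n+1-i)]
    rw [← hsum_split n]
    rw [hreindex n] at h1
    linarith
  have hrange_lt : ∀ n : ℕ, ∑ i ∈ Finset.range (n+1), a i < Sa := by
    intro n
    have h1 : ∑ i ∈ Finset.range (n+2), a i ≤ ∑' i, a i :=
      Summable.sum_le_tsum _ (fun i _ => (ha_pos i).le) ha_sum
    rw [← hSa] at h1
    rw [Finset.sum_range_succ] at h1
    nlinarith [ha_pos (n+1)]
  -- conditional expectation identity
  have hkey : ∀ n, 1 ≤ n → ∫ ω, F n ω * ξ (n+1) ω ∂μ
      = ∫ ω, F n ω * (a 0 + ∑ i ∈ Finset.Icc 1 n, a (n+1-i) * ξ i ω) ∂μ := by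
    intro n hn
    set m : MeasurableSpace Ω :=
      ⨆ i ∈ Finset.Icc 1 n, MeasurableSpace.comap (ξ i) Real.measurableSpace with hm_def
    have hm : m ≤ mΩ := by
      refine iSup₂_le fun i _ => ?_
      exact measurable_iff_comap_le.mp (hmeas i)
    haveI : SigmaFinite (μ.trim hm) := by
      haveI := isFiniteMeasure_trim (μ := μ) hm
      infer_instance
    have hξm : ∀ i ∈ Finset.Icc 1 n, Measurable[m] (ξ i) := by
      intro i hi
      refine measurable_iff_comap_le.mpr ?_
      exact le_iSup₂ (f := fun i (_ : i ∈ Finset.Icc 1 n) =>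
        MeasurableSpace.comap (ξ i) Real.measurableSpace) i hi
    have hFsm : StronglyMeasurable[m] (F n) := by
      refine Measurable.stronglyMeasurable ?_
      exact Real.measurable_exp.comp ((measurable_const).mul
        (Finset.measurable_sum _ fun i hi => hξm i hi))
    have hprod_int : Integrable (F n * ξ (n+1)) μ := by
      refine Integrable.mono' (integrable_const (Real.exp (t * n)))
        ((hFmeas n).mul (hmeas (n+1))).aestronglyMeasurable (ae_of_all _ fun ω => ?_)
      simp only [Pi.mul_apply, Real.norm_eq_abs]
      rw [abs_of_nonneg (mul_nonneg (hFpos n ω).le (hξ0 (n+1) (by omega) ω))]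
      calc F n ω * ξ (n+1) ω ≤ F n ω * 1 :=
            mul_le_mul_of_nonneg_left (hξ1 (n+1) (by omega) ω) (hFpos n ω).le
        _ ≤ Real.exp (t * n) := by rw [mul_one]; exact hFbd n ω
    have hcd := hcond (n+1) (by omega)
    simp only [Nat.add_sub_cancel] at hcd
    have hpull := condExp_mul_of_stronglyMeasurable_left (m := m) (μ := μ) hFsm hprod_int
      (hξmeasb (n+1) (by omega))
    have h2 : (F n * μ[ξ (n+1)|m]) =ᵐ[μ]
        fun ω => F n ω * (a 0 + ∑ i ∈ Finset.Icc 1 n, a (n+1-i) * ξ i ω) := by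
      filter_upwards [hcd] with ω hω
      simp only [Pi.mul_apply]
      rw [hω]
    have e1 : ∫ ω, (F n * ξ (n+1)) ω ∂μ = ∫ ω, (μ[F n * ξ (n+1)|m]) ω ∂μ :=
      (integral_condExp (μ := μ) hm).symm
    calc ∫ ω, F n ω * ξ (n+1) ω ∂μ
        = ∫ ω, (μ[F n * ξ (n+1)|m]) ω ∂μ := e1
      _ = ∫ ω, F n ω * (a 0 + ∑ i ∈ Finset.Icc 1 n, a (n+1-i) * ξ i ω) ∂μ :=
          integral_congr_ae (hpull.trans h2)
  -- recursion for the integral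
  have hstep : ∀ n, 1 ≤ n → ∫ ω, F (n+1) ω ∂μ
      = ∫ ω, F n ω ∂μ
        + (E - 1) * ∫ ω, F n ω * (a 0 + ∑ i ∈ Finset.Icc 1 n, a (n+1-i) * ξ i ω) ∂μ := by
    intro n hn
    have hprod_int : Integrable (fun ω => F n ω * ξ (n+1) ω) μ := by
      refine Integrable.mono' (integrable_const (Real.exp (t * n)))
        ((hFmeas n).mul (hmeas (n+1))).aestronglyMeasurable (ae_of_all _ fun ω => ?_)
      simp only [Real.norm_eq_abs]
      rw [abs_of_nonneg (mul_nonneg (hFpos n ω).le (hξ0 (n+1) (by omega) ω))]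
      calc F n ω * ξ (n+1) ω ≤ F n ω * 1 :=
            mul_le_mul_of_nonneg_left (hξ1 (n+1) (by omega) ω) (hFpos n ω).le
        _ ≤ Real.exp (t * n) := by rw [mul_one]; exact hFbd n ω
    have e0 : ∫ ω, F (n+1) ω ∂μ
        = ∫ ω, (F n ω + (E - 1) * (F n ω * ξ (n+1) ω)) ∂μ := by
      refine integral_congr_ae (ae_of_all _ fun ω => ?_)
      rw [hFsucc n ω]; ring
    rw [e0, integral_add (hFint n) (hprod_int.const_mul _), integral_const_mul,
      hkey n hn]
  -- integrability of F n * g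
  have hgint : ∀ n, Integrable (fun ω => F n ω * (a 0 + ∑ i ∈ Finset.Icc 1 n, a (n+1-i) * ξ i ω)) μ := by
    intro n
    refine Integrable.mono' (integrable_const (Real.exp (t * n) * ∑ i ∈ Finset.range (n+1), a i))
      ((hFmeas n).mul (hgmeas n)).aestronglyMeasurable (ae_of_all _ fun ω => ?_)
    simp only [Real.norm_eq_abs]
    have h1 := hg_lb n ω
    have h2 := hg_ub n ω
    have h3 := ha_pos 0
    rw [abs_of_nonneg (mul_nonneg (hFpos n ω).le (by linarith))]
    have := hFbd n ω
    have := hFpos n ω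
    nlinarith [Real.exp_pos (t * n)]
  -- bounds on ∫ F n * g
  have hlow : ∀ n, a 0 * ∫ ω, F n ω ∂μ
      ≤ ∫ ω, F n ω * (a 0 + ∑ i ∈ Finset.Icc 1 n, a (n+1-i) * ξ i ω) ∂μ := by
    intro n
    rw [← integral_const_mul]
    refine integral_mono ((hFint n).const_mul _) (hgint n) fun ω => ?_
    have h1 := hg_lb n ω
    have h2 := (hFpos n ω).le
    nlinarith
  have hhigh : ∀ n, ∫ ω, F n ω * (a 0 + ∑ i ∈ Finset.Icc 1 n, a (n+1-i) * ξ i ω) ∂μ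
      ≤ (∑ i ∈ Finset.range (n+1), a i) * ∫ ω, F n ω ∂μ := by
    intro n
    rw [← integral_const_mul]
    refine integral_mono (hgint n) ((hFint n).const_mul _) fun ω => ?_
    have h1 := hg_ub n ω
    have h2 := (hFpos n ω).le
    nlinarith
  -- base case : ∫ F 1 = 1 + (E-1) a 0
  have hbase : ∫ ω, F 1 ω ∂μ = 1 + (E - 1) * a 0 := by
    have e0 : ∀ ω, F 1 ω = 1 + (E - 1) * ξ 1 ω := by
      intro ω
      show Real.exp (t * ∑ i ∈ Finset.Icc 1 1, ξ i ω) = _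
      rw [show Finset.Icc 1 1 = {1} from rfl, Finset.sum_singleton]
      rcases hval 1 le_rfl ω with h | h <;> rw [h] <;> simp [hEdef]
    rw [integral_congr_ae (ae_of_all _ e0),
      integral_add (integrable_const 1) ((hξmeasb 1 le_rfl).const_mul _),
      integral_const_mul, hint1]
    simp
  have hL_pos : (0:ℝ) < 1 + (E - 1) * a 0 := by nlinarith [ha_pos 0]
  have hU_pos : (0:ℝ) < 1 + (E - 1) * Sa := by
    have : 0 < Sa := by
      have h0 := Summable.sum_le_tsum ({0} : Finset ℕ) (fun i _ => (ha_pos i).le) ha_sum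
      rw [← hSa] at h0
      simp at h0
      nlinarith [ha_pos 0]
    nlinarith
  have ha0_lt : a 0 < Sa := by
    have := hrange_lt 0
    simpa using lt_of_le_of_lt (by simp : a 0 ≤ ∑ i ∈ Finset.range 1, a i) this
  -- main induction
  have main : ∀ n, 1 ≤ n →
      (1 + (E - 1) * a 0) ^ n ≤ ∫ ω, F n ω ∂μ ∧
      ∫ ω, F n ω ∂μ < (1 + (E - 1) * Sa) ^ n := by
    intro n hn
    induction n with
    | zero => omega
    | succ k ih =>
      rcases Nat.eq_or_lt_of_le hn with h1 | h1
      · -- k + 1 = 1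
        have hk : k = 0 := by omega
        subst hk
        rw [hbase]
        constructor
        · norm_num
        · simp only [zero_add, pow_one]
          nlinarith [ha0_lt]
      · -- k ≥ 1
        have hk : 1 ≤ k := by omega
        obtain ⟨ihl, ihr⟩ := ih hk
        have hIpos : 0 < ∫ ω, F k ω ∂μ := lt_of_lt_of_le (pow_pos hL_pos k) ihl
        have hrec := hstep k hk
        have hl := hlow k
        have hh := hhigh k
        have hcn := hrange_lt k
        have hcpos : 0 < ∑ i ∈ Finset.range (k+1), a i :=
          Finset.sum_pos (fun i _ => ha_pos i) (by simp)
        constructor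
        · have h1 : (1 + (E - 1) * a 0) * ∫ ω, F k ω ∂μ ≤ ∫ ω, F (k+1) ω ∂μ := by
            rw [hrec]; nlinarith
          calc (1 + (E - 1) * a 0) ^ (k+1)
              = (1 + (E - 1) * a 0) * (1 + (E - 1) * a 0) ^ k := by ring
            _ ≤ (1 + (E - 1) * a 0) * ∫ ω, F k ω ∂μ :=
                mul_le_mul_of_nonneg_left ihl hL_pos.le
            _ ≤ _ := h1
        · have h1 : ∫ ω, F (k+1) ω ∂μ
              ≤ (1 + (E - 1) * ∑ i ∈ Finset.range (k+1), a i) * ∫ ω, F k ω ∂μ := by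
            rw [hrec]; nlinarith
          calc ∫ ω, F (k+1) ω ∂μ
              ≤ (1 + (E - 1) * ∑ i ∈ Finset.range (k+1), a i) * ∫ ω, F k ω ∂μ := h1
            _ < (1 + (E - 1) * Sa) * ∫ ω, F k ω ∂μ := by
                apply mul_lt_mul_of_pos_right _ hIpos
                nlinarith
            _ ≤ (1 + (E - 1) * Sa) * (1 + (E - 1) * Sa) ^ k :=
                mul_le_mul_of_nonneg_left ihr.le hU_pos.le
            _ = (1 + (E - 1) * Sa) ^ (k+1) := by ring
  exact main
end
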